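/- arXiv:2306.08897 — 6 statements merged into one kernel-verified Lean document; each statement's English description precedes it below -/
import Mathlib

section
/- Let X be a dendroid and A ∈ 2^X. Then A is a nonblocker of singletons of X if and only if A has empty interior and each arc component of X − A is dense in X. -/
open Set Metric TopologicalSpace unitInterval

variable {X : Type*} [MetricSpace X] [CompactSpace X] [ConnectedSpace X] [Nonempty X]

/-- An order arc in the hyperspace `C(X)`: a continuous map into nonempty compact
(connected-valued) subsets, strictly increasing with respect to inclusion. -/
def IsOrderArc {X : Type*} [MetricSpace X] (α : unitInterval → NonemptyCompacts X) : Prop :=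
  Continuous α ∧ (∀ t, IsConnected (α t : Set X)) ∧
    ∀ s t : unitInterval, s < t → (α s : Set X) ⊂ (α t : Set X)

/-- `B` blocks `A`: every continuous path in `2^X` from `A` to `X` meets `B`
at some time `t < 1`. -/
def Blocks {X : Type*} [MetricSpace X] (B A : Set X) : Prop :=
  ∀ γ : unitInterval → NonemptyCompacts X, Continuous γ →
    (γ 0 : Set X) = A → (γ 1 : Set X) = univ →
    ∃ t : unitInterval, t < 1 ∧ ((γ t : Set X) ∩ B).Nonempty

/-- The blocked set of a point `x`: all points `y` such that `{x}` blocks `{y}`. -/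
def BlockedSet {X : Type*} [MetricSpace X] (x : X) : Set X :=
  {y | Blocks {x} {y}}

/-- A nonblocker of singletons: a nonempty proper closed set `A` such that every
point outside `A` admits an order arc from its singleton to `X` avoiding `A`
at all times `t < 1`. -/
def IsNonBlocker {X : Type*} [MetricSpace X] (A : Set X) : Prop :=
  IsClosed A ∧ A.Nonempty ∧ A ≠ univ ∧
    ∀ x ∉ A, ∃ α : unitInterval → NonemptyCompacts X, IsOrderArc α ∧
      (α 0 : Set X) = {x} ∧ (α 1 : Set X) = univ ∧
      ∀ t : unitInterval, t < 1 → (α t : Set X) ∩ A = ∅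

open Classical in
/-- `π(x)`: the intersection of all nonblockers of singletons containing `x`,
or `X` if no such nonblocker exists. -/
noncomputable def piSet {X : Type*} [MetricSpace X] (x : X) : Set X :=
  if ∃ A : Set X, IsNonBlocker A ∧ x ∈ A then ⋂₀ {A : Set X | IsNonBlocker A ∧ x ∈ A}
  else univ

/-- The Kelley property of a continuum. -/
def KelleyContinuum (X : Type*) [MetricSpace X] : Prop :=
  ∀ ε > (0 : ℝ), ∃ δ > (0 : ℝ), ∀ p q : X, dist p q < δ →
    ∀ A : Set X, IsCompact A → IsConnected A → p ∈ A →
      ∃ B : Set X, IsCompact B ∧ IsConnected B ∧ q ∈ B ∧ hausdorffDist A B < ε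

/-- A shore set: a nonempty proper closed set which can be avoided by subcontinua
arbitrarily close (in Hausdorff distance) to the whole space. -/
def IsShoreSet {X : Type*} [MetricSpace X] (A : Set X) : Prop :=
  IsClosed A ∧ A.Nonempty ∧ A ≠ univ ∧
    ∀ ε > (0 : ℝ), ∃ B : Set X, IsCompact B ∧ IsConnected B ∧
      hausdorffDist B (univ : Set X) < ε ∧ B ∩ A = ∅

/-- A shore point: a point whose singleton is a shore set. -/
def IsShorePoint {X : Type*} [MetricSpace X] (x : X) : Prop :=
  IsShoreSet ({x} : Set X)

/-- Two points of `S` are joined by an arc lying in `S` (or are equal). -/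
def ArcIn {X : Type*} [MetricSpace X] (S : Set X) (x y : X) : Prop :=
  x = y ∨ ∃ f : unitInterval → X, Continuous f ∧ Function.Injective f ∧
    f 0 = x ∧ f 1 = y ∧ ∀ t, f t ∈ S

/-- A set is arcwise connected if any two of its points are joined by an arc in it. -/
def IsArcwiseConnected {X : Type*} [MetricSpace X] (S : Set X) : Prop :=
  ∀ x ∈ S, ∀ y ∈ S, ArcIn S x y

/-- The arc component of `x` in `S`. -/
def arcComponent {X : Type*} [MetricSpace X] (S : Set X) (x : X) : Set X :=
  {y | y ∈ S ∧ ArcIn S x y}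

/-- A continuum `K` is unicoherent if the intersection of any two subcontinua
whose union is `K` is connected. -/
def IsUnicoherent {X : Type*} [MetricSpace X] (K : Set X) : Prop :=
  ∀ A B : Set X, IsCompact A → IsConnected A → IsCompact B → IsConnected B →
    A ∪ B = K → IsConnected (A ∩ B)

/-- A dendroid: an arcwise connected, hereditarily unicoherent continuum. -/
def IsDendroid (X : Type*) [MetricSpace X] [CompactSpace X] [ConnectedSpace X]
    [Nonempty X] : Prop :=
  IsArcwiseConnected (univ : Set X) ∧
    ∀ K : Set X, IsCompact K → IsConnected K → IsUnicoherent K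

/-- A strong center: a point `p` for which there are nonempty open sets `U`, `V`
such that every arc from `U` to `V` passes through `p`. -/
def IsStrongCenter {X : Type*} [MetricSpace X] (p : X) : Prop :=
  ∃ U V : Set X, IsOpen U ∧ IsOpen V ∧ U.Nonempty ∧ V.Nonempty ∧
    ∀ f : unitInterval → X, Continuous f → Function.Injective f →
      f 0 ∈ U → f 1 ∈ V → ∃ t, f t = p

/-- A homogeneous space: any point can be mapped to any other by a self-homeomorphism. -/
def IsHomogeneous (X : Type*) [MetricSpace X] : Prop :=
  ∀ p q : X, ∃ h : X ≃ₜ X, h p = q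


noncomputable section
set_option linter.unusedSectionVars false

section Clamp


/-- clamp to [0,1] -/
def clamp01 (r : ℝ) : ℝ := min 1 (max 0 r)

lemma clamp01_mem (r : ℝ) : clamp01 r ∈ Icc (0:ℝ) 1 :=
  ⟨le_min zero_le_one (le_max_left _ _), min_le_left _ _⟩

lemma clamp01_mono : Monotone clamp01 := fun a b hab => by
  unfold clamp01
  exact min_le_min le_rfl (max_le_max le_rfl hab)

lemma clamp01_lip {a b : ℝ} (hab : a ≤ b) : clamp01 b - clamp01 a ≤ b - a := by
  unfold clamp01
  rcases le_total (1:ℝ) (max 0 a) with h1 | h1 <;>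
  rcases le_total (1:ℝ) (max 0 b) with h2 | h2 <;>
  rcases le_total (0:ℝ) a with h3 | h3 <;>
  rcases le_total (0:ℝ) b with h4 | h4 <;>
  simp [min_def, max_def, h1, h2, h3, h4] <;> first | linarith | (split_ifs <;> linarith)

lemma clamp01_of_nonpos {r : ℝ} (h : r ≤ 0) : clamp01 r = 0 := by
  unfold clamp01
  rw [max_eq_left h, min_eq_right zero_le_one]

lemma clamp01_of_one_le {r : ℝ} (h : 1 ≤ r) : clamp01 r = 1 := by
  unfold clamp01
  rw [min_eq_left (le_max_of_le_right h)]

/-- the growth profile of the k-th arc -/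
def phiT (k : ℕ) (t : ℝ) : ℝ := clamp01 ((t - (1 - (1/2:ℝ)^k)) * 2^(k+1))

lemma phiT_mem (k : ℕ) (t : ℝ) : phiT k t ∈ Icc (0:ℝ) 1 := clamp01_mem _

lemma phiT_mono (k : ℕ) : Monotone (phiT k) := fun a b hab =>
  clamp01_mono (by nlinarith [pow_pos (by norm_num : (0:ℝ) < 2) (k+1)])

lemma phiT_eq_zero {k : ℕ} {t : ℝ} (h : t ≤ 1 - (1/2:ℝ)^k) : phiT k t = 0 :=
  clamp01_of_nonpos (by nlinarith [pow_pos (by norm_num : (0:ℝ) < 2) (k+1)])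

lemma phiT_eq_one {k : ℕ} {t : ℝ} (h : 1 - (1/2:ℝ)^(k+1) ≤ t) : phiT k t = 1 := by
  apply clamp01_of_one_le
  have h2 : (1/2:ℝ)^(k+1) * 2^(k+1) = 1 := by
    rw [← mul_pow]; norm_num
  have h3 : (1/2:ℝ)^k * 2^(k+1) = 2 := by
    rw [pow_succ, ← mul_assoc, ← mul_pow]; norm_num
  nlinarith [pow_pos (by norm_num : (0:ℝ) < 2) (k+1)]

lemma phiT_lip {k : ℕ} {s t : ℝ} (hst : s ≤ t) :
    phiT k t - phiT k s ≤ 2^(k+1) * (t - s) := by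
  have := clamp01_lip (a := (s - (1 - (1/2:ℝ)^k)) * 2^(k+1))
    (b := (t - (1 - (1/2:ℝ)^k)) * 2^(k+1))
    (by nlinarith [pow_pos (by norm_num : (0:ℝ) < 2) (k+1)])
  unfold phiT
  nlinarith [pow_pos (by norm_num : (0:ℝ) < 2) (k+1)]

end Clamp

variable {X : Type*} [MetricSpace X] [CompactSpace X] [ConnectedSpace X] [Nonempty X]

section Nu


noncomputable def nuFn (z : ℕ → X) (K : NonemptyCompacts X) : ℝ :=
  ∑' n, (1/2:ℝ)^n * infDist (z n) (K : Set X)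

variable {z : ℕ → X}

omit [Nonempty X] in
lemma infDist_le_diam (x : X) (K : NonemptyCompacts X) :
    infDist x (K : Set X) ≤ diam (univ : Set X) := by
  obtain ⟨k, hk⟩ := K.nonempty
  exact le_trans (infDist_le_dist_of_mem hk)
    (dist_le_diam_of_mem isCompact_univ.isBounded trivial trivial)

omit [Nonempty X] in
lemma nuFn_summable (z : ℕ → X) (K : NonemptyCompacts X) :
    Summable (fun n => (1/2:ℝ)^n * infDist (z n) (K : Set X)) := by
  apply Summable.of_nonneg_of_le
    (fun n => mul_nonneg (by positivity) infDist_nonneg)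
    (fun n => mul_le_mul_of_nonneg_left (infDist_le_diam _ _) (by positivity))
  exact (summable_geometric_of_lt_one (by norm_num) (by norm_num)).mul_right _

omit [Nonempty X] in
lemma nuFn_anti {K L : NonemptyCompacts X} (h : (K : Set X) ⊆ L) :
    nuFn z L ≤ nuFn z K := by
  refine Summable.tsum_le_tsum (fun n => ?_) (nuFn_summable z L) (nuFn_summable z K)
  exact mul_le_mul_of_nonneg_left
    (infDist_le_infDist_of_subset h K.nonempty) (by positivity)

omit [Nonempty X] in
lemma nuFn_strict_anti (hz : DenseRange z) {K L : NonemptyCompacts X}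
    (h : (K : Set X) ⊂ L) : nuFn z L < nuFn z K := by
  obtain ⟨p, hpL, hpK⟩ := exists_of_ssubset h
  have hKc : IsClosed (K : Set X) := K.isCompact.isClosed
  have hr : 0 < infDist p (K : Set X) :=
    (hKc.notMem_iff_infDist_pos K.nonempty).1 hpK
  set r := infDist p (K : Set X) with hrdef
  obtain ⟨n, hn⟩ := Metric.denseRange_iff.1 hz p (r/2) (half_pos hr)
  have hterm : (1/2:ℝ)^n * infDist (z n) (L : Set X)
      < (1/2:ℝ)^n * infDist (z n) (K : Set X) := by
    have h1 : infDist (z n) (L : Set X) ≤ dist (z n) p :=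
      infDist_le_dist_of_mem hpL
    have h2 : r ≤ infDist (z n) (K : Set X) + dist p (z n) :=
      infDist_le_infDist_add_dist
    rw [dist_comm (z n) p] at h1
    have : infDist (z n) (L : Set X) < infDist (z n) (K : Set X) := by
      linarith
    exact mul_lt_mul_of_pos_left this (by positivity)
  exact Summable.tsum_lt_tsum_of_nonneg
    (fun b => mul_nonneg (by positivity) infDist_nonneg)
    (fun b => mul_le_mul_of_nonneg_left
      (infDist_le_infDist_of_subset h.subset K.nonempty) (by positivity))
    hterm (nuFn_summable z K)

omit [Nonempty X] in
lemma nuFn_continuous (z : ℕ → X) : Continuous (nuFn (X := X) z) := by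
  apply continuous_tsum
    (fun n => (continuous_const.mul ((lipschitz_infDist_set (z n)).continuous)))
    (Summable.mul_right (diam (univ : Set X) + 1)
      (summable_geometric_of_lt_one (r := (1/2:ℝ)) (by norm_num) (by norm_num)))
  intro n K
  simp only [Pi.mul_apply]
  rw [Real.norm_eq_abs, abs_of_nonneg (mul_nonneg (by positivity) infDist_nonneg)]
  have := infDist_le_diam (z n) K
  have h2 : (0:ℝ) ≤ (1/2:ℝ)^n := by positivity
  nlinarith [infDist_nonneg (x := z n) (s := (K : Set X))]

end Nu

section Arc
theorem arc_subset_continuum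
    (hu : ∀ K : Set X, IsCompact K → IsConnected K → IsUnicoherent K)
    {K : Set X} (hKc : IsCompact K) (hKconn : IsConnected K)
    {f : unitInterval → X} (hf : Continuous f) (hinj : Function.Injective f)
    (h0 : f 0 ∈ K) (h1 : f 1 ∈ K) : range f ⊆ K := by
  have hRc : IsCompact (range f) := isCompact_range hf
  have hRconn : IsConnected (range f) := isConnected_range hf
  have hUc : IsCompact (K ∪ range f) := hKc.union hRc
  have hUconn : IsConnected (K ∪ range f) :=
    hKconn.union ⟨f 0, h0, mem_range_self 0⟩ hRconn
  have hint : IsConnected (K ∩ range f) :=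
    hu _ hUc hUconn K (range f) hKc hKconn hRc hRconn rfl
  have hpre : IsPreconnected (f ⁻¹' (K ∩ range f)) :=
    hint.isPreconnected.preimage_of_isClosedMap hinj hf.isClosedMap
      inter_subset_right
  have hpre' : IsPreconnected ((Subtype.val : unitInterval → ℝ) '' (f ⁻¹' (K ∩ range f))) :=
    hpre.image _ continuous_subtype_val.continuousOn
  have h0' : (0:ℝ) ∈ (Subtype.val : unitInterval → ℝ) '' (f ⁻¹' (K ∩ range f)) :=
    ⟨0, ⟨h0, mem_range_self 0⟩, rfl⟩
  have h1' : (1:ℝ) ∈ (Subtype.val : unitInterval → ℝ) '' (f ⁻¹' (K ∩ range f)) :=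
    ⟨1, ⟨h1, mem_range_self 1⟩, rfl⟩
  rintro y ⟨t, rfl⟩
  have : (t:ℝ) ∈ (Subtype.val : unitInterval → ℝ) '' (f ⁻¹' (K ∩ range f)) :=
    hpre'.Icc_subset h0' h1' t.2
  obtain ⟨s, hs, hst⟩ := this
  have : s = t := Subtype.ext hst
  subst this
  exact hs.1

end Arc

/-- the growing family of subtrees -/
def GammaSet (g : ℕ → ℝ → X) (t : ℝ) : Set X :=
  if 1 ≤ t then univ else ⋃ k, g k '' Icc 0 (phiT k t)


section Gamma
variable {A : Set X} {x : X} {y : ℕ → X} {g : ℕ → ℝ → X}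
  (hgc : ∀ k, Continuous (g k)) (hg0 : ∀ k, g k 0 = x)
  (hg1 : ∀ k, g k 1 = y k) (hgA : ∀ k t, g k t ∉ A)


include hg0 in
lemma mem_GammaSet (t : ℝ) : x ∈ GammaSet g t := by
  unfold GammaSet
  split_ifs
  · trivial
  · exact mem_iUnion.2 ⟨0, ⟨0, ⟨le_rfl, (phiT_mem 0 t).1⟩, hg0 0⟩⟩

lemma GammaSet_mono (g : ℕ → ℝ → X) {s t : ℝ} (hst : s ≤ t) :
    GammaSet g s ⊆ GammaSet g t := by
  unfold GammaSet
  split_ifs with h1 h2 h2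
  · exact subset_rfl
  · exact absurd (h1.trans hst) h2
  · exact subset_univ _
  · exact iUnion_mono fun k => image_mono (Icc_subset_Icc le_rfl (phiT_mono k hst))

include hg0 in
lemma GammaSet_eq_finite {t : ℝ} (ht : ¬ 1 ≤ t) {N : ℕ} (hN : t ≤ 1 - (1/2:ℝ)^N) :
    GammaSet g t = ⋃ k ∈ Finset.range (N+1), g k '' Icc 0 (phiT k t) := by
  unfold GammaSet
  rw [if_neg ht]
  apply subset_antisymm
  · refine iUnion_subset fun k => ?_
    rcases le_or_gt k N with hk | hk
    · intro p hp
      exact mem_biUnion (Finset.mem_range.2 (Nat.lt_succ_of_le hk)) hp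
    · have hpow : (1/2:ℝ)^k ≤ (1/2)^N :=
        pow_le_pow_of_le_one (by norm_num) (by norm_num) hk.le
      have : phiT k t = 0 := phiT_eq_zero (by linarith)
      rw [this]
      intro p hp
      simp only [Icc_self] at hp
      obtain ⟨a, ha, rfl⟩ := hp
      have : a = 0 := ha
      subst this
      rw [hg0 k]
      exact mem_biUnion (Finset.mem_range.2 (Nat.succ_pos N))
        ⟨0, ⟨le_rfl, (phiT_mem 0 t).1⟩, hg0 0⟩
  · exact iUnion₂_subset fun k _ => subset_iUnion
      (fun k => g k '' Icc 0 (phiT k t)) k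

include hgc hg0 in
lemma GammaSet_isCompact (t : ℝ) : IsCompact (GammaSet g t) := by
  unfold GammaSet
  split_ifs with h
  · exact isCompact_univ
  · have hlt : t < 1 := lt_of_not_ge h
    obtain ⟨N, hN⟩ := exists_pow_lt_of_lt_one (sub_pos.2 hlt) (by norm_num : (1/2:ℝ) < 1)
    have := GammaSet_eq_finite (g := g) hg0 h (by linarith)
    unfold GammaSet at this
    rw [if_neg h] at this
    rw [this]
    exact (Finset.range (N+1)).isCompact_biUnion
      (fun k _ => isCompact_Icc.image (hgc k))

include hg0 in
lemma GammaSet_isConnected (t : ℝ) (hgc : ∀ k, Continuous (g k)) :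
    IsConnected (GammaSet g t) := by
  unfold GammaSet
  split_ifs with h
  · exact isConnected_univ
  · constructor
    · exact ⟨x, mem_iUnion.2 ⟨0, ⟨0, ⟨le_rfl, (phiT_mem 0 t).1⟩, hg0 0⟩⟩⟩
    · apply isPreconnected_iUnion
      · exact ⟨x, mem_iInter.2 fun k => ⟨0, ⟨le_rfl, (phiT_mem k t).1⟩, hg0 k⟩⟩
      · intro k
        exact ((isPreconnected_Icc).image _ ((hgc k).continuousOn))

include hgA in
lemma GammaSet_disjoint {t : ℝ} (ht : t < 1) : GammaSet g t ∩ A = ∅ := by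
  unfold GammaSet
  rw [if_neg (not_le.2 ht)]
  ext p
  simp only [mem_inter_iff, mem_iUnion, mem_empty_iff_false, iff_false, not_and]
  rintro ⟨k, a, _, rfl⟩
  exact hgA k a

include hg0 in
lemma GammaSet_zero : GammaSet g 0 = {x} := by
  unfold GammaSet
  rw [if_neg (by norm_num)]
  apply subset_antisymm
  · refine iUnion_subset fun k => ?_
    have : phiT k 0 = 0 := phiT_eq_zero (by
      have : (0:ℝ) < (1/2)^k := by positivity
      have : (1/2:ℝ)^k ≤ 1 := pow_le_one₀ (by norm_num) (by norm_num)
      linarith)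
    rw [this, Icc_self]
    rintro p ⟨a, ha, rfl⟩
    have : a = (0:ℝ) := ha
    subst this
    rw [hg0 k]; rfl
  · rintro p rfl
    exact mem_iUnion.2 ⟨0, ⟨0, ⟨le_rfl, (phiT_mem 0 0).1⟩, hg0 0⟩⟩

lemma GammaSet_one (g : ℕ → ℝ → X) {t : ℝ} (ht : 1 ≤ t) : GammaSet g t = univ := by
  unfold GammaSet; rw [if_pos ht]
end Gamma





lemma phiT_abs_lip {k : ℕ} {s t : ℝ} : |phiT k t - phiT k s| ≤ 2^(k+1) * |t - s| := by
  rcases le_total s t with h | h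
  · rw [abs_of_nonneg (by linarith [phiT_mono k h]), abs_of_nonneg (by linarith)]
    exact phiT_lip h
  · rw [abs_of_nonpos (by linarith [phiT_mono k h]), abs_of_nonpos (by linarith)]
    have := phiT_lip (k := k) h; linarith

section Gamma
variable {A : Set X} {x : X} {y : ℕ → X} {g : ℕ → ℝ → X}

lemma GammaNC_continuous (hy : DenseRange y) (hgc : ∀ k, Continuous (g k))
    (hg1 : ∀ k, g k 1 = y k)
    (K : ℝ → NonemptyCompacts X) (hK : ∀ t, (K t : Set X) = GammaSet g t) :
    Continuous K := by
  rw [Metric.continuous_iff]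
  intro t₀ ε hε
  by_cases h1 : 1 ≤ t₀
  · -- near the top
    obtain ⟨net, hnet_sub, hnetfin, hnetcov⟩ :=
      finite_cover_balls_of_compact (isCompact_univ : IsCompact (univ : Set X)) (show (0:ℝ) < ε/3 by positivity)
    have hch : ∀ p : X, ∃ n : ℕ, dist p (y n) < ε/3 :=
      fun p => Metric.denseRange_iff.1 hy p (ε/3) (by positivity)
    choose idx hidx using hch
    obtain ⟨M, hM⟩ := (hnetfin.image idx).bddAbove
    refine ⟨(1/2:ℝ)^(M+1), by positivity, fun t ht => ?_⟩
    rcases le_or_gt 1 t with h2 | h2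
    · have : (K t : Set X) = (K t₀ : Set X) := by
        rw [hK, hK]
        unfold GammaSet
        rw [if_pos h2, if_pos h1]
      have : K t = K t₀ := NonemptyCompacts.ext this
      rw [this, dist_self]; exact hε
    · have hkey : ∀ p : X, ∃ q ∈ GammaSet g t, dist p q ≤ 2*ε/3 := by
        intro p
        obtain ⟨c, hc, hpc⟩ := mem_iUnion₂.1 (hnetcov (mem_univ p))
        have hidxc : idx c ≤ M := hM (mem_image_of_mem idx hc)
        have hpow : (1/2:ℝ)^(idx c + 1) ≥ (1/2)^(M+1) :=
          pow_le_pow_of_le_one (by norm_num) (by norm_num)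
            (Nat.succ_le_succ hidxc)
        have ht' : 1 - (1/2:ℝ)^(idx c + 1) ≤ t := by
          rw [Real.dist_eq] at ht
          have h3 := abs_lt.1 ht
          linarith
        have hphi : phiT (idx c) t = 1 := phiT_eq_one ht'
        refine ⟨y (idx c), ?_, ?_⟩
        · unfold GammaSet
          rw [if_neg (not_le.2 h2)]
          refine mem_iUnion.2 ⟨idx c, ⟨1, ?_, hg1 (idx c)⟩⟩
          rw [hphi]; exact ⟨zero_le_one, le_rfl⟩
        · calc dist p (y (idx c)) ≤ dist p c + dist c (y (idx c)) := dist_triangle _ _ _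
            _ ≤ 2*ε/3 := by
              have := hidx c
              have : dist p c < ε/3 := mem_ball.1 hpc
              linarith [hidx c]
      have hh : hausdorffDist (K t : Set X) (K t₀ : Set X) ≤ 2*ε/3 := by
        rw [hK, hK]
        have ht₀univ : GammaSet g t₀ = univ := by unfold GammaSet; rw [if_pos h1]
        rw [ht₀univ]
        apply hausdorffDist_le_of_mem_dist (by positivity)
        · exact fun p _ => ⟨p, trivial, by rw [dist_self]; positivity⟩
        · exact fun p _ => hkey p
      calc dist (K t) (K t₀) = hausdorffDist (K t : Set X) (K t₀ : Set X) := rfl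
        _ ≤ 2*ε/3 := hh
        _ < ε := by linarith
  · -- below 1
    have hlt : t₀ < 1 := lt_of_not_ge h1
    obtain ⟨N, hN⟩ := exists_pow_lt_of_lt_one (sub_pos.2 hlt) (by norm_num : (1/2:ℝ) < 1)
    have huc : ∀ k : ℕ, ∃ d > 0, ∀ a ∈ Icc (0:ℝ) 1, ∀ b ∈ Icc (0:ℝ) 1,
        dist a b < d → dist (g k a) (g k b) < ε/2 := by
      intro k
      have := isCompact_Icc.uniformContinuousOn_of_continuous
        ((hgc k).continuousOn (s := Icc (0:ℝ) 1))
      exact Metric.uniformContinuousOn_iff.1 this (ε/2) (by positivity)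
    choose df hdf0 hdf using huc
    set δ₁ : ℝ := (Finset.range (N+1)).inf' (by simp) (fun k => df k / 2^(k+1)) with hδ₁
    have hδ₁pos : 0 < δ₁ := by
      rw [hδ₁, Finset.lt_inf'_iff]
      intro k _
      have := hdf0 k
      positivity
    set δ : ℝ := min δ₁ (1 - (1/2:ℝ)^N - t₀) with hδ
    have hδpos : 0 < δ := lt_min hδ₁pos (by linarith)
    refine ⟨δ, hδpos, fun t ht => ?_⟩
    have habs := abs_lt.1 (Real.dist_eq t t₀ ▸ ht)
    have ht1 : t ≤ 1 - (1/2:ℝ)^N := by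
      have := min_le_right δ₁ (1 - (1/2:ℝ)^N - t₀)
      linarith
    have ht₀1 : t₀ ≤ 1 - (1/2:ℝ)^N := by linarith
    have hδδ₁ : δ ≤ δ₁ := min_le_left _ _
    have hNpos : (0:ℝ) < (1/2)^N := by positivity
    -- the key symmetric estimate
    have key : ∀ u v : ℝ, u ≤ 1 - (1/2:ℝ)^N → v ≤ 1 - (1/2:ℝ)^N → |u - v| < δ₁ →
        ∀ p ∈ GammaSet g u, ∃ q ∈ GammaSet g v, dist p q ≤ ε/2 := by
      intro u v hu hv huv p hp
      have hu1 : ¬ (1:ℝ) ≤ u := by push_neg; linarith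
      have hv1 : ¬ (1:ℝ) ≤ v := by push_neg; linarith
      unfold GammaSet at hp ⊢
      rw [if_neg hu1] at hp
      rw [if_neg hv1]
      obtain ⟨k, hk⟩ := mem_iUnion.1 hp
      obtain ⟨a, ⟨ha0, ha1⟩, rfl⟩ := hk
      set b := min a (phiT k v) with hb
      have hb0 : 0 ≤ b := le_min ha0 (phiT_mem k v).1
      have hbv : b ≤ phiT k v := min_le_right _ _
      refine ⟨g k b, mem_iUnion.2 ⟨k, ⟨b, ⟨hb0, hbv⟩, rfl⟩⟩, ?_⟩
      rcases le_or_gt k N with hkN | hkN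
      · -- active arc
        have hab : |a - b| ≤ |phiT k u - phiT k v| := by
          rcases le_total a (phiT k v) with h | h
          · rw [hb, min_eq_left h]; simp
          · rw [hb, min_eq_right h]
            rw [abs_of_nonneg (by linarith)]
            have := abs_le.1 (le_refl |phiT k u - phiT k v|)
            have h2 : phiT k u - phiT k v ≤ |phiT k u - phiT k v| := le_abs_self _
            linarith
        have h3 : |phiT k u - phiT k v| ≤ 2^(k+1) * |u - v| := phiT_abs_lip
        have h4 : (2:ℝ)^(k+1) * |u - v| < 2^(k+1) * δ₁ := by
          apply mul_lt_mul_of_pos_left huv (by positivity)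
        have h5 : δ₁ ≤ df k / 2^(k+1) := by
          rw [hδ₁]
          exact Finset.inf'_le _ (Finset.mem_range.2 (Nat.lt_succ_of_le hkN))
        have h6 : (2:ℝ)^(k+1) * δ₁ ≤ df k := by
          rw [le_div_iff₀ (by positivity : (0:ℝ) < 2^(k+1))] at h5
          linarith
        have hdistab : dist a b < df k := by
          rw [Real.dist_eq]
          calc |a - b| ≤ |phiT k u - phiT k v| := hab
            _ ≤ 2^(k+1) * |u - v| := h3
            _ < 2^(k+1) * δ₁ := h4
            _ ≤ df k := h6
        have ha : a ∈ Icc (0:ℝ) 1 := ⟨ha0, ha1.trans (phiT_mem k u).2⟩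
        have hbI : b ∈ Icc (0:ℝ) 1 := ⟨hb0, hbv.trans (phiT_mem k v).2⟩
        exact (hdf k a ha b hbI hdistab).le
      · -- dormant arc
        have hpk : (1/2:ℝ)^k ≤ (1/2)^N :=
          pow_le_pow_of_le_one (by norm_num) (by norm_num) hkN.le
        have hau : phiT k u = 0 := phiT_eq_zero (by linarith)
        have hav : phiT k v = 0 := phiT_eq_zero (by linarith)
        have ha' : a = 0 := le_antisymm (hau ▸ ha1) ha0
        have hb' : b = 0 := by rw [hb, ha', hav]; simp
        rw [ha', hb', dist_self]
        positivity
    have hdd : |t - t₀| < δ₁ := lt_of_lt_of_le (abs_lt.2 habs) hδδ₁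
    have hh : hausdorffDist (K t : Set X) (K t₀ : Set X) ≤ ε/2 := by
      rw [hK, hK]
      apply hausdorffDist_le_of_mem_dist (by positivity)
      · exact key t t₀ ht1 ht₀1 hdd
      · exact key t₀ t ht₀1 ht1 (by rw [abs_sub_comm]; exact hdd)
    calc dist (K t) (K t₀) = hausdorffDist (K t : Set X) (K t₀ : Set X) := rfl
      _ ≤ ε/2 := hh
      _ < ε := by linarith
end Gamma


end

lemma nonblocker_of_dense (A : Set X) (hAcl : IsClosed A) (hAne : A.Nonempty)
    (hint : interior A = ∅) (hdense : ∀ x ∉ A, Dense (arcComponent Aᶜ x)) :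
    IsNonBlocker A := by
  have hAne_univ : A ≠ univ := by
    intro h
    rw [h, interior_univ] at hint
    exact (univ_nonempty (α := X)).ne_empty hint
  refine ⟨hAcl, hAne, hAne_univ, ?_⟩
  intro x hx
  set C := arcComponent Aᶜ x with hC
  have hxC : x ∈ C := ⟨hx, Or.inl rfl⟩
  have hCdense : Dense C := hdense x hx
  haveI : Nonempty C := ⟨⟨x, hxC⟩⟩
  obtain ⟨y₀, hy₀⟩ := TopologicalSpace.exists_dense_seq C
  set y : ℕ → X := fun k => (y₀ k : X) with hy'
  have hy : DenseRange y := by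
    have h1 : DenseRange ((↑) : C → X) := hCdense.denseRange_val
    exact h1.comp hy₀ continuous_subtype_val
  have hyC : ∀ k, y k ∈ C := fun k => (y₀ k).2
  -- build the arcs
  have harc : ∀ k, ∃ gk : ℝ → X, Continuous gk ∧ gk 0 = x ∧ gk 1 = y k ∧
      ∀ t, gk t ∉ A := by
    intro k
    rcases (hyC k).2 with heq | ⟨f, hf, _, hf0, hf1, hfS⟩
    · exact ⟨fun _ => x, continuous_const, rfl, heq, fun _ => hx⟩
    · refine ⟨f ∘ projIcc 0 1 zero_le_one, hf.comp continuous_projIcc, ?_, ?_, ?_⟩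
      · simpa [projIcc_left] using hf0
      · simpa [projIcc_right] using hf1
      · intro t
        exact hfS (projIcc 0 1 zero_le_one t)
  choose g hgc hg0 hg1 hgA using harc
  -- the growing family
  set Kf : ℝ → NonemptyCompacts X := fun t =>
    ⟨⟨GammaSet g t, GammaSet_isCompact hgc hg0 t⟩, ⟨x, mem_GammaSet hg0 t⟩⟩ with hKf
  have hKset : ∀ t, (Kf t : Set X) = GammaSet g t := fun _ => rfl
  have hKcont : Continuous Kf := GammaNC_continuous hy hgc hg1 Kf hKset
  have hKmono : ∀ s t : ℝ, s ≤ t → (Kf s : Set X) ⊆ (Kf t : Set X) :=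
    fun s t h => GammaSet_mono g h
  have hK0 : (Kf 0 : Set X) = {x} := GammaSet_zero hg0
  have hK1 : ∀ t : ℝ, 1 ≤ t → (Kf t : Set X) = univ := fun t h => GammaSet_one g h
  have hKconn : ∀ t, IsConnected (Kf t : Set X) :=
    fun t => GammaSet_isConnected hg0 t hgc
  have hKdisj : ∀ t : ℝ, t < 1 → (Kf t : Set X) ∩ A = ∅ :=
    fun t h => GammaSet_disjoint hgA h
  -- the Whitney-type map
  obtain ⟨z, hz⟩ := TopologicalSpace.exists_dense_seq X
  have hssub : (Kf 0 : Set X) ⊂ (Kf 1 : Set X) := by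
    rw [hK0, hK1 1 le_rfl]
    refine ⟨subset_univ _, fun h => ?_⟩
    obtain ⟨a, ha⟩ := hAne
    have : a ∈ ({x} : Set X) := h (mem_univ a)
    rw [mem_singleton_iff] at this
    exact hx (this ▸ ha)
  have hclt : nuFn z (Kf 1) < nuFn z (Kf 0) := nuFn_strict_anti hz hssub
  set c : ℝ := nuFn z (Kf 0) - nuFn z (Kf 1) with hc
  have hcpos : 0 < c := by rw [hc]; linarith
  set h : ℝ → ℝ := fun t => (nuFn z (Kf 0) - nuFn z (Kf t)) / c with hh
  have hhcont : Continuous h :=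
    (continuous_const.sub ((nuFn_continuous z).comp hKcont)).div_const c
  have hh0 : h 0 = 0 := by rw [hh]; simp
  have hh1 : h 1 = 1 := by rw [hh]; field_simp; exact hc.symm
  have hhmono : Monotone h := by
    intro s t hst
    have h1 : nuFn z (Kf t) ≤ nuFn z (Kf s) := nuFn_anti (hKmono s t hst)
    exact (div_le_div_iff_of_pos_right hcpos).2 (by linarith)
  -- equal h values give equal K
  have hkey : ∀ a b : ℝ, a ≤ b → h a = h b → Kf a = Kf b := by
    intro a b hab hheq
    by_contra hne'
    have hsets : (Kf a : Set X) ≠ (Kf b : Set X) :=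
      fun h' => hne' (NonemptyCompacts.ext h')
    have : (Kf a : Set X) ⊂ (Kf b : Set X) := (hKmono a b hab).ssubset_of_ne hsets
    have hlt := nuFn_strict_anti hz this
    rw [hh] at hheq
    have : nuFn z (Kf a) = nuFn z (Kf b) := by
      field_simp at hheq
      linarith
    linarith
  have hkey' : ∀ a b : ℝ, h a = h b → Kf a = Kf b := by
    intro a b hheq
    rcases le_total a b with hab | hab
    · exact hkey a b hab hheq
    · exact (hkey b a hab hheq.symm).symm
  -- selection via IVT
  have hIVT : ∀ u : unitInterval, ∃ t ∈ Icc (0:ℝ) 1, h t = u := by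
    intro u
    have hu : (u : ℝ) ∈ Icc (h 0) (h 1) := by rw [hh0, hh1]; exact u.2
    obtain ⟨t, ht, htu⟩ := intermediate_value_Icc zero_le_one hhcont.continuousOn hu
    exact ⟨t, ht, htu⟩
  choose gs hgs hgsval using hIVT
  set α : unitInterval → NonemptyCompacts X := fun u => Kf (gs u) with hα
  have hgs1 : ∀ u : unitInterval, (u : ℝ) < 1 → gs u < 1 := by
    intro u hu
    rcases lt_or_eq_of_le (hgs u).2 with h' | h'
    · exact h'
    · exfalso
      have := hgsval u
      rw [h', hh1] at this
      linarith
  -- continuity of α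
  have hαcont : Continuous α := by
    apply SeqContinuous.continuous
    intro u uu hu
    apply Filter.tendsto_of_subseq_tendsto
    intro ns hns
    have hmem : ∀ n, gs (u (ns n)) ∈ Icc (0:ℝ) 1 := fun n => hgs _
    obtain ⟨ts, _, ϕ, hϕ, hϕtend⟩ := isCompact_Icc.tendsto_subseq hmem
    refine ⟨ϕ, ?_⟩
    have h1 : Filter.Tendsto (fun n => Kf (gs (u (ns (ϕ n))))) Filter.atTop
        (nhds (Kf ts)) := (hKcont.tendsto ts).comp hϕtend
    have h2 : h ts = (uu : ℝ) := by
      have ha : Filter.Tendsto (fun n => h (gs (u (ns (ϕ n))))) Filter.atTop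
          (nhds (h ts)) := (hhcont.tendsto ts).comp hϕtend
      have hb : Filter.Tendsto (fun n => ((u (ns (ϕ n)) : unitInterval) : ℝ))
          Filter.atTop (nhds (uu : ℝ)) := by
        have : Filter.Tendsto (fun n => u (ns (ϕ n))) Filter.atTop (nhds uu) :=
          hu.comp (hns.comp hϕ.tendsto_atTop)
        exact (continuous_subtype_val.tendsto uu).comp this
      have heq : (fun n => h (gs (u (ns (ϕ n))))) =
          (fun n => ((u (ns (ϕ n)) : unitInterval) : ℝ)) := by
        funext n; exact hgsval _
      rw [heq] at ha
      exact tendsto_nhds_unique ha hb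
    have h3 : Kf ts = Kf (gs uu) := hkey' _ _ (by rw [h2, hgsval])
    rw [h3] at h1
    exact h1
  -- strict monotonicity
  have hαstrict : ∀ s t : unitInterval, s < t → (α s : Set X) ⊂ (α t : Set X) := by
    intro s t hst
    have hst' : (s : ℝ) < (t : ℝ) := hst
    have hgslt : gs s < gs t := by
      by_contra hle
      push_neg at hle
      have := hhmono hle
      rw [hgsval, hgsval] at this
      linarith
    refine ⟨hKmono _ _ hgslt.le, fun hsup => ?_⟩
    have heq : (α s : Set X) = (α t : Set X) :=
      subset_antisymm (hKmono _ _ hgslt.le) hsup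
    have : nuFn z (Kf (gs s)) = nuFn z (Kf (gs t)) := by
      unfold α at heq
      congr 1
      exact NonemptyCompacts.ext heq
    have hv : h (gs s) = h (gs t) := by rw [hh]; simp only; rw [this]
    rw [hgsval, hgsval] at hv
    linarith
  refine ⟨α, ⟨hαcont, fun u => hKconn (gs u), hαstrict⟩, ?_, ?_, ?_⟩
  · have : Kf (gs 0) = Kf 0 := hkey' _ _ (by rw [hgsval, hh0]; rfl)
    rw [hα]; simp only
    rw [this, hK0]
  · have : Kf (gs 1) = Kf 1 := hkey' _ _ (by rw [hgsval, hh1]; rfl)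
    rw [hα]; simp only
    rw [this, hK1 1 le_rfl]
  · intro t ht
    have : (t : ℝ) < 1 := ht
    exact hKdisj _ (hgs1 t this)

lemma dense_of_nonblocker (hX : IsDendroid X) {A : Set X} (hNB : IsNonBlocker A) :
    ∀ x ∉ A, Dense (arcComponent Aᶜ x) := by
  obtain ⟨hAcl, hAne, hAuniv, hexα⟩ := hNB
  intro x hx
  obtain ⟨α, ⟨hαc, hαconn, hαmono⟩, hα0, hα1, hαA⟩ := hexα x hx
  rw [Metric.dense_iff]
  intro p ε hε
  obtain ⟨δ, hδ, hcont⟩ := Metric.continuous_iff.1 hαc 1 ε hε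
  set t : unitInterval := ⟨max 0 (1 - δ/2), le_max_left _ _,
    max_le zero_le_one (by linarith)⟩ with htdef
  have ht1 : (t : ℝ) < 1 := by
    apply max_lt one_pos (by linarith)
  have htlt : t < 1 := by
    rw [← Subtype.coe_lt_coe]
    exact ht1
  have hdist : dist t (1 : unitInterval) < δ := by
    have hcoe1 : ((1:unitInterval):ℝ) = 1 := rfl
    have h2 : (t : ℝ) ≥ 1 - δ/2 := le_max_right _ _
    rw [Subtype.dist_eq, Real.dist_eq, hcoe1, abs_of_nonpos (by linarith)]
    linarith
  have hH : hausdorffDist (α t : Set X) (α 1 : Set X) < ε := hcont t hdist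
  have hp : p ∈ (α 1 : Set X) := by rw [hα1]; trivial
  have hfin : EMetric.hausdorffEdist (α t : Set X) (α 1 : Set X) ≠ ⊤ :=
    hausdorffEdist_ne_top_of_nonempty_of_bounded (α t).nonempty (α 1).nonempty
      (α t).isCompact.isBounded (α 1).isCompact.isBounded
  obtain ⟨q, hq, hpq⟩ := exists_dist_lt_of_hausdorffDist_lt' hp hH hfin
  have hqA : q ∉ A := by
    have := hαA t htlt
    intro hqA'
    exact absurd (mem_inter hq hqA') (by rw [this]; exact notMem_empty q)
  refine ⟨q, mem_inter (mem_ball.2 hpq) ⟨hqA, ?_⟩⟩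
  by_cases hxq : x = q
  · exact Or.inl hxq
  · have hx_in : x ∈ (α t : Set X) := by
      rcases eq_or_lt_of_le (show (0:unitInterval) ≤ t from t.2.1) with h0 | h0
      · exfalso
        have : (α t : Set X) = {x} := by rw [← h0, hα0]
        rw [this, mem_singleton_iff] at hq
        exact hxq hq.symm
      · have := hαmono 0 t h0
        rw [hα0] at this
        exact this.subset rfl
    rcases hX.1 x trivial q trivial with heq | ⟨f, hf, hinj, hf0, hf1, _⟩
    · exact Or.inl heq
    · have hr : range f ⊆ (α t : Set X) :=
        arc_subset_continuum hX.2 (α t).isCompact (hαconn t) hf hinj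
          (by rw [hf0]; exact hx_in) (by rw [hf1]; exact hq)
      refine Or.inr ⟨f, hf, hinj, hf0, hf1, fun s => ?_⟩
      have hfs : f s ∈ (α t : Set X) := hr (mem_range_self s)
      intro hfsA
      exact absurd (mem_inter hfs hfsA) (by rw [hαA t htlt]; exact notMem_empty _)

lemma interior_empty_of_nonblocker (hX : IsDendroid X) {A : Set X} (hNB : IsNonBlocker A) :
    interior A = ∅ := by
  obtain ⟨x, hx⟩ := (ne_univ_iff_exists_notMem A).1 hNB.2.2.1
  have hD : Dense (arcComponent Aᶜ x) := dense_of_nonblocker hX hNB x hx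
  by_contra hne
  obtain ⟨p, hp⟩ := (hD.inter_open_nonempty _ isOpen_interior
    (nonempty_iff_ne_empty.2 hne))
  exact hp.2.1 (interior_subset hp.1)

theorem dendroid_nonblocker_iff (hX : IsDendroid X) (A : Set X)
    (hAcl : IsClosed A) (hAne : A.Nonempty) :
    IsNonBlocker A ↔
      interior A = ∅ ∧ ∀ x ∉ A, Dense (arcComponent Aᶜ x) := by
  constructor
  · intro hNB
    exact ⟨interior_empty_of_nonblocker hX hNB, dense_of_nonblocker hX hNB⟩
  · rintro ⟨hint, hdense⟩
    exact nonblocker_of_dense A hAcl hAne hint hdense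
end

section
/- Let X be a dendroid such that some point of X is not a shore point, and let A be a subcontinuum of X. Then A is a connected nonblocker of singletons if and only if A has empty interior and X − A is arcwise connected. -/
open Set Metric TopologicalSpace unitInterval

variable {X : Type*} [MetricSpace X] [CompactSpace X] [ConnectedSpace X] [Nonempty X]

set_option linter.unusedSectionVars false

namespace DCNB

def LinkPred (A K : Set X) (h : ℝ → X) (w : X) : Prop :=
  Continuous h ∧ Set.InjOn h (Icc 0 1) ∧ (∀ a, h a ∈ Aᶜ) ∧ h 0 ∈ K ∧
    (∀ a ∈ Ioc (0:ℝ) 1, h a ∉ K) ∧ w ∈ K ∪ h '' Icc 0 1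

def GoodK (A K : Set X) (x : X) : Prop :=
  IsCompact K ∧ IsConnected K ∧ x ∈ K ∧ K ⊆ Aᶜ

structure ChainHyp (A : Set X) (x : X) (y : ℕ → X) : Prop where
  hne : A.Nonempty
  hd : Dense Aᶜ
  harc : IsArcwiseConnected Aᶜ
  hx : x ∈ Aᶜ
  hy : ∀ n, y n ∈ Aᶜ

theorem exists_link {A : Set X} {x : X} {y : ℕ → X} (hyp : ChainHyp A x y)
    {K : Set X} (hG : GoodK A K x) {w : X} (hw : w ∈ Aᶜ) :
    ∃ h : ℝ → X, LinkPred A K h w := by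
  obtain ⟨hKc, -, hxK, hKA⟩ := hG
  have hzex : ∃ z, z ∈ Aᶜ ∧ z ∉ K := by
    by_contra hcon
    push_neg at hcon
    have h1 : Aᶜ ⊆ K := fun z hz => hcon z hz
    have h2 : (univ : Set X) ⊆ K := by
      calc (univ : Set X) = closure Aᶜ := hyp.hd.closure_eq.symm
        _ ⊆ closure K := closure_mono h1
        _ = K := hKc.isClosed.closure_eq
    obtain ⟨a, ha⟩ := hyp.hne
    exact (hKA (h2 (mem_univ a))) ha
  obtain ⟨z, hz, hzK⟩ := hzex
  classical
  set w' : X := if w ∈ K then z else w with hw'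
  have hw'A : w' ∈ Aᶜ := by by_cases h : w ∈ K <;> simp [hw', h, hz, hw]
  have hw'K : w' ∉ K := by by_cases h : w ∈ K <;> simp [hw', h, hzK]
  have hxw : x ≠ w' := fun e => hw'K (e ▸ hxK)
  obtain (h | ⟨f, hfc, hfi, hf0, hf1, hfA⟩) := hyp.harc x (hKA hxK) w' hw'A
  · exact absurd h hxw
  set F : ℝ → X := fun r => f (projIcc 0 1 zero_le_one r) with hF
  have hFc : Continuous F := hfc.comp continuous_projIcc
  have hFmem : ∀ r, F r ∈ Aᶜ := fun r => hfA _
  have hFeq : ∀ (r : ℝ) (hr : r ∈ Icc (0:ℝ) 1), F r = f ⟨r, hr⟩ := fun r hr => by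
    exact congrArg f (projIcc_of_mem zero_le_one hr)
  have hF0 : F 0 = x := by
    rw [hFeq 0 ⟨le_refl 0, zero_le_one⟩]; exact hf0
  have hF1 : F 1 = w' := by
    rw [hFeq 1 ⟨zero_le_one, le_refl 1⟩]; exact hf1
  set S : Set ℝ := Icc (0:ℝ) 1 ∩ F ⁻¹' K with hS
  have hS0 : (0:ℝ) ∈ S := ⟨⟨le_refl 0, zero_le_one⟩, by simp only [mem_preimage, hF0]; exact hxK⟩
  have hScl : IsClosed S := isClosed_Icc.inter (hKc.isClosed.preimage hFc)
  have hSbdd : BddAbove S := ⟨1, fun r hr => hr.1.2⟩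
  set u := sSup S with hu
  have huS : u ∈ S := hScl.csSup_mem ⟨0, hS0⟩ hSbdd
  have hu0 : 0 ≤ u := huS.1.1
  have hu1 : u ≤ 1 := huS.1.2
  have huK : F u ∈ K := huS.2
  have hune : u < 1 := by
    rcases lt_or_eq_of_le hu1 with h | h
    · exact h
    · exact absurd (h ▸ huK) (hF1 ▸ hw'K)
  have h1u : 0 < 1 - u := by linarith
  refine ⟨fun a => F (u + a * (1 - u)), (hFc.comp (continuous_const.add (continuous_id.mul continuous_const)) : _), ?_, fun a => hFmem _, ?_, ?_, ?_⟩
  · intro a ha b hb he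
    change F (u + a * (1 - u)) = F (u + b * (1 - u)) at he
    have hmem : ∀ c : ℝ, c ∈ Icc (0:ℝ) 1 → u + c * (1 - u) ∈ Icc (0:ℝ) 1 := by
      intro c hc
      constructor
      · nlinarith [hc.1, hc.2]
      · nlinarith [hc.1, hc.2]
    rw [hFeq _ (hmem a ha), hFeq _ (hmem b hb)] at he
    have := hfi he
    have h2 : u + a * (1 - u) = u + b * (1 - u) := congrArg Subtype.val this
    have : a * (1 - u) = b * (1 - u) := by linarith
    exact mul_right_cancel₀ (ne_of_gt h1u) this
  · simpa using huK
  · intro a ha hmem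
    have harg : u + a * (1 - u) ∈ S := by
      refine ⟨⟨by nlinarith [ha.1, ha.2], by nlinarith [ha.1, ha.2]⟩, hmem⟩
    have : u + a * (1 - u) ≤ u := le_csSup hSbdd harg
    nlinarith [ha.1, ha.2]
  · by_cases h : w ∈ K
    · exact Or.inl h
    · refine Or.inr ⟨1, ⟨zero_le_one, le_refl 1⟩, ?_⟩
      show F (u + 1 * (1 - u)) = w
      have he1 : u + 1 * (1 - u) = 1 := by ring
      rw [he1, hF1, hw']
      simp [h]


theorem goodK_singleton {A : Set X} {x : X} {y : ℕ → X} (hyp : ChainHyp A x y) :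
    GoodK A ({x} : Set X) x :=
  ⟨isCompact_singleton, isConnected_singleton, rfl, singleton_subset_iff.2 hyp.hx⟩

theorem goodK_step {A K : Set X} {x : X} {h : ℝ → X} {w : X}
    (hG : GoodK A K x) (hL : LinkPred A K h w) : GoodK A (K ∪ h '' Icc 0 1) x := by
  obtain ⟨hKc, hKconn, hxK, hKA⟩ := hG
  obtain ⟨hc, -, hA, h0, -, -⟩ := hL
  refine ⟨hKc.union (isCompact_Icc.image hc), ?_, Or.inl hxK, ?_⟩
  · exact hKconn.union ⟨h 0, h0, ⟨0, ⟨le_refl _, zero_le_one⟩, rfl⟩⟩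
      ((isConnected_Icc zero_le_one).image h hc.continuousOn)
  · rintro q (hq | ⟨a, -, rfl⟩)
    · exact hKA hq
    · exact hA a

noncomputable def chainK {A : Set X} {x : X} {y : ℕ → X} (hyp : ChainHyp A x y) :
    ∀ _ : ℕ, {K : Set X // GoodK A K x} :=
  Nat.rec ⟨{x}, goodK_singleton hyp⟩
    (fun n prev =>
      ⟨prev.1 ∪ (exists_link hyp prev.2 (hyp.hy n)).choose '' Icc 0 1,
        goodK_step prev.2 (exists_link hyp prev.2 (hyp.hy n)).choose_spec⟩)

noncomputable def chainH {A : Set X} {x : X} {y : ℕ → X} (hyp : ChainHyp A x y) (n : ℕ) :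
    ℝ → X :=
  (exists_link hyp (chainK hyp n).2 (hyp.hy n)).choose

theorem chainL {A : Set X} {x : X} {y : ℕ → X} (hyp : ChainHyp A x y) (n : ℕ) :
    LinkPred A (chainK hyp n).1 (chainH hyp n) (y n) :=
  (exists_link hyp (chainK hyp n).2 (hyp.hy n)).choose_spec

theorem chainK_zero {A : Set X} {x : X} {y : ℕ → X} (hyp : ChainHyp A x y) :
    ((chainK hyp 0).1 : Set X) = {x} := rfl

theorem chainK_succ {A : Set X} {x : X} {y : ℕ → X} (hyp : ChainHyp A x y) (n : ℕ) :
    (chainK hyp (n+1)).1 = (chainK hyp n).1 ∪ chainH hyp n '' Icc 0 1 := rfl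

theorem chainK_mono {A : Set X} {x : X} {y : ℕ → X} (hyp : ChainHyp A x y) {m n : ℕ}
    (h : m ≤ n) : (chainK hyp m).1 ⊆ (chainK hyp n).1 := by
  induction h with
  | refl => exact subset_rfl
  | step h ih => exact ih.trans (by rw [chainK_succ]; exact subset_union_left)

theorem chainK_mem {A : Set X} {x : X} {y : ℕ → X} (hyp : ChainHyp A x y) (n : ℕ) :
    y n ∈ (chainK hyp (n+1)).1 := by
  rw [chainK_succ]
  exact (chainL hyp n).2.2.2.2.2

/-- The global increasing family of compact connected sets. -/
noncomputable def chainB {A : Set X} {x : X} {y : ℕ → X} (hyp : ChainHyp A x y) (r : ℝ) :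
    Set X :=
  {x} ∪ ⋃ m : ℕ, chainH hyp m '' Icc 0 (min (r - m) 1)

theorem chainB_mono {A : Set X} {x : X} {y : ℕ → X} (hyp : ChainHyp A x y) {r r' : ℝ}
    (h : r ≤ r') : chainB hyp r ⊆ chainB hyp r' := by
  apply union_subset_union_right
  apply iUnion_mono
  intro m
  apply image_mono
  apply Icc_subset_Icc le_rfl
  exact min_le_min (by linarith) le_rfl

theorem chainK_sub_chainB {A : Set X} {x : X} {y : ℕ → X} (hyp : ChainHyp A x y) {n : ℕ}
    {r : ℝ} (h : (n:ℝ) ≤ r) : (chainK hyp n).1 ⊆ chainB hyp r := by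
  induction n generalizing r with
  | zero => rw [chainK_zero]; exact subset_union_left
  | succ n ih =>
    rw [chainK_succ]
    apply union_subset
    · exact ih (le_trans (by push_cast; linarith) h)
    · intro q hq
      refine Or.inr (mem_iUnion.2 ⟨n, ?_⟩)
      have : min (r - n) 1 = 1 := min_eq_right (by push_cast at h ⊢; linarith)
      rw [this]; exact hq

theorem chainB_rep {A : Set X} {x : X} {y : ℕ → X} (hyp : ChainHyp A x y) {n : ℕ} {r : ℝ}
    (h1 : (n:ℝ) ≤ r) (h2 : r ≤ (n:ℝ) + 1) :
    chainB hyp r = (chainK hyp n).1 ∪ chainH hyp n '' Icc 0 (r - n) := by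
  apply Subset.antisymm
  · rintro q (hq | hq)
    · exact Or.inl (hq ▸ (chainK hyp n).2.2.2.1)
    · obtain ⟨m, hm⟩ := mem_iUnion.1 hq
      obtain ⟨a, ⟨ha0, ha1⟩, rfl⟩ := hm
      have hm0 : 0 ≤ min (r - (m:ℝ)) 1 := le_trans ha0 ha1
      have hmr : (m:ℝ) ≤ r := by
        have := le_trans hm0 (min_le_left _ _); linarith
      have ha1' : a ≤ 1 := le_trans ha1 (min_le_right _ _)
      rcases lt_trichotomy m n with hmn | hmn | hmn
      · refine Or.inl (chainK_mono hyp (hmn : m + 1 ≤ n) ?_)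
        rw [chainK_succ]
        exact Or.inr ⟨a, ⟨ha0, ha1'⟩, rfl⟩
      · subst hmn
        exact Or.inr ⟨a, ⟨ha0, le_trans ha1 (min_le_left _ _)⟩, rfl⟩
      · have hmn1 : m ≤ n + 1 := by
          have : (m:ℝ) ≤ (n:ℝ) + 1 := le_trans hmr h2
          exact_mod_cast this
        have hm1 : m = n + 1 := by omega
        subst hm1
        have hrm : r = (n:ℝ) + 1 := by
          push_cast at hmr; linarith
        have ha0' : a = 0 := by
          have h3 : min (r - ((n:ℝ)+1)) 1 ≤ r - ((n:ℝ)+1) := min_le_left _ _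
          push_cast at ha1
          linarith
        subst ha0'
        have hmem : chainH hyp (n+1) 0 ∈ (chainK hyp (n+1)).1 := (chainL hyp (n+1)).2.2.2.1
        rw [chainK_succ] at hmem
        rcases hmem with h' | h'
        · exact Or.inl h'
        · obtain ⟨b, hb, he⟩ := h'
          exact Or.inr ⟨b, ⟨hb.1, by rw [hrm]; push_cast; linarith [hb.2]⟩, he⟩
  · apply union_subset
    · exact chainK_sub_chainB hyp h1
    · intro q hq
      refine Or.inr (mem_iUnion.2 ⟨n, ?_⟩)
      have : min (r - n) 1 = r - n := min_eq_left (by linarith)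
      rw [this]; exact hq


theorem chainB_nat {A : Set X} {x : X} {y : ℕ → X} (hyp : ChainHyp A x y) (n : ℕ) :
    chainB hyp (n:ℝ) = (chainK hyp n).1 := by
  rw [chainB_rep hyp le_rfl (by linarith)]
  rw [sub_self, Icc_self, image_singleton]
  exact union_eq_left.2 (singleton_subset_iff.2 (chainL hyp n).2.2.2.1)

theorem chainB_strict {A : Set X} {x : X} {y : ℕ → X} (hyp : ChainHyp A x y) {r r' : ℝ}
    (hr : 0 ≤ r) (hrr : r < r') : chainB hyp r ⊂ chainB hyp r' := by
  set n := ⌊r⌋₊ with hn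
  have hn1 : (n:ℝ) ≤ r := Nat.floor_le hr
  have hn2 : r < (n:ℝ) + 1 := Nat.lt_floor_add_one r
  have hrep := chainB_rep hyp hn1 (le_of_lt hn2)
  set a := min (r' - (n:ℝ)) 1 with ha
  have ha1 : r - n < a := lt_min (by linarith) (by linarith)
  have ha0 : 0 < a := lt_of_le_of_lt (by linarith) ha1
  have ha2 : a ≤ 1 := min_le_right _ _
  have hpmem : chainH hyp n a ∈ chainB hyp r' :=
    Or.inr (mem_iUnion.2 ⟨n, ⟨a, ⟨le_of_lt ha0, le_rfl⟩, rfl⟩⟩)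
  have hpnot : chainH hyp n a ∉ chainB hyp r := by
    rw [hrep]
    rintro (hq | ⟨b, ⟨hb0, hb1⟩, he⟩)
    · exact (chainL hyp n).2.2.2.2.1 a ⟨ha0, ha2⟩ hq
    · have hbI : b ∈ Icc (0:ℝ) 1 := ⟨hb0, by linarith⟩
      have := (chainL hyp n).2.1 hbI ⟨le_of_lt ha0, ha2⟩ he
      rw [this] at hb1
      linarith
  exact ⟨chainB_mono hyp (le_of_lt hrr), fun hc => hpnot (hc hpmem)⟩

theorem chainB_good {A : Set X} {x : X} {y : ℕ → X} (hyp : ChainHyp A x y) {r : ℝ}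
    (hr : 0 ≤ r) : IsCompact (chainB hyp r) ∧ IsConnected (chainB hyp r) ∧
      x ∈ chainB hyp r ∧ chainB hyp r ⊆ Aᶜ := by
  set n := ⌊r⌋₊ with hn
  have hn1 : (n:ℝ) ≤ r := Nat.floor_le hr
  have hn2 : r < (n:ℝ) + 1 := Nat.lt_floor_add_one r
  rw [chainB_rep hyp hn1 (le_of_lt hn2)]
  obtain ⟨hKc, hKconn, hxK, hKA⟩ := (chainK hyp n).2
  obtain ⟨hc, -, hA, h0, -, -⟩ := chainL hyp n
  have him : chainH hyp n '' Icc 0 (r - n) ⊆ Aᶜ := by rintro q ⟨b, -, rfl⟩; exact hA b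
  refine ⟨hKc.union (isCompact_Icc.image hc), ?_, Or.inl hxK, union_subset hKA him⟩
  exact hKconn.union ⟨chainH hyp n 0, h0, ⟨0, ⟨le_refl _, by linarith⟩, rfl⟩⟩
    ((isConnected_Icc (by linarith)).image _ hc.continuousOn)

theorem chainB_side {A : Set X} {x : X} {y : ℕ → X} (hyp : ChainHyp A x y) (M : ℕ) {ε δ : ℝ}
    (hδ0 : 0 < δ) (hδ1 : δ ≤ 1)
    (hmod : ∀ m ≤ M, ∀ a ∈ Icc (0:ℝ) 1, ∀ b ∈ Icc (0:ℝ) 1, |a - b| ≤ δ →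
      dist (chainH hyp m a) (chainH hyp m b) ≤ ε)
    {r r' : ℝ} (hr : 0 ≤ r) (hr' : 0 ≤ r') (hrM : r' ≤ (M:ℝ)) (hd : |r - r'| ≤ δ) :
    ∀ p ∈ chainB hyp r', ∃ q ∈ chainB hyp r, dist p q ≤ 2 * ε := by
  have hε0 : 0 ≤ ε := le_trans dist_nonneg
    (hmod 0 (Nat.zero_le M) 0 ⟨le_rfl, zero_le_one⟩ 0 ⟨le_rfl, zero_le_one⟩ (by simpa using le_of_lt hδ0))
  have habs := abs_le.1 hd
  rintro p (hp | hp)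
  · exact ⟨p, Or.inl hp, by rw [dist_self]; linarith⟩
  obtain ⟨m, a, ⟨ha0, ha1⟩, rfl⟩ := mem_iUnion.1 hp
  have hm0 : (0:ℝ) ≤ min (r' - (m:ℝ)) 1 := le_trans ha0 ha1
  have hmr' : (m:ℝ) ≤ r' := by have := le_trans hm0 (min_le_left _ _); linarith
  have hmM : m ≤ M := by exact_mod_cast le_trans hmr' hrM
  have ha1' : a ≤ 1 := le_trans ha1 (min_le_right _ _)
  have har' : a ≤ r' - m := le_trans ha1 (min_le_left _ _)
  rcases le_or_gt (m:ℝ) r with hc | hc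
  · -- the piece also (partially) exists at time r
    set b := min a (r - (m:ℝ)) with hb
    have hb0 : 0 ≤ b := le_min ha0 (by linarith)
    have hbmem : b ∈ Icc 0 (min (r - (m:ℝ)) 1) :=
      ⟨hb0, le_min (min_le_right _ _) (le_trans (min_le_left _ _) ha1')⟩
    refine ⟨chainH hyp m b, Or.inr (mem_iUnion.2 ⟨m, ⟨b, hbmem, rfl⟩⟩), ?_⟩
    have hab : |a - b| ≤ δ := by
      rw [abs_le]
      rcases min_cases a (r - (m:ℝ)) with ⟨he, -⟩ | ⟨he, hle⟩ <;> rw [hb, he] <;>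
        constructor <;> linarith
    have := hmod m hmM a ⟨ha0, ha1'⟩ b ⟨hb0, le_trans (min_le_left _ _) ha1'⟩ hab
    linarith
  · -- r < m : go back to the previous piece
    have hm1 : m ≠ 0 := by
      intro he; rw [he] at hc; push_cast at hc; linarith
    obtain ⟨n, rfl⟩ := Nat.exists_eq_succ_of_ne_zero hm1
    have hnr : (n:ℝ) ≤ r := by push_cast at hmr' hc ⊢; linarith
    have haδ : a ≤ δ := by push_cast at har' hc; linarith [habs.1]
    have hd1 : dist (chainH hyp (n+1) a) (chainH hyp (n+1) 0) ≤ ε :=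
      hmod (n+1) hmM a ⟨ha0, ha1'⟩ 0 ⟨le_rfl, zero_le_one⟩ (by rw [abs_of_nonneg (by linarith : (0:ℝ) ≤ a - 0)]; linarith)
    have hmem : chainH hyp (n+1) 0 ∈ (chainK hyp (n+1)).1 := (chainL hyp (n+1)).2.2.2.1
    rw [chainK_succ] at hmem
    rcases hmem with h' | ⟨b', ⟨hb'0, hb'1⟩, hbe⟩
    · refine ⟨chainH hyp (n+1) 0, chainK_sub_chainB hyp hnr h', by linarith⟩
    · set c := min b' (r - (n:ℝ)) with hc'
      have hc0 : 0 ≤ c := le_min hb'0 (by linarith)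
      have hcmem : c ∈ Icc 0 (min (r - (n:ℝ)) 1) :=
        ⟨hc0, le_min (min_le_right _ _) (le_trans (min_le_left _ _) hb'1)⟩
      refine ⟨chainH hyp n c, Or.inr (mem_iUnion.2 ⟨n, ⟨c, hcmem, rfl⟩⟩), ?_⟩
      have hb'c : |b' - c| ≤ δ := by
        rw [abs_le]
        have hm2 : ((n:ℝ)+1) ≤ r' := by push_cast at hmr'; linarith
        rcases min_cases b' (r - (n:ℝ)) with ⟨he, -⟩ | ⟨he, hle⟩ <;> rw [hc', he] <;>
          constructor <;> linarith
      have hd2 : dist (chainH hyp n b') (chainH hyp n c) ≤ ε :=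
        hmod n (by omega) b' ⟨hb'0, hb'1⟩ c ⟨hc0, le_trans (min_le_left _ _) hb'1⟩ hb'c
      calc dist (chainH hyp (n+1) a) (chainH hyp n c)
          ≤ dist (chainH hyp (n+1) a) (chainH hyp (n+1) 0) + dist (chainH hyp (n+1) 0) (chainH hyp n c) := dist_triangle _ _ _
        _ ≤ ε + ε := add_le_add hd1 (by rw [← hbe]; exact hd2)
        _ = 2 * ε := by ring


noncomputable def chainBN {A : Set X} {x : X} {y : ℕ → X} (hyp : ChainHyp A x y) (r : ℝ) :
    NonemptyCompacts X :=
  ⟨⟨chainB hyp (max r 0), (chainB_good hyp (le_max_right r 0)).1⟩,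
    ⟨x, (chainB_good hyp (le_max_right r 0)).2.2.1⟩⟩

theorem chainBN_coe {A : Set X} {x : X} {y : ℕ → X} (hyp : ChainHyp A x y) (r : ℝ) :
    (chainBN hyp r : Set X) = chainB hyp (max r 0) := rfl

theorem chainBN_cont {A : Set X} {x : X} {y : ℕ → X} (hyp : ChainHyp A x y) :
    Continuous (chainBN hyp) := by
  rw [continuous_iff_continuousAt]
  intro r0
  rw [Metric.continuousAt_iff]
  intro ε hε
  set M : ℕ := ⌊max r0 0⌋₊ + 2 with hM
  have hUC : ∀ m : ℕ, ∃ d, 0 < d ∧ ∀ a ∈ Icc (0:ℝ) 1, ∀ b ∈ Icc (0:ℝ) 1, |a - b| ≤ d →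
      dist (chainH hyp m a) (chainH hyp m b) ≤ ε/4 := by
    intro m
    have huc := isCompact_Icc.uniformContinuousOn_of_continuous
      ((chainL hyp m).1.continuousOn : ContinuousOn (chainH hyp m) (Icc 0 1))
    rw [Metric.uniformContinuousOn_iff] at huc
    obtain ⟨d, hd0, hd⟩ := huc (ε/4) (by linarith)
    refine ⟨d/2, by linarith, fun a ha b hb hab => ?_⟩
    refine le_of_lt (hd a ha b hb ?_)
    rw [Real.dist_eq]
    linarith
  choose d hd0 hdP using hUC
  have hrne : (Finset.range (M+1)).Nonempty := ⟨0, Finset.mem_range.2 (Nat.succ_pos M)⟩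
  set δ1 := (Finset.range (M+1)).inf' hrne d with hδ1
  set δ := min 1 δ1 with hδdef
  have hδpos : 0 < δ := lt_min one_pos ((Finset.lt_inf'_iff _).2 fun i _ => hd0 i)
  have hδle1 : δ ≤ 1 := min_le_left _ _
  have hmod : ∀ m ≤ M, ∀ a ∈ Icc (0:ℝ) 1, ∀ b ∈ Icc (0:ℝ) 1, |a - b| ≤ δ →
      dist (chainH hyp m a) (chainH hyp m b) ≤ ε/4 := by
    intro m hm a ha b hb hab
    refine hdP m a ha b hb (le_trans hab ?_)
    exact le_trans (min_le_right _ _) (Finset.inf'_le _ (Finset.mem_range.2 (by omega)))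
  refine ⟨δ, hδpos, fun {r} hr => ?_⟩
  set ρ := max r 0 with hρdef
  set ρ0 := max r0 0 with hρ0def
  have h1 : |ρ - ρ0| ≤ δ :=
    le_trans (abs_max_sub_max_le_abs _ _ _) (le_of_lt (by rwa [← Real.dist_eq]))
  have habs := abs_le.1 h1
  have hfl := Nat.lt_floor_add_one ρ0
  have hρ0M : ρ0 ≤ (M:ℝ) := by rw [hM]; push_cast; linarith
  have hρM : ρ ≤ (M:ℝ) := by rw [hM]; push_cast; linarith
  have hS1 := chainB_side hyp M hδpos hδle1 hmod (le_max_right r 0) (le_max_right r0 0) hρ0M h1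
  have hS2 := chainB_side hyp M hδpos hδle1 hmod (le_max_right r0 0) (le_max_right r 0) hρM
    (by rwa [abs_sub_comm])
  have hH : hausdorffDist (chainB hyp ρ) (chainB hyp ρ0) ≤ 2 * (ε/4) := by
    apply hausdorffDist_le_of_mem_dist (by linarith)
    · intro p hp
      obtain ⟨q, hq, hdq⟩ := hS2 p hp
      exact ⟨q, hq, hdq⟩
    · intro q hq
      obtain ⟨q', hq', hdq⟩ := hS1 q hq
      exact ⟨q', hq', hdq⟩
  rw [NonemptyCompacts.dist_eq]
  calc hausdorffDist (chainBN hyp r : Set X) (chainBN hyp r0 : Set X)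
      = hausdorffDist (chainB hyp ρ) (chainB hyp ρ0) := rfl
    _ ≤ 2*(ε/4) := hH
    _ < ε := by linarith


theorem chain_net {A : Set X} {x : X} {y : ℕ → X} (hyp : ChainHyp A x y)
    (hdr : DenseRange y) {ε : ℝ} (hε : 0 < ε) :
    ∃ N : ℕ, ∀ p : X, ∃ q ∈ (chainK hyp N).1, dist p q < ε := by
  have hcov : (univ : Set X) ⊆ ⋃ i : ℕ, ball (y i) ε := by
    intro p _
    obtain ⟨i, hi⟩ := Metric.denseRange_iff.1 hdr p ε hε
    exact mem_iUnion.2 ⟨i, by rwa [mem_ball]⟩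
  obtain ⟨s, hs⟩ := isCompact_univ.elim_finite_subcover (fun i : ℕ => ball (y i) ε)
    (fun i => isOpen_ball) hcov
  refine ⟨(s.sup id) + 1, fun p => ?_⟩
  obtain ⟨i, his, hpi⟩ := mem_iUnion₂.1 (hs (mem_univ p))
  refine ⟨y i, ?_, mem_ball.1 hpi⟩
  have h1 : y i ∈ (chainK hyp (i+1)).1 := chainK_mem hyp i
  have h2 : i ≤ s.sup id := by simpa using Finset.le_sup (f := id) his
  exact chainK_mono hyp (by omega) h1

theorem exists_orderArc {A : Set X} (hAne : A.Nonempty) (hd : Dense Aᶜ)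
    (harc : IsArcwiseConnected Aᶜ) {x : X} (hx : x ∉ A) :
    ∃ α : unitInterval → NonemptyCompacts X,
      (Continuous α ∧ (∀ t, IsConnected (α t : Set X)) ∧
        ∀ s t : unitInterval, s < t → (α s : Set X) ⊂ (α t : Set X)) ∧
      (α 0 : Set X) = {x} ∧ (α 1 : Set X) = univ ∧
      ∀ t : unitInterval, t < 1 → (α t : Set X) ∩ A = ∅ := by
  have hne' : Nonempty ↥(Aᶜ) := ⟨⟨x, hx⟩⟩
  obtain ⟨u, hu⟩ := TopologicalSpace.exists_dense_seq ↥(Aᶜ)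
  set y : ℕ → X := fun n => (u n : X) with hy
  have hyA : ∀ n, y n ∈ Aᶜ := fun n => (u n).2
  have hyp : ChainHyp A x y := ⟨hAne, hd, harc, hx, hyA⟩
  have hdr : DenseRange y := by
    have h1 : Aᶜ ⊆ closure (range y) := by
      intro a ha
      have h2 : (⟨a, ha⟩ : ↥(Aᶜ)) ∈ closure (range u) := hu _
      have h3 := (image_closure_subset_closure_image continuous_subtype_val)
        (mem_image_of_mem _ h2)
      have h4 : Subtype.val '' (range u) = range y := by
        rw [hy, ← range_comp]; rfl
      rwa [h4] at h3
    intro p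
    exact closure_minimal h1 isClosed_closure (hd p)
  classical
  set XN : NonemptyCompacts X := ⟨⟨univ, isCompact_univ⟩, univ_nonempty⟩ with hXN
  set φ : unitInterval → ℝ := fun t => (t:ℝ) / (1 - (t:ℝ)) with hφ
  have hφ0 : ∀ t : unitInterval, (t:ℝ) < 1 → 0 ≤ φ t := fun t ht =>
    div_nonneg t.2.1 (by linarith)
  set α : unitInterval → NonemptyCompacts X :=
    fun t => if ht : (t:ℝ) < 1 then chainBN hyp (φ t) else XN with hα
  have hαlt : ∀ t : unitInterval, (t:ℝ) < 1 → (α t : Set X) = chainB hyp (φ t) := by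
    intro t ht
    rw [hα]; simp only [dif_pos ht]
    rw [chainBN_coe, max_eq_left (hφ0 t ht)]
  have h1I : ((1 : unitInterval) : ℝ) = 1 := rfl
  have hα1 : (α 1 : Set X) = univ := by
    rw [hα]; simp only [h1I, dif_neg (lt_irrefl (1:ℝ))]; rfl
  have hφmono : ∀ s t : unitInterval, s < t → (t:ℝ) < 1 → φ s < φ t := by
    intro s t hst ht1
    have hst' : (s:ℝ) < (t:ℝ) := hst
    have h0s : 0 ≤ (s:ℝ) := s.2.1
    rw [hφ]
    rw [div_lt_div_iff₀ (by linarith) (by linarith)]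
    nlinarith
  have hαcont : Continuous α := by
    rw [continuous_iff_continuousAt]
    intro t0
    by_cases ht0 : (t0:ℝ) < 1
    · have hV : {t : unitInterval | (t:ℝ) < 1} ∈ nhds t0 :=
        (isOpen_lt continuous_subtype_val continuous_const).mem_nhds ht0
      have hg : ContinuousAt (fun t : unitInterval => chainBN hyp (φ t)) t0 := by
        apply (chainBN_cont hyp).continuousAt.comp
        exact ContinuousAt.div continuous_subtype_val.continuousAt
          (continuous_const.sub continuous_subtype_val).continuousAt
          (ne_of_gt (by linarith : (0:ℝ) < 1 - (t0:ℝ)))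
      refine hg.congr (Filter.eventually_of_mem hV fun t (ht : (t:ℝ) < 1) => ?_)
      show chainBN hyp (φ t) = α t
      rw [hα]
      show chainBN hyp (φ t) = if ht : (t:ℝ) < 1 then chainBN hyp (φ t) else XN
      rw [dif_pos ht]
    · have ht1 : t0 = 1 := Subtype.ext (le_antisymm t0.2.2 (not_lt.1 ht0))
      subst ht1
      rw [ContinuousAt, Metric.tendsto_nhds]
      intro ε hε
      obtain ⟨N, hN⟩ := chain_net hyp hdr (half_pos hε)
      have hW : {t : unitInterval | (N:ℝ)/((N:ℝ)+1) < (t:ℝ)} ∈ nhds (1:unitInterval) := by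
        apply (isOpen_lt continuous_const continuous_subtype_val).mem_nhds
        show (N:ℝ)/((N:ℝ)+1) < ((1:unitInterval):ℝ)
        rw [h1I, div_lt_one (by positivity)]
        linarith
      apply Filter.eventually_of_mem hW
      intro t ht
      by_cases htl : (t:ℝ) < 1
      · have hφN : (N:ℝ) ≤ φ t := by
          rw [hφ]
          rw [le_div_iff₀ (by linarith)]
          have ht' : (N:ℝ)/((N:ℝ)+1) < (t:ℝ) := ht
          rw [div_lt_iff₀ (by positivity)] at ht'
          nlinarith [t.2.1]
        rw [NonemptyCompacts.dist_eq, hαlt t htl, hα1]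
        have hsub : (chainK hyp N).1 ⊆ chainB hyp (φ t) := chainK_sub_chainB hyp hφN
        have hHd : hausdorffDist (chainB hyp (φ t)) univ ≤ ε/2 := by
          apply hausdorffDist_le_of_mem_dist (by linarith)
          · exact fun p _ => ⟨p, mem_univ p, by rw [dist_self]; linarith⟩
          · intro p _
            obtain ⟨q, hq, hdq⟩ := hN p
            exact ⟨q, hsub hq, le_of_lt hdq⟩
        linarith
      · have ht1 : t = 1 := Subtype.ext (le_antisymm t.2.2 (not_lt.1 htl))
        rw [ht1, dist_self]; exact hε
  have hαconn : ∀ t, IsConnected (α t : Set X) := by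
    intro t
    by_cases ht : (t:ℝ) < 1
    · rw [hαlt t ht]; exact (chainB_good hyp (hφ0 t ht)).2.1
    · have ht1 : t = 1 := Subtype.ext (le_antisymm t.2.2 (not_lt.1 ht))
      rw [ht1, hα1]; exact ⟨univ_nonempty, isPreconnected_univ⟩
  have hαstrict : ∀ s t : unitInterval, s < t → (α s : Set X) ⊂ (α t : Set X) := by
    intro s t hst
    have hst' : (s:ℝ) < (t:ℝ) := hst
    have hs1 : (s:ℝ) < 1 := lt_of_lt_of_le hst' t.2.2
    by_cases ht : (t:ℝ) < 1
    · rw [hαlt s hs1, hαlt t ht]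
      exact chainB_strict hyp (hφ0 s hs1) (hφmono s t hst ht)
    · have ht1 : t = 1 := Subtype.ext (le_antisymm t.2.2 (not_lt.1 ht))
      rw [ht1, hα1, hαlt s hs1, ssubset_univ_iff]
      intro he
      obtain ⟨a, ha⟩ := hAne
      have hsubA := (chainB_good hyp (hφ0 s hs1)).2.2.2
      rw [he] at hsubA
      exact hsubA (mem_univ a) ha
  have hα0' : (α 0 : Set X) = {x} := by
    have h0 : ((0:unitInterval):ℝ) = 0 := rfl
    have h01 : ((0:unitInterval):ℝ) < 1 := by rw [h0]; norm_num
    rw [hαlt 0 h01]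
    have hφz : φ 0 = 0 := by rw [hφ]; simp [h0]
    rw [hφz]
    have hb := chainB_nat hyp 0
    rw [Nat.cast_zero] at hb
    rw [hb, chainK_zero]
  have hαA : ∀ t : unitInterval, t < 1 → (α t : Set X) ∩ A = ∅ := by
    intro t ht
    have htl : (t:ℝ) < 1 := ht
    rw [hαlt t htl, eq_empty_iff_forall_notMem]
    rintro q ⟨hq1, hq2⟩
    exact (chainB_good hyp (hφ0 t htl)).2.2.2 hq1 hq2
  exact ⟨α, ⟨hαcont, hαconn, hαstrict⟩, hα0', hα1, hαA⟩


theorem exists_lt_one_close (α : unitInterval → NonemptyCompacts X) (hc : Continuous α)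
    (h1 : (α 1 : Set X) = univ) {ε : ℝ} (hε : 0 < ε) :
    ∃ t : unitInterval, t < 1 ∧ hausdorffDist (α t : Set X) univ < ε := by
  have hmem : ∀ n : ℕ, 1 - 1/((n:ℝ)+1) ∈ Icc (0:ℝ) 1 := by
    intro n
    constructor
    · have h2 : 1/((n:ℝ)+1) ≤ 1 := by
        rw [div_le_one (by positivity)]
        linarith [(Nat.cast_nonneg n : (0:ℝ) ≤ (n:ℝ))]
      linarith
    · have h3 : 0 < 1/((n:ℝ)+1) := by positivity
      linarith
  set tn : ℕ → unitInterval := fun n => ⟨1 - 1/((n:ℝ)+1), hmem n⟩ with htn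
  have htend : Filter.Tendsto tn Filter.atTop (nhds 1) := by
    rw [tendsto_subtype_rng]
    have h2 : Filter.Tendsto (fun n : ℕ => 1 - 1/((n:ℝ)+1)) Filter.atTop (nhds (1 - 0)) :=
      Filter.Tendsto.sub tendsto_const_nhds tendsto_one_div_add_atTop_nhds_zero_nat
    rw [sub_zero] at h2; exact h2
  have h3 : Filter.Tendsto (fun n => α (tn n)) Filter.atTop (nhds (α 1)) :=
    (hc.tendsto 1).comp htend
  rw [Metric.tendsto_atTop] at h3
  obtain ⟨N, hN⟩ := h3 ε hε
  refine ⟨tn N, ?_, ?_⟩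
  · rw [← Subtype.coe_lt_coe]
    show 1 - 1/((N:ℝ)+1) < ((1:unitInterval):ℝ)
    have h4 : 0 < 1/((N:ℝ)+1) := by positivity
    have h5 : ((1:unitInterval):ℝ) = 1 := rfl
    rw [h5]; linarith
  · have h6 := hN N le_rfl
    rwa [NonemptyCompacts.dist_eq, h1] at h6

end DCNB

theorem dendroid_connected_nonblocker_iff (hX : IsDendroid X)
    (hpt : ∃ p : X, ¬ IsShorePoint p) (A : Set X)
    (hAc : IsCompact A) (hAconn : IsConnected A) :
    IsNonBlocker A ↔ interior A = ∅ ∧ IsArcwiseConnected Aᶜ := by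
  constructor
  · rintro ⟨hAcl, hAne, hAuniv, hOA⟩
    have hdense : Dense Aᶜ := by
      intro p
      rw [Metric.mem_closure_iff]
      intro ε hε
      obtain ⟨x0, hx0⟩ := (ne_univ_iff_exists_notMem A).1 hAuniv
      obtain ⟨α, ⟨hαc, hαconn, hαmono⟩, hα0, hα1, hαA⟩ := hOA x0 hx0
      obtain ⟨t, ht1, htd⟩ := DCNB.exists_lt_one_close α hαc hα1 hε
      have hfin : EMetric.hausdorffEdist (univ : Set X) (α t : Set X) ≠ ⊤ :=
        Metric.hausdorffEdist_ne_top_of_nonempty_of_bounded univ_nonempty (α t).nonempty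
          isCompact_univ.isBounded (α t).isCompact.isBounded
      obtain ⟨b, hb, hdb⟩ := Metric.exists_dist_lt_of_hausdorffDist_lt (mem_univ p)
        (by rwa [Metric.hausdorffDist_comm] at htd) hfin
      refine ⟨b, ?_, hdb⟩
      intro hbA
      exact (eq_empty_iff_forall_notMem.1 (hαA t ht1)) b ⟨hb, hbA⟩
    refine ⟨interior_eq_empty_iff_dense_compl.2 hdense, ?_⟩
    intro a ha b hb
    rcases eq_or_ne a b with rfl | hab
    · exact Or.inl rfl
    obtain ⟨p, hp⟩ := hpt
    have hpuniv : ({p} : Set X) ≠ univ := by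
      intro he
      apply hab
      have h1 : a ∈ ({p} : Set X) := he ▸ mem_univ a
      have h2 : b ∈ ({p} : Set X) := he ▸ mem_univ b
      rw [mem_singleton_iff] at h1 h2
      rw [h1, h2]
    have hsh : ∃ ε > 0, ∀ B : Set X, IsCompact B → IsConnected B →
        hausdorffDist B univ < ε → p ∈ B := by
      by_contra hcon
      push_neg at hcon
      apply hp
      refine ⟨isClosed_singleton, singleton_nonempty p, hpuniv, ?_⟩
      intro ε hε
      obtain ⟨B, hB1, hB2, hB3, hB4⟩ := hcon ε hε
      exact ⟨B, hB1, hB2, hB3, inter_singleton_eq_empty.2 hB4⟩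
    obtain ⟨ε, hε, hεP⟩ := hsh
    obtain ⟨α, ⟨hαc, hαconn, hαmono⟩, hα0, hα1, hαA⟩ := hOA a ha
    obtain ⟨β, ⟨hβc, hβconn, hβmono⟩, hβ0, hβ1, hβA⟩ := hOA b hb
    obtain ⟨t, ht1, htd⟩ := DCNB.exists_lt_one_close α hαc hα1 hε
    obtain ⟨s, hs1, hsd⟩ := DCNB.exists_lt_one_close β hβc hβ1 hε
    have hpα : p ∈ (α t : Set X) := hεP _ (α t).isCompact (hαconn t) htd
    have hpβ : p ∈ (β s : Set X) := hεP _ (β s).isCompact (hβconn s) hsd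
    have hsubα : (α t : Set X) ⊆ Aᶜ := by
      intro q hq hqA
      exact (eq_empty_iff_forall_notMem.1 (hαA t ht1)) q ⟨hq, hqA⟩
    have hsubβ : (β s : Set X) ⊆ Aᶜ := by
      intro q hq hqA
      exact (eq_empty_iff_forall_notMem.1 (hβA s hs1)) q ⟨hq, hqA⟩
    have h0t : ∀ u : unitInterval, (0:unitInterval) ≤ u := by
      intro u
      rw [← Subtype.coe_le_coe]
      exact u.2.1
    have haK : a ∈ (α t : Set X) := by
      rcases eq_or_lt_of_le (h0t t) with he | hlt
      · rw [← he, hα0]; exact mem_singleton a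
      · exact (hαmono 0 t hlt).1 (by rw [hα0]; exact mem_singleton a)
    have hbK : b ∈ (β s : Set X) := by
      rcases eq_or_lt_of_le (h0t s) with he | hlt
      · rw [← he, hβ0]; exact mem_singleton b
      · exact (hβmono 0 s hlt).1 (by rw [hβ0]; exact mem_singleton b)
    set K : Set X := (α t : Set X) ∪ (β s : Set X) with hKdef
    have hKc : IsCompact K := (α t).isCompact.union (β s).isCompact
    have hKconn : IsConnected K := (hαconn t).union ⟨p, hpα, hpβ⟩ (hβconn s)
    have hKA : K ⊆ Aᶜ := union_subset hsubα hsubβ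
    have haK' : a ∈ K := Or.inl haK
    have hbK' : b ∈ K := Or.inr hbK
    obtain (he | ⟨f, hfc, hfi, hf0, hf1, hfm⟩) := hX.1 a (mem_univ a) b (mem_univ b)
    · exact absurd he hab
    have hrc : IsCompact (range f) := isCompact_range hfc
    have hrconn : IsConnected (range f) := isConnected_range hfc
    have hUni : IsUnicoherent (K ∪ range f) :=
      hX.2 _ (hKc.union hrc) (hKconn.union ⟨a, haK', ⟨0, hf0⟩⟩ hrconn)
    have hC : IsConnected (K ∩ range f) := hUni K (range f) hKc hKconn hrc hrconn rfl
    have hall : ∀ τ : unitInterval, f τ ∈ K := by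
      by_contra hcon
      push_neg at hcon
      obtain ⟨τ0, hτ0⟩ := hcon
      set U : Set X := f '' ((fun τ : unitInterval => (τ:ℝ)) ⁻¹' Iic (τ0:ℝ)) with hU
      set V : Set X := f '' ((fun τ : unitInterval => (τ:ℝ)) ⁻¹' Ici (τ0:ℝ)) with hV
      have hUcl : IsClosed U :=
        (((isClosed_Iic.preimage continuous_subtype_val).isCompact).image hfc).isClosed
      have hVcl : IsClosed V :=
        (((isClosed_Ici.preimage continuous_subtype_val).isCompact).image hfc).isClosed
      have hcover : K ∩ range f ⊆ U ∪ V := by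
        rintro q ⟨hqK, ⟨τ, rfl⟩⟩
        rcases le_total (τ:ℝ) (τ0:ℝ) with h | h
        · exact Or.inl ⟨τ, h, rfl⟩
        · exact Or.inr ⟨τ, h, rfl⟩
      have hne1 : (K ∩ range f ∩ U).Nonempty :=
        ⟨a, ⟨haK', ⟨0, hf0⟩⟩, ⟨0, (τ0.2.1 : ((0:unitInterval):ℝ) ≤ (τ0:ℝ)), hf0⟩⟩
      have hne2 : (K ∩ range f ∩ V).Nonempty :=
        ⟨b, ⟨hbK', ⟨1, hf1⟩⟩, ⟨1, (τ0.2.2 : (τ0:ℝ) ≤ ((1:unitInterval):ℝ)), hf1⟩⟩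
      obtain ⟨q, hqC, hqU, hqV⟩ :=
        isPreconnected_closed_iff.1 hC.isPreconnected U V hUcl hVcl hcover hne1 hne2
      obtain ⟨τ1, hτ1, he1⟩ := hqU
      obtain ⟨τ2, hτ2, he2⟩ := hqV
      have he3 : τ1 = τ2 := hfi (he1.trans he2.symm)
      have hττ : (τ1:ℝ) = (τ0:ℝ) := le_antisymm hτ1 (by rw [he3]; exact hτ2)
      have he4 : τ1 = τ0 := Subtype.ext hττ
      apply hτ0
      rw [← he4, he1]
      exact hqC.1
    exact Or.inr ⟨f, hfc, hfi, hf0, hf1, fun τ => hKA (hall τ)⟩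
  · rintro ⟨hint, harc⟩
    have hd : Dense Aᶜ := interior_eq_empty_iff_dense_compl.1 hint
    have hAuniv : A ≠ univ := by
      intro he
      rw [he, interior_univ] at hint
      exact univ_nonempty.ne_empty hint
    refine ⟨hAc.isClosed, hAconn.nonempty, hAuniv, ?_⟩
    intro x hx
    obtain ⟨α, hoa, h0, h1, hA⟩ := DCNB.exists_orderArc hAconn.nonempty hd harc hx
    exact ⟨α, hoa, h0, h1, hA⟩
end

section
/- If X is a dendroid possessing a strong center and A is a subcontinuum of X, then A is a connected nonblocker of singletons if and only if A has empty interior and X − A is arcwise connected. -/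
open Set Metric TopologicalSpace unitInterval

variable {X : Type*} [MetricSpace X] [CompactSpace X] [ConnectedSpace X] [Nonempty X]

section AuxLemmas

variable {X : Type*} [MetricSpace X] [CompactSpace X] [ConnectedSpace X] [Nonempty X]

/-- Every subcontinuum of a dendroid is arcwise connected. -/
lemma subcont_arc (hX : IsDendroid X) {K : Set X} (hKc : IsCompact K)
    (hKconn : IsConnected K) {a b : X} (ha : a ∈ K) (hb : b ∈ K) : ArcIn K a b := by
  rcases eq_or_ne a b with h | hab
  · exact Or.inl h
  rcases hX.1 a (mem_univ a) b (mem_univ b) with h | ⟨f, hf, hinj, h0, h1, -⟩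
  · exact absurd h hab
  have hRc : IsCompact (range f) := isCompact_range hf
  have hRconn : IsConnected (range f) := isConnected_range hf
  have hU : IsConnected (K ∪ range f) :=
    IsConnected.union ⟨a, ha, h0 ▸ mem_range_self 0⟩ hKconn hRconn
  have huni := hX.2 (K ∪ range f) (hKc.union hRc) hU
  have hint : IsConnected (K ∩ range f) := huni K (range f) hKc hKconn hRc hRconn rfl
  have hemb : Topology.IsInducing f := (hf.isClosedEmbedding hinj).toIsInducing
  have hTpre : IsPreconnected (f ⁻¹' K) := by
    rw [← hemb.isPreconnected_image, image_preimage_eq_inter_range]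
    exact hint.isPreconnected
  have hT0 : (0 : unitInterval) ∈ f ⁻¹' K := by simp [mem_preimage, h0, ha]
  have hT1 : (1 : unitInterval) ∈ f ⁻¹' K := by simp [mem_preimage, h1, hb]
  have hall : ∀ t, f t ∈ K := by
    intro t
    exact (hTpre.Icc_subset hT0 hT1) ⟨t.2.1, t.2.2⟩
  exact Or.inr ⟨f, hf, hinj, h0, h1, hall⟩

omit [ConnectedSpace X] [Nonempty X] in
/-- Close to time 1, an order arc ending at `univ` is ε-dense. -/
lemma orderArc_dense {α : unitInterval → NonemptyCompacts X} (hα : IsOrderArc α)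
    (h1 : (α 1 : Set X) = univ) {ε : ℝ} (hε : 0 < ε) :
    ∃ t : unitInterval, t < 1 ∧ ∀ z : X, ∃ w ∈ (α t : Set X), dist z w < ε := by
  have hc : ContinuousAt α 1 := hα.1.continuousAt
  rw [Metric.continuousAt_iff] at hc
  obtain ⟨δ, hδ, hd⟩ := hc ε hε
  set t : unitInterval := ⟨max 0 (1 - δ/2), le_max_left _ _, by
    apply max_le zero_le_one; linarith⟩ with ht
  have htlt : t < 1 := by
    rw [← Subtype.coe_lt_coe]
    show max 0 (1 - δ/2) < 1
    apply max_lt one_pos; linarith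
  refine ⟨t, htlt, fun z => ?_⟩
  have hdist : dist t 1 < δ := by
    rw [Subtype.dist_eq]
    show |max 0 (1 - δ/2) - 1| < δ
    rw [abs_lt]
    constructor
    · have : (1:ℝ) - δ/2 ≤ max 0 (1 - δ/2) := le_max_right _ _
      linarith
    · have h01 : max 0 (1 - δ/2) < 1 := by apply max_lt one_pos; linarith
      linarith
  have hdd := hd hdist
  have hH : hausdorffDist (α 1 : Set X) (α t : Set X) < ε := by
    rw [hausdorffDist_comm]
    exact hdd
  have hz : z ∈ (α 1 : Set X) := h1 ▸ mem_univ z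
  refine exists_dist_lt_of_hausdorffDist_lt hz hH ?_
  exact hausdorffEdist_ne_top_of_nonempty_of_bounded (α 1).nonempty (α t).nonempty
    (α 1).isCompact.isBounded (α t).isCompact.isBounded

/-- A strong center belongs to some element of every order arc ending at `univ`. -/
lemma center_mem (hX : IsDendroid X) {p : X} (hp : IsStrongCenter p)
    (hnt : ∃ u v : X, u ≠ v)
    {α : unitInterval → NonemptyCompacts X} (hα : IsOrderArc α)
    (h1 : (α 1 : Set X) = univ) : ∃ t : unitInterval, t < 1 ∧ p ∈ (α t : Set X) := by
  obtain ⟨U, V, hUo, hVo, hUne, hVne, hsc⟩ := hp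
  have huv : ∃ u ∈ U, ∃ v ∈ V, u ≠ v := by
    by_contra h
    push_neg at h
    obtain ⟨u₀, hu₀⟩ := hUne
    obtain ⟨v₀, hv₀⟩ := hVne
    have hUeq : U = {u₀} := by
      apply Subset.antisymm
      · intro u hu
        have he1 := h u hu v₀ hv₀
        have he2 := h u₀ hu₀ v₀ hv₀
        simp [he1, he2.symm]
      · simpa using hu₀
    have : IsClopen ({u₀} : Set X) := ⟨isClosed_singleton, hUeq ▸ hUo⟩
    rcases isClopen_iff.1 this with h' | h'
    · exact absurd h' (singleton_ne_empty u₀)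
    · obtain ⟨a, b, hab⟩ := hnt
      have ha : a ∈ ({u₀} : Set X) := h' ▸ mem_univ a
      have hb : b ∈ ({u₀} : Set X) := h' ▸ mem_univ b
      exact hab ((mem_singleton_iff.1 ha).trans (mem_singleton_iff.1 hb).symm)
  obtain ⟨u, hu, v, hv, huv⟩ := huv
  obtain ⟨ru, hru, hbu⟩ := Metric.isOpen_iff.1 hUo u hu
  obtain ⟨rv, hrv, hbv⟩ := Metric.isOpen_iff.1 hVo v hv
  have hd : 0 < dist u v := dist_pos.2 huv
  set ε := min (min ru rv) (dist u v / 2) with hε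
  have hεpos : 0 < ε := lt_min (lt_min hru hrv) (by linarith)
  obtain ⟨t, htlt, hdense⟩ := orderArc_dense hα h1 hεpos
  obtain ⟨a, haα, hau⟩ := hdense u
  obtain ⟨b, hbα, hbv'⟩ := hdense v
  have haU : a ∈ U := hbu (by
    rw [mem_ball, dist_comm]
    exact lt_of_lt_of_le hau (le_trans (min_le_left _ _) (min_le_left _ _)))
  have hbV : b ∈ V := hbv (by
    rw [mem_ball, dist_comm]
    exact lt_of_lt_of_le hbv' (le_trans (min_le_left _ _) (min_le_right _ _)))
  have hab : a ≠ b := by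
    intro h
    subst h
    have h1' : dist u v ≤ dist u a + dist a v := dist_triangle _ _ _
    have h2' : dist a v = dist v a := dist_comm _ _
    have h3' : ε ≤ dist u v / 2 := min_le_right _ _
    rw [h2'] at h1'
    linarith
  rcases subcont_arc hX (α t).isCompact (hα.2.1 t) haα hbα with h | ⟨f, hf, hfi, hf0, hf1, hfm⟩
  · exact absurd h hab
  obtain ⟨s, hs⟩ := hsc f hf hfi (hf0 ▸ haU) (hf1 ▸ hbV)
  exact ⟨t, htlt, hs ▸ hfm s⟩

/-- Forward direction. -/
lemma forward_dir (hX : IsDendroid X) (hsc : ∃ p : X, IsStrongCenter p) {A : Set X}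
    (hNB : IsNonBlocker A) : interior A = ∅ ∧ IsArcwiseConnected Aᶜ := by
  obtain ⟨hAcl, hAne, hAuniv, hblock⟩ := hNB
  obtain ⟨x₀, hx₀⟩ := (Set.ne_univ_iff_exists_notMem A).1 hAuniv
  obtain ⟨a₀, ha₀⟩ := hAne
  have hnt : ∃ u v : X, u ≠ v := ⟨a₀, x₀, fun h => hx₀ (h ▸ ha₀)⟩
  constructor
  · by_contra h
    obtain ⟨z, hz⟩ := nonempty_iff_ne_empty.2 h
    obtain ⟨ε, hε, hball⟩ := Metric.isOpen_iff.1 isOpen_interior z hz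
    obtain ⟨α, hα, hα0, hα1, hαA⟩ := hblock x₀ hx₀
    obtain ⟨t, htlt, hdense⟩ := orderArc_dense hα hα1 hε
    obtain ⟨w, hw, hwd⟩ := hdense z
    have hwA : w ∈ A := interior_subset (hball (by rwa [mem_ball, dist_comm]))
    have : w ∈ (α t : Set X) ∩ A := ⟨hw, hwA⟩
    rw [hαA t htlt] at this
    exact this
  · intro x hx y hy
    rcases eq_or_ne x y with h | hxy
    · exact Or.inl h
    obtain ⟨p, hp⟩ := hsc
    obtain ⟨α, hα, hα0, hα1, hαA⟩ := hblock x hx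
    obtain ⟨β, hβ, hβ0, hβ1, hβA⟩ := hblock y hy
    obtain ⟨t₁, ht₁, hpα⟩ := center_mem hX hp hnt hα hα1
    obtain ⟨t₂, ht₂, hpβ⟩ := center_mem hX hp hnt hβ hβ1
    have hxα : x ∈ (α t₁ : Set X) := by
      rcases eq_or_lt_of_le (nonneg' : (0:unitInterval) ≤ t₁) with h | h
      · rw [← h, hα0]; exact mem_singleton x
      · exact (hα.2.2 0 t₁ h).1 (hα0 ▸ mem_singleton x)
    have hyβ : y ∈ (β t₂ : Set X) := by
      rcases eq_or_lt_of_le (nonneg' : (0:unitInterval) ≤ t₂) with h | h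
      · rw [← h, hβ0]; exact mem_singleton y
      · exact (hβ.2.2 0 t₂ h).1 (hβ0 ▸ mem_singleton y)
    set K : Set X := (α t₁ : Set X) ∪ (β t₂ : Set X) with hK
    have hKc : IsCompact K := (α t₁).isCompact.union (β t₂).isCompact
    have hKconn : IsConnected K := IsConnected.union ⟨p, hpα, hpβ⟩ (hα.2.1 t₁) (hβ.2.1 t₂)
    have hKA : K ⊆ Aᶜ := by
      have e1 := hαA t₁ ht₁
      have e2 := hβA t₂ ht₂
      rw [eq_empty_iff_forall_notMem] at e1 e2
      rintro z (hz | hz) hzA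
      · exact e1 z ⟨hz, hzA⟩
      · exact e2 z ⟨hz, hzA⟩
    rcases subcont_arc hX hKc hKconn (Or.inl hxα) (Or.inr hyβ) with h | ⟨f, hf, hfi, hf0, hf1, hfm⟩
    · exact Or.inl h
    · exact Or.inr ⟨f, hf, hfi, hf0, hf1, fun t => hKA (hfm t)⟩

/-- A Whitney-type strictly antitone functional on closed subsets. -/
noncomputable def muF {X : Type*} [MetricSpace X] (y : ℕ → X) (S : Set X) : ℝ :=
  ∑' n, (1/2:ℝ)^n * min 1 (infDist (y n) S)

omit [CompactSpace X] [ConnectedSpace X] [Nonempty X] in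
lemma muF_summable (y : ℕ → X) (S : Set X) :
    Summable (fun n => (1/2:ℝ)^n * min 1 (infDist (y n) S)) := by
  apply Summable.of_nonneg_of_le (fun n => ?_) (fun n => ?_) summable_geometric_two
  · exact mul_nonneg (by positivity) (le_min zero_le_one infDist_nonneg)
  · calc (1/2:ℝ)^n * min 1 (infDist (y n) S) ≤ (1/2:ℝ)^n * 1 := by
          apply mul_le_mul_of_nonneg_left (min_le_left _ _) (by positivity)
        _ = (1/2:ℝ)^n := mul_one _

omit [CompactSpace X] [ConnectedSpace X] [Nonempty X] in
lemma muF_anti (y : ℕ → X) {S T : Set X} (hST : S ⊆ T) (hSn : S.Nonempty) :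
    muF y T ≤ muF y S := by
  apply Summable.tsum_le_tsum _ (muF_summable y T) (muF_summable y S)
  intro n
  exact mul_le_mul_of_nonneg_left
    (min_le_min le_rfl (infDist_le_infDist_of_subset hST hSn)) (by positivity)

omit [CompactSpace X] [ConnectedSpace X] [Nonempty X] in
lemma muF_strict (y : ℕ → X) (hy : DenseRange y) {S T : Set X} (hScl : IsClosed S)
    (hSn : S.Nonempty) (hST : S ⊆ T) (hne : S ≠ T) : muF y T < muF y S := by
  obtain ⟨p, hpT, hpS⟩ : ∃ p, p ∈ T ∧ p ∉ S := by
    by_contra h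
    push_neg at h
    exact hne (Subset.antisymm hST (fun z hz => h z hz))
  have hr : 0 < infDist p S := (hScl.notMem_iff_infDist_pos hSn).1 hpS
  set ρ := min (infDist p S) 1 with hρ
  have hρpos : 0 < ρ := lt_min hr one_pos
  have hρle : ρ ≤ 1 := min_le_right _ _
  obtain ⟨n, hn⟩ := Metric.denseRange_iff.1 hy p (ρ/4) (by linarith)
  apply Summable.tsum_lt_tsum (i := n) _ _ (muF_summable y T) (muF_summable y S)
  · intro m
    exact mul_le_mul_of_nonneg_left
      (min_le_min le_rfl (infDist_le_infDist_of_subset hST hSn)) (by positivity)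
  · apply mul_lt_mul_of_pos_left _ (by positivity)
    have h1 : min 1 (infDist (y n) T) ≤ ρ/4 := by
      apply min_le_of_right_le
      calc infDist (y n) T ≤ dist (y n) p := infDist_le_dist_of_mem hpT
        _ = dist p (y n) := dist_comm _ _
        _ ≤ ρ/4 := hn.le
    have h2 : 3*ρ/4 ≤ min 1 (infDist (y n) S) := by
      apply le_min (by linarith)
      have h4 := infDist_le_infDist_add_dist (x := p) (y := y n) (s := S)
      have h3 : ρ ≤ infDist p S := min_le_left _ _
      linarith
    linarith

omit [CompactSpace X] [ConnectedSpace X] [Nonempty X] in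
lemma muF_le_add (y : ℕ → X) {S T : Set X} (hSn : S.Nonempty) (hTn : T.Nonempty)
    (hSb : Bornology.IsBounded S) (hTb : Bornology.IsBounded T) :
    muF y S ≤ muF y T + 2 * hausdorffDist S T := by
  have hedist : EMetric.hausdorffEdist T S ≠ ⊤ :=
    hausdorffEdist_ne_top_of_nonempty_of_bounded hTn hSn hTb hSb
  have hd0 : 0 ≤ hausdorffDist S T := hausdorffDist_nonneg
  have key : ∀ n, (1/2:ℝ)^n * min 1 (infDist (y n) S) ≤
      (1/2:ℝ)^n * min 1 (infDist (y n) T) + (1/2:ℝ)^n * hausdorffDist S T := by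
    intro n
    rw [← mul_add]
    apply mul_le_mul_of_nonneg_left _ (by positivity)
    have h1 : infDist (y n) S ≤ infDist (y n) T + hausdorffDist S T := by
      have h2 := infDist_le_infDist_add_hausdorffDist (x := y n) (s := T) (t := S) hedist
      rwa [hausdorffDist_comm] at h2
    calc min 1 (infDist (y n) S) ≤ min 1 (infDist (y n) T + hausdorffDist S T) :=
          min_le_min le_rfl h1
      _ ≤ min 1 (infDist (y n) T) + hausdorffDist S T := by
          rcases le_total (1:ℝ) (infDist (y n) T) with h | h
          · rw [min_eq_left h]
            exact (min_le_left _ _).trans (by linarith)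
          · rw [min_eq_right h]
            exact min_le_right _ _
  have hsum2 : Summable (fun n => (1/2:ℝ)^n * hausdorffDist S T) :=
    summable_geometric_two.mul_right _
  calc muF y S ≤ ∑' n, ((1/2:ℝ)^n * min 1 (infDist (y n) T) + (1/2:ℝ)^n * hausdorffDist S T) :=
        Summable.tsum_le_tsum key (muF_summable y S) ((muF_summable y T).add hsum2)
    _ = muF y T + (∑' n, (1/2:ℝ)^n) * hausdorffDist S T := by
        rw [Summable.tsum_add (muF_summable y T) hsum2, tsum_mul_right]
        rfl
    _ = muF y T + 2 * hausdorffDist S T := by rw [tsum_geometric_two]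

omit [ConnectedSpace X] [Nonempty X] in
lemma muF_continuous (y : ℕ → X) :
    Continuous (fun a : NonemptyCompacts X => muF y (a : Set X)) := by
  rw [Metric.continuous_iff]
  intro b ε hε
  refine ⟨ε/3, by linarith, fun a hab => ?_⟩
  have h1 := muF_le_add y a.nonempty b.nonempty a.isCompact.isBounded b.isCompact.isBounded
  have h2 := muF_le_add y b.nonempty a.nonempty b.isCompact.isBounded a.isCompact.isBounded
  have hd : hausdorffDist (a : Set X) (b : Set X) = dist a b := rfl
  have hd' : hausdorffDist (b : Set X) (a : Set X) = dist a b := by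
    rw [hausdorffDist_comm]; rfl
  rw [Real.dist_eq, abs_lt]
  rw [hd] at h1
  rw [hd'] at h2
  constructor <;> nlinarith [dist_nonneg (x := a) (y := b)]

noncomputable def clk (n : ℕ) (t : unitInterval) : ℝ :=
  max 0 (min 1 ((2:ℝ)^(n+1) * ((t:ℝ) - 1) + 2))

lemma clk_mem (n : ℕ) (t : unitInterval) : clk n t ∈ Icc (0:ℝ) 1 :=
  ⟨le_max_left _ _, max_le zero_le_one (min_le_left _ _)⟩

lemma clk_mono (n : ℕ) {t t' : unitInterval} (h : t ≤ t') : clk n t ≤ clk n t' := by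
  apply max_le_max le_rfl
  apply min_le_min le_rfl
  have : (t:ℝ) ≤ (t':ℝ) := h
  nlinarith [pow_pos (by norm_num : (0:ℝ) < 2) (n+1)]

lemma clk_zero (n : ℕ) {t : unitInterval} (h : (t:ℝ) ≤ 1 - ((2:ℝ)^n)⁻¹) : clk n t = 0 := by
  have h2 : (0:ℝ) < 2^n := by positivity
  have key : (2:ℝ)^(n+1) * ((t:ℝ) - 1) + 2 ≤ 0 := by
    have : (2:ℝ)^(n+1) = 2 * 2^n := by ring
    rw [this]
    have h3 : ((t:ℝ) - 1) ≤ -((2:ℝ)^n)⁻¹ := by linarith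
    have h4 : 2 * (2:ℝ)^n * ((t:ℝ) - 1) ≤ 2 * (2:ℝ)^n * (-((2:ℝ)^n)⁻¹) := by
      apply mul_le_mul_of_nonneg_left h3 (by positivity)
    have h5 : 2 * (2:ℝ)^n * (-((2:ℝ)^n)⁻¹) = -2 := by
      field_simp
    linarith
  rw [clk, max_eq_left]
  exact le_trans (min_le_right _ _) key

lemma clk_one (n : ℕ) {t : unitInterval} (h : 1 - ((2:ℝ)^(n+1))⁻¹ ≤ (t:ℝ)) : clk n t = 1 := by
  have h2 : (0:ℝ) < 2^(n+1) := by positivity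
  have key : (1:ℝ) ≤ (2:ℝ)^(n+1) * ((t:ℝ) - 1) + 2 := by
    have h3 : -((2:ℝ)^(n+1))⁻¹ ≤ ((t:ℝ) - 1) := by linarith
    have h4 : (2:ℝ)^(n+1) * (-((2:ℝ)^(n+1))⁻¹) ≤ 2^(n+1) * ((t:ℝ) - 1) := by
      apply mul_le_mul_of_nonneg_left h3 (by positivity)
    have h5 : (2:ℝ)^(n+1) * (-((2:ℝ)^(n+1))⁻¹) = -1 := by field_simp
    linarith
  rw [clk, min_eq_left key, max_eq_right zero_le_one]

lemma clk_zero' (n : ℕ) : clk n 0 = 0 := by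
  apply clk_zero
  show (0:ℝ) ≤ 1 - ((2:ℝ)^n)⁻¹
  have : ((2:ℝ)^n)⁻¹ ≤ 1 := by
    rw [inv_le_one_iff₀]
    right
    exact one_le_pow₀ (by norm_num)
  linarith

lemma clk_one' (n : ℕ) : clk n 1 = 1 := by
  apply clk_one
  show 1 - ((2:ℝ)^(n+1))⁻¹ ≤ (1:ℝ)
  have : (0:ℝ) < ((2:ℝ)^(n+1))⁻¹ := by positivity
  linarith

lemma clk_lip (n : ℕ) (t t' : unitInterval) :
    |clk n t - clk n t'| ≤ (2:ℝ)^(n+1) * |(t:ℝ) - (t':ℝ)| := by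
  have h1 := abs_max_sub_max_le_max (0:ℝ) (min 1 ((2:ℝ)^(n+1) * ((t:ℝ) - 1) + 2))
    0 (min 1 ((2:ℝ)^(n+1) * ((t':ℝ) - 1) + 2))
  have h2 := abs_min_sub_min_le_max (1:ℝ) ((2:ℝ)^(n+1) * ((t:ℝ) - 1) + 2)
    1 ((2:ℝ)^(n+1) * ((t':ℝ) - 1) + 2)
  simp only [sub_self, abs_zero] at h1 h2
  have h3 : ((2:ℝ)^(n+1) * ((t:ℝ) - 1) + 2) - ((2:ℝ)^(n+1) * ((t':ℝ) - 1) + 2)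
      = (2:ℝ)^(n+1) * ((t:ℝ) - (t':ℝ)) := by ring
  calc |clk n t - clk n t'| ≤ max 0 |min 1 ((2:ℝ)^(n+1) * ((t:ℝ) - 1) + 2) -
        min 1 ((2:ℝ)^(n+1) * ((t':ℝ) - 1) + 2)| := h1
    _ = |min 1 ((2:ℝ)^(n+1) * ((t:ℝ) - 1) + 2) -
        min 1 ((2:ℝ)^(n+1) * ((t':ℝ) - 1) + 2)| := max_eq_right (abs_nonneg _)
    _ ≤ max 0 |((2:ℝ)^(n+1) * ((t:ℝ) - 1) + 2) - ((2:ℝ)^(n+1) * ((t':ℝ) - 1) + 2)| := h2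
    _ = |((2:ℝ)^(n+1) * ((t:ℝ) - 1) + 2) - ((2:ℝ)^(n+1) * ((t':ℝ) - 1) + 2)| :=
        max_eq_right (abs_nonneg _)
    _ = (2:ℝ)^(n+1) * |(t:ℝ) - (t':ℝ)| := by
        rw [h3, abs_mul, abs_of_pos (by positivity : (0:ℝ) < (2:ℝ)^(n+1))]

noncomputable def clkI (n : ℕ) (t : unitInterval) : unitInterval := ⟨clk n t, clk_mem n t⟩

set_option maxHeartbeats 2000000 in
/-- Backward direction: construction of the order arc. -/
lemma backward_dir {A : Set X} (hAcl : IsClosed A) (hAne : A.Nonempty)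
    (hAint : interior A = ∅) (hAC : IsArcwiseConnected Aᶜ) : IsNonBlocker A := by
  have hAuniv : A ≠ univ := by
    intro h
    rw [h, interior_univ] at hAint
    exact (univ_nonempty (α := X)).ne_empty hAint
  refine ⟨hAcl, hAne, hAuniv, ?_⟩
  intro x hx
  obtain ⟨a₀, ha₀⟩ := hAne
  have hax : a₀ ≠ x := fun h => hx (h ▸ ha₀)
  -- Aᶜ is dense
  have hdense : closure (Aᶜ) = univ := by
    rw [closure_compl, hAint, compl_empty]
  -- countable dense sequence in Aᶜ
  obtain ⟨c, hcsub, hccount, hcdense⟩ :=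
    ((isSeparable_univ_iff.2 inferInstance).mono (subset_univ (Aᶜ))).exists_countable_dense_subset
  obtain ⟨y, hy⟩ := (hccount.insert x).exists_eq_range (insert_nonempty x c)
  have hyA : ∀ n, y n ∈ Aᶜ := by
    intro n
    have : y n ∈ insert x c := hy ▸ mem_range_self n
    rcases this with h | h
    · rw [h]; exact hx
    · exact hcsub h
  have hyd : DenseRange y := by
    rw [DenseRange, ← hy]
    have h1 : Aᶜ ⊆ closure (insert x c) :=
      hcdense.trans (closure_mono (subset_insert x c))
    have h2 : closure (Aᶜ) ⊆ closure (insert x c) := by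
      rw [← closure_closure (s := insert x c)]
      exact closure_mono h1
    rw [hdense] at h2
    exact dense_iff_closure_eq.2 (Subset.antisymm (subset_univ _) h2)
  -- paths from x to the dense points, inside Aᶜ
  have hpath : ∀ n, ∃ g : unitInterval → X, Continuous g ∧ g 0 = x ∧
      (∀ t, g t ∈ Aᶜ) ∧ y n ∈ range g := by
    intro n
    rcases hAC x hx (y n) (hyA n) with h | ⟨f, hf, -, h0, h1, hmem⟩
    · exact ⟨fun _ => x, continuous_const, rfl, fun _ => hx, ⟨0, h⟩⟩
    · exact ⟨f, hf, h0, hmem, ⟨1, h1⟩⟩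
  choose Γ0 hΓ0c hΓ00 hΓ0A hΓ0y using hpath
  -- reparametrized over ℝ
  set Γ : ℕ → ℝ → X := fun n r => Γ0 n (projIcc 0 1 zero_le_one r) with hΓdef
  have hΓc : ∀ n, Continuous (Γ n) := fun n => (hΓ0c n).comp continuous_projIcc
  have hΓ0 : ∀ n, Γ n 0 = x := by
    intro n
    show Γ0 n (projIcc 0 1 zero_le_one 0) = x
    simp [projIcc_left]
    exact hΓ00 n
  have hΓA : ∀ n r, Γ n r ∈ Aᶜ := fun n r => hΓ0A n _
  have hΓy : ∀ n, ∃ s : ℝ, s ∈ Icc (0:ℝ) 1 ∧ Γ n s = y n := by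
    intro n
    obtain ⟨s, hs⟩ := hΓ0y n
    refine ⟨(s:ℝ), s.2, ?_⟩
    show Γ0 n (projIcc 0 1 zero_le_one (s:ℝ)) = y n
    rw [projIcc_of_mem zero_le_one s.2]
    exact hs
  have hΓu : ∀ n, ∀ ε > (0:ℝ), ∃ δ > (0:ℝ), ∀ s s' : ℝ, |s - s'| < δ →
      dist (Γ n s) (Γ n s') < ε := by
    intro n ε hε
    have hu : UniformContinuous (Γ n) :=
      (CompactSpace.uniformContinuous_of_continuous (hΓ0c n)).comp
        (LipschitzWith.projIcc zero_le_one).uniformContinuous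
    obtain ⟨δ, hδ, h⟩ := Metric.uniformContinuous_iff.1 hu ε hε
    exact ⟨δ, hδ, fun s s' hss => h (by rwa [Real.dist_eq])⟩
  -- the growing family
  set U : unitInterval → Set X := fun t => ⋃ n, Γ n '' Icc (0:ℝ) (clk n t) with hUdef
  set K : unitInterval → Set X := fun t => closure (U t) with hKdef
  have hxU : ∀ t, x ∈ U t := by
    intro t
    exact mem_iUnion.2 ⟨0, ⟨0, ⟨le_refl _, (clk_mem 0 t).1⟩, hΓ0 0⟩⟩
  have hUsub : ∀ t, U t ⊆ Aᶜ := by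
    intro t z hz
    obtain ⟨n, s, -, rfl⟩ := mem_iUnion.1 hz
    exact hΓA n s
  have hUmono : ∀ {t t' : unitInterval}, t ≤ t' → U t ⊆ U t' := by
    intro t t' h
    exact iUnion_mono fun n => image_mono (Icc_subset_Icc le_rfl (clk_mono n h))
  have hUpre : ∀ t, IsPreconnected (U t) := by
    intro t
    apply isPreconnected_iUnion
    · exact ⟨x, mem_iInter.2 fun n => ⟨0, ⟨le_refl _, (clk_mem n t).1⟩, hΓ0 n⟩⟩
    · exact fun n => isPreconnected_Icc.image _ (hΓc n).continuousOn
  -- below the threshold 1 - 2⁻ᴺ, only finitely many paths are active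
  have hterm0 : ∀ n (t : unitInterval), clk n t = 0 → Γ n '' Icc (0:ℝ) (clk n t) = {x} := by
    intro n t h
    rw [h, Icc_self, image_singleton, hΓ0 n]
  have hUeq : ∀ (N : ℕ) (t : unitInterval), (t:ℝ) ≤ 1 - ((2:ℝ)^N)⁻¹ →
      U t = ⋃ n ∈ Finset.range (N+1), Γ n '' Icc (0:ℝ) (clk n t) := by
    intro N t ht
    apply Subset.antisymm
    · intro z hz
      obtain ⟨n, s, hs, rfl⟩ := mem_iUnion.1 hz
      rcases lt_or_ge n (N+1) with h | h
      · exact mem_biUnion (Finset.mem_range.2 h) ⟨s, hs, rfl⟩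
      · have hz0 : clk n t = 0 := by
          apply clk_zero
          have : ((2:ℝ)^n)⁻¹ ≤ ((2:ℝ)^N)⁻¹ := by
            apply inv_anti₀ (by positivity)
            exact pow_le_pow_right₀ (by norm_num) (by omega)
          linarith
        have : Γ n s = x := by
          have hmem : Γ n s ∈ Γ n '' Icc (0:ℝ) (clk n t) := ⟨s, hs, rfl⟩
          rw [hterm0 n t hz0] at hmem
          exact hmem
        rw [this]
        exact mem_biUnion (Finset.mem_range.2 (by omega)) ⟨0, ⟨le_refl _, (clk_mem 0 t).1⟩, hΓ0 0⟩
    · exact iUnion₂_subset fun n _ => subset_iUnion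
        (fun n => Γ n '' Icc (0:ℝ) (clk n t)) n
  have hUclosed : ∀ (t : unitInterval), (t:ℝ) < 1 → IsClosed (U t) := by
    intro t ht
    obtain ⟨N, hN⟩ : ∃ N : ℕ, ((2:ℝ)^N)⁻¹ < 1 - (t:ℝ) := by
      obtain ⟨N, hN⟩ := exists_pow_lt_of_lt_one (by linarith : (0:ℝ) < 1 - (t:ℝ))
        (by norm_num : (1/2:ℝ) < 1)
      exact ⟨N, by rwa [one_div, inv_pow] at hN⟩
    rw [hUeq N t (by linarith)]
    apply Set.Finite.isClosed_biUnion (Finset.finite_toSet _)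
    intro n _
    exact (isCompact_Icc.image (hΓc n)).isClosed
  have hKavoid : ∀ (t : unitInterval), t < 1 → K t ∩ A = ∅ := by
    intro t ht
    have ht' : (t:ℝ) < 1 := by
      rcases lt_or_eq_of_le t.2.2 with h | h
      · exact h
      · exact absurd (Subtype.ext h : t = 1) (ne_of_lt ht)
    have : K t = U t := (hUclosed t ht').closure_eq
    rw [this, eq_empty_iff_forall_notMem]
    exact fun z hz => (hUsub t hz.1) hz.2
  have hK0 : K 0 = {x} := by
    have : U 0 = {x} := by
      apply Subset.antisymm
      · intro z hz
        obtain ⟨n, s, hs, rfl⟩ := mem_iUnion.1 hz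
        have : Γ n '' Icc (0:ℝ) (clk n 0) = {x} := hterm0 n 0 (clk_zero' n)
        rw [← this]
        exact ⟨s, hs, rfl⟩
      · intro z hz
        rw [mem_singleton_iff.1 hz]
        exact hxU 0
    rw [hKdef]
    show closure (U 0) = {x}
    rw [this, closure_singleton]
  have hK1 : K 1 = univ := by
    apply Subset.antisymm (subset_univ _)
    have hry : range y ⊆ U 1 := by
      rintro z ⟨n, rfl⟩
      obtain ⟨s, hs, hsy⟩ := hΓy n
      refine mem_iUnion.2 ⟨n, s, ⟨hs.1, ?_⟩, hsy⟩
      rw [clk_one' n]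
      exact hs.2
    calc univ = closure (range y) := hyd.closure_range.symm
      _ ⊆ closure (U 1) := closure_mono hry
  have hKmono : ∀ {t t' : unitInterval}, t ≤ t' → K t ⊆ K t' :=
    fun h => closure_mono (hUmono h)
  have hKx : ∀ t, x ∈ K t := fun t => subset_closure (hxU t)
  have hKconn : ∀ t, IsConnected (K t) := fun t => ⟨⟨x, hKx t⟩, (hUpre t).closure⟩
  have hKcomp : ∀ t, IsCompact (K t) := fun t => isClosed_closure.isCompact
  -- bundle
  set β : unitInterval → NonemptyCompacts X :=
    fun t => ⟨⟨K t, hKcomp t⟩, ⟨x, hKx t⟩⟩ with hβdef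
  have hβcoe : ∀ t, (β t : Set X) = K t := fun t => rfl
  -- continuity of β
  have hdistβ : ∀ a b : unitInterval, dist (β a) (β b) = hausdorffDist (U a) (U b) := by
    intro a b
    show hausdorffDist (closure (U a)) (closure (U b)) = hausdorffDist (U a) (U b)
    rw [hausdorffDist_closure₁, hausdorffDist_closure₂]
  have hβcont : Continuous β := by
    rw [Metric.continuous_iff]
    intro t₀ ε hε
    rcases lt_or_eq_of_le t₀.2.2 with ht₀ | ht₀
    · -- t₀ < 1
      obtain ⟨N, hN⟩ : ∃ N : ℕ, ((2:ℝ)^N)⁻¹ < 1 - (t₀:ℝ) := by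
        obtain ⟨N, hN⟩ := exists_pow_lt_of_lt_one (by linarith : (0:ℝ) < 1 - (t₀:ℝ))
          (by norm_num : (1/2:ℝ) < 1)
        exact ⟨N, by rwa [one_div, inv_pow] at hN⟩
      set b : ℝ := 1 - ((2:ℝ)^N)⁻¹ with hbdef
      choose δf hδfpos hδf using fun n => hΓu n (ε/2) (half_pos hε)
      set δ₁ := (Finset.range (N+1)).inf' ⟨0, Finset.mem_range.2 (by omega)⟩ δf with hδ₁def
      have hδ₁pos : 0 < δ₁ := by
        rw [hδ₁def]
        exact (Finset.lt_inf'_iff _).2 fun i _ => hδfpos i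
      have hδ₁le : ∀ n ∈ Finset.range (N+1), δ₁ ≤ δf n := fun n hn => Finset.inf'_le _ hn
      -- key pairwise estimate
      have pair : ∀ s s' : unitInterval, s ≤ s' → (s':ℝ) ≤ b →
          |(s:ℝ) - (s':ℝ)| < δ₁ / 2^(N+1) → hausdorffDist (U s) (U s') ≤ ε/2 := by
        intro s s' hss hs'b hd
        apply hausdorffDist_le_of_mem_dist (r := ε/2) (half_pos hε).le
        · intro z hz
          exact ⟨z, hUmono hss hz, by rw [dist_self]; exact (half_pos hε).le⟩
        · intro z hz
          obtain ⟨n, w, hw, rfl⟩ := mem_iUnion.1 hz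
          rcases lt_or_ge n (N+1) with hn | hn
          · -- active path: move the endpoint
            set w₂ : ℝ := min w (clk n s) with hw₂def
            have hw₂mem : w₂ ∈ Icc (0:ℝ) (clk n s) :=
              ⟨le_min hw.1 (clk_mem n s).1, min_le_right _ _⟩
            refine ⟨Γ n w₂, mem_iUnion.2 ⟨n, w₂, hw₂mem, rfl⟩, ?_⟩
            have hdw : |w - w₂| < δf n := by
              have h1 : |w - w₂| ≤ clk n s' - clk n s := by
                rcases le_total w (clk n s) with h | h
                · rw [hw₂def, min_eq_left h, sub_self, abs_zero]
                  have := clk_mono n hss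
                  linarith
                · rw [hw₂def, min_eq_right h, abs_of_nonneg (by linarith)]
                  have := hw.2
                  linarith
              have h2 : clk n s' - clk n s ≤ (2:ℝ)^(n+1) * |(s:ℝ) - (s':ℝ)| := by
                have := clk_lip n s' s
                rw [abs_sub_comm ((s':ℝ)) ((s:ℝ))] at this
                calc clk n s' - clk n s ≤ |clk n s' - clk n s| := le_abs_self _
                  _ ≤ (2:ℝ)^(n+1) * |(s:ℝ) - (s':ℝ)| := this
              have h3 : (2:ℝ)^(n+1) * |(s:ℝ) - (s':ℝ)| < (2:ℝ)^(n+1) * (δ₁ / 2^(N+1)) :=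
                mul_lt_mul_of_pos_left hd (by positivity)
              have h4 : (2:ℝ)^(n+1) * (δ₁ / 2^(N+1)) ≤ δ₁ := by
                rw [mul_div_assoc']
                rw [div_le_iff₀ (by positivity : (0:ℝ) < 2^(N+1))]
                have : (2:ℝ)^(n+1) ≤ 2^(N+1) := pow_le_pow_right₀ (by norm_num) (by omega)
                nlinarith
              have h5 : δ₁ ≤ δf n := hδ₁le n (Finset.mem_range.2 hn)
              linarith
            exact (hδf n w w₂ hdw).le
          · -- inactive path: the point is x
            have hz0 : clk n s' = 0 := by
              apply clk_zero
              have h9 : ((2:ℝ)^n)⁻¹ ≤ ((2:ℝ)^N)⁻¹ := by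
                apply inv_anti₀ (by positivity)
                exact pow_le_pow_right₀ (by norm_num) (by omega)
              rw [hbdef] at hs'b
              linarith
            have hwx : Γ n w = x := by
              have hmem : Γ n w ∈ Γ n '' Icc (0:ℝ) (clk n s') := ⟨w, hw, rfl⟩
              rw [hterm0 n s' hz0] at hmem
              exact hmem
            exact ⟨x, hxU s, by rw [hwx, dist_self]; exact (half_pos hε).le⟩
      set δ : ℝ := min (b - (t₀:ℝ)) (δ₁ / 2^(N+1)) with hδdef
      have hδpos : 0 < δ := lt_min (by rw [hbdef]; linarith) (by positivity)
      refine ⟨δ, hδpos, fun t htd => ?_⟩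
      rw [Subtype.dist_eq, Real.dist_eq] at htd
      have htb : (t:ℝ) ≤ b := by
        have h1 : |(t:ℝ) - (t₀:ℝ)| < b - (t₀:ℝ) := lt_of_lt_of_le htd (min_le_left _ _)
        have := abs_lt.1 h1
        linarith
      have ht₀b : (t₀:ℝ) ≤ b := by rw [hbdef]; linarith
      have hdsmall : |(t:ℝ) - (t₀:ℝ)| < δ₁ / 2^(N+1) :=
        lt_of_lt_of_le htd (min_le_right _ _)
      rw [hdistβ]
      rcases le_total t t₀ with h | h
      · calc hausdorffDist (U t) (U t₀) ≤ ε/2 := pair t t₀ h ht₀b hdsmall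
          _ < ε := by linarith
      · rw [hausdorffDist_comm]
        calc hausdorffDist (U t₀) (U t) ≤ ε/2 := by
              apply pair t₀ t h htb
              rw [abs_sub_comm]
              exact hdsmall
          _ < ε := by linarith
    · -- t₀ = 1
      have ht₀1 : t₀ = 1 := Subtype.ext ht₀
      have hcover : (univ : Set X) ⊆ ⋃ n, ball (y n) (ε/2) := by
        intro z _
        obtain ⟨n, hn⟩ := Metric.denseRange_iff.1 hyd z (ε/2) (half_pos hε)
        exact mem_iUnion.2 ⟨n, by rwa [mem_ball]⟩
      obtain ⟨F, hF⟩ := isCompact_univ.elim_finite_subcover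
        (fun n => ball (y n) (ε/2)) (fun n => isOpen_ball) hcover
      set M := F.sup id with hMdef
      set δ : ℝ := ((2:ℝ)^(M+1))⁻¹ with hδdef
      refine ⟨δ, by positivity, fun t htd => ?_⟩
      rw [Subtype.dist_eq, ht₀1, Real.dist_eq] at htd
      have htlow : 1 - δ < (t:ℝ) := by
        have := abs_lt.1 htd
        have h1 : ((1:unitInterval):ℝ) = 1 := rfl
        rw [h1] at this
        linarith [this.1]
      have hyU : ∀ n ∈ F, y n ∈ U t := by
        intro n hn
        have hnM : n ≤ M := Finset.le_sup (f := id) hn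
        have hclk1 : clk n t = 1 := by
          apply clk_one
          have : ((2:ℝ)^(M+1))⁻¹ ≤ ((2:ℝ)^(n+1))⁻¹ := by
            apply inv_anti₀ (by positivity)
            exact pow_le_pow_right₀ (by norm_num) (by omega)
          linarith
        obtain ⟨s, hs, hsy⟩ := hΓy n
        refine mem_iUnion.2 ⟨n, s, ⟨hs.1, ?_⟩, hsy⟩
        rw [hclk1]
        exact hs.2
      rw [hdistβ, ht₀1]
      have hbound : hausdorffDist (U t) (U 1) ≤ ε/2 := by
        apply hausdorffDist_le_of_mem_dist (r := ε/2) (half_pos hε).le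
        · intro z hz
          exact ⟨z, hUmono (le_one t) hz, by rw [dist_self]; exact (half_pos hε).le⟩
        · intro z _
          have hzuniv : z ∈ ⋃ n ∈ F, ball (y n) (ε/2) := hF (mem_univ z)
          obtain ⟨n, hnF, hzn⟩ := mem_iUnion₂.1 hzuniv
          exact ⟨y n, hyU n hnF, (mem_ball.1 hzn).le⟩
      linarith
  -- reparametrization by the Whitney functional
  have hmuβ : Continuous (fun t => muF y (K t)) := by
    have h1 : Continuous (fun t => muF y ((β t : Set X))) := (muF_continuous y).comp hβcont
    have h2 : (fun t => muF y ((β t : Set X))) = (fun t => muF y (K t)) :=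
      funext fun t => congrArg (muF y) (hβcoe t)
    rwa [h2] at h1
  set M0 : ℝ := muF y (K 0) with hM0def
  set M1 : ℝ := muF y (K 1) with hM1def
  have hKcl : ∀ t, IsClosed (K t) := fun t => isClosed_closure
  have hK01 : K 0 ⊆ K 1 := hKmono (le_one 0)
  have hK0ne : (K 0) ≠ K 1 := by
    rw [hK0, hK1]
    intro h
    have hmem : a₀ ∈ ({x} : Set X) := h ▸ mem_univ a₀
    exact hax (mem_singleton_iff.1 hmem)
  have hD : M1 < M0 := muF_strict y hyd (hKcl 0) ⟨x, hKx 0⟩ hK01 hK0ne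
  set τ : unitInterval → ℝ := fun t => (M0 - muF y (K t)) / (M0 - M1) with hτdef
  have hτcont : Continuous τ := ((continuous_const.sub hmuβ).div_const _)
  have hτmono : ∀ {s t : unitInterval}, s ≤ t → τ s ≤ τ t := by
    intro s t h
    have hnum : M0 - muF y (K s) ≤ M0 - muF y (K t) := by
      have := muF_anti y (hKmono h) ⟨x, hKx s⟩
      linarith
    show (M0 - muF y (K s)) / (M0 - M1) ≤ (M0 - muF y (K t)) / (M0 - M1)
    rw [div_eq_mul_inv, div_eq_mul_inv]
    exact mul_le_mul_of_nonneg_right hnum (inv_nonneg.2 (by linarith))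
  have hτ0 : τ 0 = 0 := by
    show (M0 - muF y (K 0)) / (M0 - M1) = 0
    rw [hM0def, sub_self, zero_div]
  have hτ1 : τ 1 = 1 := by
    show (M0 - muF y (K 1)) / (M0 - M1) = 1
    rw [hM1def]
    exact div_self (by linarith)
  have hτmem : ∀ t, τ t ∈ Icc (0:ℝ) 1 := by
    intro t
    constructor
    · rw [← hτ0]
      exact hτmono (nonneg' : 0 ≤ t)
    · rw [← hτ1]
      exact hτmono (le_one t)
  have hW : ∀ {s t : unitInterval}, τ s = τ t → K s = K t := by
    have key : ∀ s t : unitInterval, s ≤ t → τ s = τ t → K s = K t := by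
      intro s t h heq
      by_contra hne
      have hstrict : muF y (K t) < muF y (K s) :=
        muF_strict y hyd (hKcl s) ⟨x, hKx s⟩ (hKmono h) hne
      have hlt : τ s < τ t := by
        show (M0 - muF y (K s)) / (M0 - M1) < (M0 - muF y (K t)) / (M0 - M1)
        rw [div_eq_mul_inv, div_eq_mul_inv]
        exact mul_lt_mul_of_pos_right (by linarith) (inv_pos.2 (by linarith))
      rw [heq] at hlt
      exact lt_irrefl _ hlt
    intro s t heq
    rcases le_total s t with h | h
    · exact key s t h heq
    · exact (key t s h heq.symm).symm
  have hsurj : ∀ r : unitInterval, ∃ t : unitInterval, τ t = (r:ℝ) := by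
    intro r
    have himg : Icc (0:ℝ) 1 ⊆ τ '' univ := by
      apply IsPreconnected.Icc_subset (isPreconnected_univ.image τ hτcont.continuousOn)
      · exact ⟨0, mem_univ _, hτ0⟩
      · exact ⟨1, mem_univ _, hτ1⟩
    obtain ⟨t, -, ht⟩ := himg r.2
    exact ⟨t, ht⟩
  choose sg hσ using hsurj
  set α : unitInterval → NonemptyCompacts X := fun r => β (sg r) with hαdef
  have hαcoe : ∀ r, (α r : Set X) = K (sg r) := fun r => rfl
  -- continuity of α by a subsequence argument
  have hαcont : Continuous α := by
    rw [continuous_iff_seqContinuous]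
    intro u r hu
    apply Filter.tendsto_of_subseq_tendsto
    intro ns hns
    obtain ⟨sl, -, φ, hφmono, hφconv⟩ := isCompact_univ.tendsto_subseq
      (x := fun k => sg (u (ns k))) (fun k => mem_univ _)
    refine ⟨φ, ?_⟩
    have hlim1 : Filter.Tendsto (fun k => β (sg (u (ns (φ k))))) Filter.atTop (nhds (β sl)) :=
      (hβcont.tendsto _).comp hφconv
    have hτsl : τ sl = (r:ℝ) := by
      have l1 : Filter.Tendsto (fun k => τ (sg (u (ns (φ k))))) Filter.atTop (nhds (τ sl)) :=
        (hτcont.tendsto _).comp hφconv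
      have l2 : (fun k => τ (sg (u (ns (φ k))))) = fun k => ((u (ns (φ k)) : ℝ)) := by
        funext k
        exact hσ _
      rw [l2] at l1
      have l3 : Filter.Tendsto (fun k => ((u (ns (φ k)) : ℝ))) Filter.atTop (nhds (r:ℝ)) :=
        (continuous_subtype_val.tendsto r).comp (hu.comp (hns.comp hφmono.tendsto_atTop))
      exact tendsto_nhds_unique l1 l3
    have hKeq : β sl = α r := by
      apply NonemptyCompacts.ext
      show K sl = K (sg r)
      exact hW (by rw [hτsl, hσ r])
    rw [← hKeq]
    exact hlim1
  -- strict monotonicity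
  have hαstrict : ∀ s t : unitInterval, s < t → (α s : Set X) ⊂ (α t : Set X) := by
    intro s t hst
    have hσlt : sg s < sg t := by
      rcases lt_or_ge (sg s) (sg t) with h | h
      · exact h
      · exfalso
        have : τ (sg t) ≤ τ (sg s) := hτmono h
        rw [hσ s, hσ t] at this
        have : (t:ℝ) ≤ (s:ℝ) := this
        exact absurd (Subtype.coe_le_coe.1 this) (not_le_of_gt hst)
    rw [hαcoe, hαcoe]
    refine (hKmono hσlt.le).ssubset_of_ne ?_
    intro heq
    have : τ (sg s) = τ (sg t) := by
      show (M0 - muF y (K (sg s))) / (M0 - M1) = (M0 - muF y (K (sg t))) / (M0 - M1)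
      rw [heq]
    rw [hσ s, hσ t] at this
    exact absurd (Subtype.ext this : s = t) (ne_of_lt hst)
  -- endpoints
  have hα0 : (α 0 : Set X) = {x} := by
    rw [hαcoe]
    have : K (sg 0) = K 0 := hW (by rw [hσ 0, hτ0]; rfl)
    rw [this, hK0]
  have hα1 : (α 1 : Set X) = univ := by
    rw [hαcoe]
    have : K (sg 1) = K 1 := hW (by rw [hσ 1, hτ1]; rfl)
    rw [this, hK1]
  have hαavoid : ∀ t : unitInterval, t < 1 → (α t : Set X) ∩ A = ∅ := by
    intro t ht
    have hσne : sg t ≠ 1 := by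
      intro h
      have := hσ t
      rw [h, hτ1] at this
      exact absurd (Subtype.ext this.symm : t = 1) (ne_of_lt ht)
    have hσlt : sg t < 1 := lt_of_le_of_ne (le_one _) hσne
    rw [hαcoe]
    exact hKavoid (sg t) hσlt
  exact ⟨α, ⟨hαcont, fun t => hKconn (sg t), hαstrict⟩, hα0, hα1, hαavoid⟩


end AuxLemmas

theorem dendroid_strong_center_connected_nonblocker_iff (hX : IsDendroid X)
    (hsc : ∃ p : X, IsStrongCenter p) (A : Set X)
    (hAc : IsCompact A) (hAconn : IsConnected A) :
    IsNonBlocker A ↔ interior A = ∅ ∧ IsArcwiseConnected Aᶜ := by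
  constructor
  · exact fun h => forward_dir hX hsc h
  · rintro ⟨h1, h2⟩
    exact backward_dir hAc.isClosed hAconn.nonempty h1 h2
end

section
/- Let X be a continuum such that B(x) = π(x) for every x ∈ X and Λ_X = {π(x) : x ∈ X} is a decomposition of X. Then each element of Λ_X is a terminal subcontinuum of X: if A is a subcontinuum with A ∩ π(x) ≠ ∅, then A ⊆ π(x) or π(x) ⊆ A. -/
open Set Metric TopologicalSpace unitInterval

variable {X : Type*} [MetricSpace X] [CompactSpace X] [ConnectedSpace X] [Nonempty X]

section AuxHyperspace
set_option linter.unusedSectionVars false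

variable {X : Type*} [MetricSpace X] [CompactSpace X]

lemma edist_ne_top' (s t : NonemptyCompacts X) : EMetric.hausdorffEdist (s : Set X) t ≠ ⊤ :=
  Metric.hausdorffEdist_ne_top_of_nonempty_of_bounded s.nonempty t.nonempty
    s.isCompact.isBounded t.isCompact.isBounded

lemma continuous_sup_const (A : NonemptyCompacts X) :
    Continuous fun S : NonemptyCompacts X => A ⊔ S := by
  apply LipschitzWith.continuous (K := 1)
  apply LipschitzWith.of_edist_le
  intro S T
  show EMetric.hausdorffEdist (↑(A ⊔ S) : Set X) ↑(A ⊔ T) ≤ EMetric.hausdorffEdist (S : Set X) T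
  rw [NonemptyCompacts.coe_sup, NonemptyCompacts.coe_sup]
  apply EMetric.hausdorffEdist_le_of_infEdist
  · rintro x (hx | hx)
    · simp [EMetric.infEdist_union, EMetric.infEdist_zero_of_mem hx]
    · calc EMetric.infEdist x (↑A ∪ ↑T) ≤ EMetric.infEdist x (T : Set X) := by
            exact EMetric.infEdist_anti subset_union_right
        _ ≤ _ := EMetric.infEdist_le_hausdorffEdist_of_mem hx
  · rintro x (hx | hx)
    · simp [EMetric.infEdist_union, EMetric.infEdist_zero_of_mem hx]
    · calc EMetric.infEdist x (↑A ∪ ↑S) ≤ EMetric.infEdist x (S : Set X) := by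
            exact EMetric.infEdist_anti subset_union_right
        _ ≤ _ := by
            exact (EMetric.infEdist_le_hausdorffEdist_of_mem hx).trans_eq EMetric.hausdorffEdist_comm

lemma isClosed_subset_hyper {N : Set X} (hN : IsClosed N) :
    IsClosed {S : NonemptyCompacts X | (S : Set X) ⊆ N} := by
  rw [← isOpen_compl_iff, Metric.isOpen_iff]
  intro S hS
  rw [mem_compl_iff, mem_setOf_eq] at hS
  obtain ⟨p, hpS, hpN⟩ := not_subset.1 hS
  rcases N.eq_empty_or_nonempty with h | h
  · exact ⟨1, one_pos, fun T _ hT => by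
      simp only [mem_setOf_eq, h, subset_empty_iff] at hT
      exact T.nonempty.ne_empty hT⟩
  · refine ⟨infDist p N, (hN.notMem_iff_infDist_pos h).1 hpN, fun T hT => ?_⟩
    rw [mem_ball, NonemptyCompacts.dist_eq, Metric.hausdorffDist_comm] at hT
    intro hTN
    obtain ⟨q, hq, hpq⟩ := Metric.exists_dist_lt_of_hausdorffDist_lt hpS hT (edist_ne_top' S T)
    exact absurd (infDist_le_dist_of_mem (hTN hq)) (not_le.2 hpq)

lemma isClosed_superset_hyper {N : Set X} :
    IsClosed {S : NonemptyCompacts X | N ⊆ (S : Set X)} := by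
  rw [← isOpen_compl_iff, Metric.isOpen_iff]
  intro S hS
  rw [mem_compl_iff, mem_setOf_eq] at hS
  obtain ⟨p, hpN, hpS⟩ := not_subset.1 hS
  refine ⟨infDist p S, (S.isCompact.isClosed.notMem_iff_infDist_pos S.nonempty).1 hpS,
    fun T hT => ?_⟩
  rw [mem_ball, NonemptyCompacts.dist_eq] at hT
  intro hTN
  obtain ⟨q, hq, hpq⟩ := Metric.exists_dist_lt_of_hausdorffDist_lt (hTN hpN) hT (edist_ne_top' T S)
  exact absurd (infDist_le_dist_of_mem hq) (not_le.2 hpq)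

lemma isClosed_preconnected_hyper :
    IsClosed {S : NonemptyCompacts X | IsPreconnected (S : Set X)} := by
  rw [← isOpen_compl_iff, Metric.isOpen_iff]
  intro S hS
  rw [mem_compl_iff, mem_setOf_eq] at hS
  rw [IsPreconnected] at hS
  push_neg at hS
  obtain ⟨u, v, hu, hv, huv, ⟨p, hpu⟩, ⟨q, hqv⟩, hdis⟩ := hS
  have hdis' : ∀ y, y ∈ (S : Set X) → y ∈ u → y ∈ v → False := fun y hy h1 h2 => by
    have : y ∈ (S : Set X) ∩ (u ∩ v) := ⟨hy, h1, h2⟩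
    rw [hdis] at this; exact this
  set K1 : Set X := (S : Set X) \ v with hK1
  set K2 : Set X := (S : Set X) \ u with hK2
  have hK1c : IsCompact K1 := S.isCompact.diff hv
  have hK2c : IsCompact K2 := S.isCompact.diff hu
  have hcov : (S : Set X) ⊆ K1 ∪ K2 := by
    intro y hy
    by_cases hyv : y ∈ v
    · exact Or.inr ⟨hy, fun hyu => hdis' y hy hyu hyv⟩
    · exact Or.inl ⟨hy, hyv⟩
  have hp1 : p ∈ K1 := ⟨hpu.1, fun hpv => hdis' p hpu.1 hpu.2 hpv⟩
  have hq2 : q ∈ K2 := ⟨hqv.1, fun hqu => hdis' q hqv.1 hqu hqv.2⟩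
  have hdisK : Disjoint K1 K2 := by
    rw [Set.disjoint_left]
    rintro y ⟨hy, hyv⟩ ⟨_, hyu⟩
    rcases huv hy with h | h
    · exact hyu h
    · exact hyv h
  obtain ⟨δ, hδ, hthick⟩ := hdisK.exists_thickenings hK1c hK2c.isClosed
  refine ⟨δ, hδ, fun T hT => ?_⟩
  rw [mem_ball, NonemptyCompacts.dist_eq] at hT
  rw [mem_compl_iff, mem_setOf_eq]
  intro hTconn
  have hTsub : (T : Set X) ⊆ thickening δ K1 ∪ thickening δ K2 := by
    intro y hy
    obtain ⟨z, hz, hyz⟩ := Metric.exists_dist_lt_of_hausdorffDist_lt hy hT (edist_ne_top' T S)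
    rcases hcov hz with h | h
    · exact Or.inl (Metric.mem_thickening_iff.2 ⟨z, h, hyz⟩)
    · exact Or.inr (Metric.mem_thickening_iff.2 ⟨z, h, hyz⟩)
  have h1 : ((T : Set X) ∩ thickening δ K1).Nonempty := by
    obtain ⟨y, hy, hpy⟩ := Metric.exists_dist_lt_of_hausdorffDist_lt hp1.1
      (by rwa [Metric.hausdorffDist_comm] at hT) (edist_ne_top' S T)
    exact ⟨y, hy, Metric.mem_thickening_iff.2 ⟨p, hp1, by rw [dist_comm]; exact hpy⟩⟩
  have h2 : ((T : Set X) ∩ thickening δ K2).Nonempty := by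
    obtain ⟨y, hy, hqy⟩ := Metric.exists_dist_lt_of_hausdorffDist_lt hq2.1
      (by rwa [Metric.hausdorffDist_comm] at hT) (edist_ne_top' S T)
    exact ⟨y, hy, Metric.mem_thickening_iff.2 ⟨q, hq2, by rw [dist_comm]; exact hqy⟩⟩
  obtain ⟨y, hy, hy1, hy2⟩ := hTconn _ _ isOpen_thickening isOpen_thickening hTsub h1 h2
  exact (Set.disjoint_left.1 hthick) hy1 hy2

lemma exists_whitney [Nonempty X] :
    ∃ W : NonemptyCompacts X → ℝ, Continuous W ∧
      (∀ M N : NonemptyCompacts X, (M : Set X) ⊆ N → W N ≤ W M) ∧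
      (∀ M N : NonemptyCompacts X, (M : Set X) ⊆ N → (M : Set X) ≠ N → W N < W M) := by
  obtain ⟨u, hu⟩ := TopologicalSpace.exists_dense_seq X
  set C : ℝ := diam (univ : Set X) with hC
  set W : NonemptyCompacts X → ℝ := fun M => ∑' n, (1/2)^n * infDist (u n) (M : Set X) with hW
  have hbound : ∀ n (M : NonemptyCompacts X), infDist (u n) (M : Set X) ≤ C := by
    intro n M
    obtain ⟨y, hy⟩ := M.nonempty
    exact (infDist_le_dist_of_mem hy).trans (dist_le_diam_of_mem isCompact_univ.isBounded trivial trivial)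
  have hC0 : 0 ≤ C := diam_nonneg
  have hsum : Summable (fun n : ℕ => (1/2:ℝ)^n * C) :=
    (summable_geometric_of_lt_one (by norm_num) (by norm_num)).mul_right C
  have hsummM : ∀ M : NonemptyCompacts X, Summable (fun n => (1/2:ℝ)^n * infDist (u n) (M : Set X)) := by
    intro M
    apply Summable.of_nonneg_of_le (fun n => mul_nonneg (by positivity) infDist_nonneg)
      (fun n => by
        have := hbound n M
        have h2 : (0:ℝ) ≤ (1/2)^n := by positivity
        exact mul_le_mul_of_nonneg_left this h2) hsum
  refine ⟨W, ?_, ?_, ?_⟩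
  · apply continuous_tsum (u := fun n => (1/2:ℝ)^n * C)
    · intro n
      exact (continuous_const.mul (lipschitz_infDist_set (u n)).continuous)
    · exact hsum
    · intro n M
      rw [Real.norm_eq_abs, abs_of_nonneg (mul_nonneg (by positivity) infDist_nonneg)]
      exact mul_le_mul_of_nonneg_left (hbound n M) (by positivity)
  · intro M N hMN
    apply Summable.tsum_le_tsum _ (hsummM N) (hsummM M)
    intro n
    exact mul_le_mul_of_nonneg_left (infDist_le_infDist_of_subset hMN M.nonempty) (by positivity)
  · intro M N hMN hne
    obtain ⟨z, hzN, hzM⟩ := Set.exists_of_ssubset ⟨hMN, fun h => hne (le_antisymm hMN h)⟩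
    have hr : 0 < infDist z (M : Set X) :=
      (M.isCompact.isClosed.notMem_iff_infDist_pos M.nonempty).1 hzM
    obtain ⟨n, hn⟩ := Metric.denseRange_iff.1 hu z (infDist z (M : Set X) / 2) (by linarith)
    apply Summable.tsum_lt_tsum (i := n) _ _ (hsummM N) (hsummM M)
    · intro m
      exact mul_le_mul_of_nonneg_left (infDist_le_infDist_of_subset hMN M.nonempty) (by positivity)
    · have h1 : infDist (u n) (N : Set X) ≤ infDist z (M : Set X) / 2 := by
        apply (infDist_le_dist_of_mem hzN).trans
        rw [dist_comm]; exact hn.le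
      have h2 : infDist z (M : Set X) / 2 < infDist (u n) (M : Set X) := by
        have := infDist_le_infDist_add_dist (x := z) (y := u n) (s := (M : Set X))
        have hd : dist z (u n) < infDist z (M:Set X)/2 := hn
        linarith
      have : infDist (u n) (N : Set X) < infDist (u n) (M : Set X) := lt_of_le_of_lt h1 h2
      exact mul_lt_mul_of_pos_left this (by positivity)

lemma exists_intermediate_continuum {M N : Set X} (hMcpt : IsCompact M)
    (hMconn : IsConnected M) (hNcpt : IsCompact N) (hNconn : IsConnected N)
    (hMN : M ⊆ N) (hne : M ≠ N) :
    ∃ P : Set X, IsCompact P ∧ IsConnected P ∧ M ⊆ P ∧ P ⊆ N ∧ M ≠ P ∧ P ≠ N := by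
  obtain ⟨z, hzN, hzM⟩ := Set.exists_of_ssubset ⟨hMN, fun h => hne (le_antisymm hMN h)⟩
  set r : ℝ := infDist z M with hrdef
  have hr : 0 < r := (hMcpt.isClosed.notMem_iff_infDist_pos hMconn.nonempty).1 hzM
  set K0 : Set X := N ∩ {w | r/2 ≤ dist w z} with hK0def
  have hK0closed : IsClosed K0 :=
    hNcpt.isClosed.inter (isClosed_le continuous_const (continuous_id.dist continuous_const))
  have hK0cpt : IsCompact K0 := hNcpt.inter_right
    (isClosed_le continuous_const (continuous_id.dist continuous_const))
  have hMdist : ∀ w ∈ M, r ≤ dist w z := fun w hw => by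
    rw [dist_comm]; exact infDist_le_dist_of_mem hw
  have hMK0 : M ⊆ K0 := fun w hw => ⟨hMN hw, le_trans (by linarith) (hMdist w hw)⟩
  obtain ⟨m, hm⟩ := hMconn.nonempty
  haveI : CompactSpace ↥K0 := isCompact_iff_compactSpace.1 hK0cpt
  set m' : ↥K0 := ⟨m, hMK0 hm⟩ with hm'def
  set N1 : Set ↥K0 := connectedComponent m' with hN1def
  have hN1closed : IsClosed N1 := isClosed_connectedComponent
  -- key claim : N1 contains a point at distance exactly r/2 from z
  have hNS : ∃ w ∈ N1, dist (w : X) z = r/2 := by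
    by_contra hcon
    push_neg at hcon
    set S' : Set ↥K0 := {w | dist (w : X) z = r/2} with hS'def
    have hS'closed : IsClosed S' :=
      isClosed_eq (continuous_subtype_val.dist continuous_const) continuous_const
    -- finite clopen separation
    have hiInter := connectedComponent_eq_iInter_isClopen m'
    have hcover : S' ⊆ ⋃ (s : {s : Set ↥K0 // IsClopen s ∧ m' ∈ s}), (↑s : Set ↥K0)ᶜ := by
      intro w hw
      by_contra hwn
      simp only [mem_iUnion, mem_compl_iff, not_exists, not_not] at hwn
      have : w ∈ N1 := by rw [hN1def, hiInter]; exact mem_iInter.2 fun s => hwn s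
      exact hcon w this hw
    obtain ⟨t, ht⟩ := hS'closed.isCompact.elim_finite_subcover
      (fun s : {s : Set ↥K0 // IsClopen s ∧ m' ∈ s} => (↑s : Set ↥K0)ᶜ)
      (fun s => s.2.1.compl.isOpen) hcover
    set V : Set ↥K0 := ⋂ s ∈ t, (↑s : Set ↥K0) with hVdef
    have hVclopen : IsClopen V := isClopen_biInter_finset fun s _ => s.2.1
    have hm'V : m' ∈ V := mem_iInter₂.2 fun s _ => s.2.2
    have hN1V : N1 ⊆ V := by
      intro w hw
      rw [hN1def, hiInter] at hw
      exact mem_iInter₂.2 fun s _ => mem_iInter.1 hw s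
    have hVS' : ∀ w ∈ V, w ∉ S' := by
      intro w hwV hwS
      obtain ⟨s, hst, hws⟩ := mem_iUnion₂.1 (ht hwS)
      exact hws (mem_iInter₂.1 hwV s hst)
    -- push V down to X
    set Vx : Set X := Subtype.val '' V with hVxdef
    have hVxclosed : IsClosed Vx :=
      (hVclopen.isClosed.isCompact.image continuous_subtype_val).isClosed
    have hVxopen : ∀ w ∈ Vx, ∃ ε > 0, ∀ y ∈ N, dist y w < ε → y ∈ Vx := by
      rintro w ⟨w', hw'V, rfl⟩
      have hwK0 : (w' : X) ∈ K0 := w'.2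
      have hwgt : r/2 < dist (w' : X) z :=
        lt_of_le_of_ne hwK0.2 (fun h => hVS' w' hw'V h.symm)
      obtain ⟨ε1, hε1, hball⟩ := Metric.isOpen_iff.1 hVclopen.isOpen w' hw'V
      refine ⟨min ε1 (dist (w' : X) z - r/2), lt_min hε1 (by linarith), fun y hyN hyd => ?_⟩
      have hyz : r/2 ≤ dist y z := by
        have h1 : dist y (w' : X) < dist (w' : X) z - r/2 := lt_of_lt_of_le hyd (min_le_right _ _)
        have := dist_triangle (w' : X) y z
        have hyz' : dist (w':X) z - dist y (w':X) ≤ dist y z := by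
          rw [dist_comm y (w':X)] at *; linarith
        linarith
      refine ⟨⟨y, ⟨hyN, hyz⟩⟩, hball ?_, rfl⟩
      rw [mem_ball, Subtype.dist_eq]
      exact lt_of_lt_of_le hyd (min_le_left _ _)
    have hvclosed : IsClosed (N \ Vx) := by
      apply IsSeqClosed.isClosed
      intro uk y huk hlim
      have hyN : y ∈ N := hNcpt.isClosed.mem_of_tendsto hlim
        (Filter.Eventually.of_forall fun k => (huk k).1)
      refine ⟨hyN, fun hyV => ?_⟩
      obtain ⟨ε, hε, hball⟩ := hVxopen y hyV
      obtain ⟨k0, hk⟩ := Metric.tendsto_atTop.1 hlim ε hε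
      exact (huk k0).2 (hball _ (huk k0).1 (hk k0 le_rfl))
    have := (isPreconnected_iff_subset_of_fully_disjoint_closed hNcpt.isClosed).1
      hNconn.isPreconnected Vx (N \ Vx) hVxclosed hvclosed
      (fun y hy => by by_cases h : y ∈ Vx; exacts [Or.inl h, Or.inr ⟨hy, h⟩])
      (Set.disjoint_left.2 fun y hy hy2 => hy2.2 hy)
    rcases this with h | h
    · have : z ∈ Vx := h hzN
      obtain ⟨z', hz', hzz⟩ := this
      have : r/2 ≤ dist (z' : X) z := z'.2.2
      rw [hzz, dist_self] at this
      linarith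
    · exact (h (hMN hm)).2 ⟨m', hm'V, rfl⟩
  obtain ⟨s0', hs0N1, hs0d⟩ := hNS
  refine ⟨Subtype.val '' N1, (hN1closed.isCompact.image continuous_subtype_val), ?_, ?_, ?_, ?_, ?_⟩
  · exact (isConnected_connectedComponent).image _ continuous_subtype_val.continuousOn
  · -- M ⊆ P
    have hpre : IsPreconnected (Subtype.val ⁻¹' M : Set ↥K0) := by
      rw [← Topology.IsInducing.subtypeVal.isPreconnected_image]
      rw [Subtype.image_preimage_coe]
      rw [Set.inter_eq_right.2 hMK0]
      exact hMconn.isPreconnected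
    have : (Subtype.val ⁻¹' M : Set ↥K0) ⊆ N1 :=
      hpre.subset_connectedComponent (x := m') hm
    intro w hw
    exact ⟨⟨w, hMK0 hw⟩, this hw, rfl⟩
  · -- P ⊆ N
    rintro w ⟨w', _, rfl⟩; exact w'.2.1
  · -- M ≠ P
    intro h
    have : (s0' : X) ∈ M := by rw [h]; exact ⟨s0', hs0N1, rfl⟩
    have := hMdist _ this
    rw [hs0d] at this; linarith
  · -- P ≠ N
    intro h
    have : z ∈ Subtype.val '' N1 := by rw [h]; exact hzN
    obtain ⟨z', _, hzz⟩ := this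
    have : r/2 ≤ dist (z' : X) z := z'.2.2
    rw [hzz, dist_self] at this; linarith

lemma exists_growth_path {A : Set X} (hA : IsCompact A) (hAconn : IsConnected A)
    {a0 : X} (ha0 : a0 ∈ A) :
    ∃ f : unitInterval → NonemptyCompacts X, Continuous f ∧ (f 0 : Set X) = {a0} ∧
      (f 1 : Set X) = A ∧ ∀ t, (f t : Set X) ⊆ A := by
  haveI : Nonempty X := ⟨a0⟩
  set s0 : NonemptyCompacts X := ⟨⟨{a0}, isCompact_singleton⟩, ⟨a0, rfl⟩⟩ with hs0def
  set sA : NonemptyCompacts X := ⟨⟨A, hA⟩, ⟨a0, ha0⟩⟩ with hsAdef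
  obtain ⟨W, hWc, hWmono, hWstrict⟩ := exists_whitney (X := X)
  set 𝒮 : Set (NonemptyCompacts X) :=
    {S | a0 ∈ (S : Set X) ∧ (S : Set X) ⊆ A ∧ IsPreconnected (S : Set X)} with h𝒮def
  have hs0𝒮 : s0 ∈ 𝒮 := ⟨rfl, singleton_subset_iff.2 ha0, isPreconnected_singleton⟩
  have hsA𝒮 : sA ∈ 𝒮 := ⟨ha0, subset_rfl, hAconn.isPreconnected⟩
  set rel : ↥𝒮 → ↥𝒮 → Prop := fun S T => ((S : NonemptyCompacts X) : Set X) ⊆ T with hreldef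
  have hchain0 : IsChain rel {(⟨s0, hs0𝒮⟩ : ↥𝒮), ⟨sA, hsA𝒮⟩} := by
    intro a ha b hb hab
    rcases ha with ha | ha <;> rcases hb with hb | hb <;>
      subst ha <;> subst hb
    · exact absurd rfl hab
    · exact Or.inl (singleton_subset_iff.2 ha0)
    · exact Or.inr (singleton_subset_iff.2 ha0)
    · exact absurd rfl hab
  obtain ⟨𝒞', h𝒞'max, hsub0⟩ := hchain0.exists_maxChain
  set 𝒞 : Set (NonemptyCompacts X) := Subtype.val '' 𝒞' with h𝒞def
  have h𝒞𝒮 : 𝒞 ⊆ 𝒮 := by rintro S ⟨S', _, rfl⟩; exact S'.2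
  have hs0𝒞 : s0 ∈ 𝒞 := ⟨⟨s0, hs0𝒮⟩, hsub0 (Or.inl rfl), rfl⟩
  have hsA𝒞 : sA ∈ 𝒞 := ⟨⟨sA, hsA𝒮⟩, hsub0 (Or.inr rfl), rfl⟩
  have hcomp : ∀ S ∈ 𝒞, ∀ T ∈ 𝒞, (S : Set X) ⊆ T ∨ (T : Set X) ⊆ S := by
    rintro S ⟨S', hS', rfl⟩ T ⟨T', hT', rfl⟩
    by_cases he : S' = T'
    · subst he; exact Or.inl subset_rfl
    · exact h𝒞'max.1 hS' hT' he
  -- insertion principle from maximality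
  have hinsert : ∀ (p : NonemptyCompacts X), p ∈ 𝒮 →
      (∀ T ∈ 𝒞, (p : Set X) ⊆ T ∨ (T : Set X) ⊆ p) → p ∈ 𝒞 := by
    intro p hp𝒮 hpcomp
    have hchain2 : IsChain rel (insert ⟨p, hp𝒮⟩ 𝒞') := by
      apply h𝒞'max.1.insert
      intro b hb _
      rcases hpcomp b.val ⟨b, hb, rfl⟩ with h | h
      · exact Or.inl h
      · exact Or.inr h
    have heq := h𝒞'max.2 hchain2 (subset_insert _ _)
    have : (⟨p, hp𝒮⟩ : ↥𝒮) ∈ 𝒞' := heq ▸ mem_insert _ _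
    exact ⟨_, this, rfl⟩
  have h𝒞closed : IsClosed 𝒞 := by
    apply IsSeqClosed.isClosed
    intro uk p huk hlim
    have hp1 : a0 ∈ (p : Set X) := by
      have hm := (isClosed_superset_hyper (N := {a0}) (X := X)).mem_of_tendsto hlim
        (Filter.Eventually.of_forall fun k => singleton_subset_iff.2 (h𝒞𝒮 (huk k)).1)
      exact singleton_subset_iff.1 hm
    have hp2 : (p : Set X) ⊆ A := (isClosed_subset_hyper hA.isClosed).mem_of_tendsto hlim
      (Filter.Eventually.of_forall fun k => (h𝒞𝒮 (huk k)).2.1)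
    have hp3 : IsPreconnected (p : Set X) := isClosed_preconnected_hyper.mem_of_tendsto hlim
      (Filter.Eventually.of_forall fun k => (h𝒞𝒮 (huk k)).2.2)
    apply hinsert p ⟨hp1, hp2, hp3⟩
    intro T hT
    have hcl : IsClosed ({S : NonemptyCompacts X | (S : Set X) ⊆ T} ∪
        {S : NonemptyCompacts X | (T : Set X) ⊆ S}) :=
      (isClosed_subset_hyper T.isCompact.isClosed).union isClosed_superset_hyper
    have := hcl.mem_of_tendsto hlim (Filter.Eventually.of_forall fun k => by
      rcases hcomp (uk k) (huk k) T hT with h | h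
      · exact Or.inl h
      · exact Or.inr h)
    exact this
  have h𝒞cpt : IsCompact 𝒞 := h𝒞closed.isCompact
  have hconn𝒞 : ∀ S ∈ 𝒞, IsConnected (S : Set X) := fun S hS =>
    ⟨⟨a0, (h𝒞𝒮 hS).1⟩, (h𝒞𝒮 hS).2.2⟩
  have hsurj : ∀ r, W sA ≤ r → r ≤ W s0 → ∃ S ∈ 𝒞, W S = r := by
    intro r hr1 hr2
    by_contra hcon
    push_neg at hcon
    set 𝒞₁ : Set (NonemptyCompacts X) := 𝒞 ∩ W ⁻¹' (Ici r) with h𝒞₁def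
    set 𝒞₂ : Set (NonemptyCompacts X) := 𝒞 ∩ W ⁻¹' (Iic r) with h𝒞₂def
    have h𝒞₁cpt : IsCompact 𝒞₁ := (h𝒞closed.inter (isClosed_Ici.preimage hWc)).isCompact
    have h𝒞₂cpt : IsCompact 𝒞₂ := (h𝒞closed.inter (isClosed_Iic.preimage hWc)).isCompact
    obtain ⟨M', hM'mem, hM'min⟩ := h𝒞₁cpt.exists_isMinOn ⟨s0, hs0𝒞, hr2⟩ hWc.continuousOn
    obtain ⟨M'', hM''mem, hM''max⟩ := h𝒞₂cpt.exists_isMaxOn ⟨sA, hsA𝒞, hr1⟩ hWc.continuousOn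
    have key : ∀ S ∈ 𝒞, (S : Set X) ⊆ M' ∨ (M'' : Set X) ⊆ S := by
      intro S hS
      rcases le_or_gt r (W S) with h | h
      · left
        have hS1 : S ∈ 𝒞₁ := ⟨hS, h⟩
        rcases hcomp S hS M' hM'mem.1 with hss | hss
        · exact hss
        · by_cases he : (M' : Set X) = S
          · exact he ▸ subset_rfl
          · exact absurd (hWstrict M' S hss he) (not_lt.2 (hM'min hS1))
      · right
        have hS2 : S ∈ 𝒞₂ := ⟨hS, h.le⟩
        rcases hcomp S hS M'' hM''mem.1 with hss | hss
        · by_cases he : (S : Set X) = M''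
          · exact he ▸ subset_rfl
          · exact absurd (hWstrict S M'' hss he) (not_lt.2 (hM''max hS2))
        · exact hss
    have hWM' : r < W M' := lt_of_le_of_ne hM'mem.2 (Ne.symm (hcon M' hM'mem.1))
    have hWM'' : W M'' < r := lt_of_le_of_ne hM''mem.2 (hcon M'' hM''mem.1)
    have hM'M'' : (M' : Set X) ⊆ M'' := by
      rcases hcomp M' hM'mem.1 M'' hM''mem.1 with h | h
      · exact h
      · exact absurd (hWmono M'' M' h) (not_le.2 (by linarith))
    have hM'ne : (M' : Set X) ≠ M'' := fun h =>
      absurd (congrArg W (NonemptyCompacts.ext h)) (by intro h2; rw [h2] at hWM'; linarith)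
    obtain ⟨P, hPcpt, hPconn, hMP, hPN, hMPne, hPNne⟩ :=
      exists_intermediate_continuum M'.isCompact (hconn𝒞 M' hM'mem.1)
        M''.isCompact (hconn𝒞 M'' hM''mem.1) hM'M'' hM'ne
    set sP : NonemptyCompacts X := ⟨⟨P, hPcpt⟩, hPconn.nonempty⟩ with hsPdef
    have hsP𝒮 : sP ∈ 𝒮 := ⟨hMP (h𝒞𝒮 hM'mem.1).1, hPN.trans (h𝒞𝒮 hM''mem.1).2.1,
      hPconn.isPreconnected⟩
    have hsP𝒞 : sP ∈ 𝒞 := by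
      apply hinsert sP hsP𝒮
      intro T hT
      rcases key T hT with h | h
      · exact Or.inr (h.trans hMP)
      · exact Or.inl (hPN.trans h)
    rcases key sP hsP𝒞 with h | h
    · exact hMPne (le_antisymm hMP h)
    · exact hPNne (le_antisymm hPN h)
  -- build the path
  haveI hE : CompactSpace ↥𝒞 := isCompact_iff_compactSpace.1 h𝒞cpt
  set F : ↥𝒞 → ℝ := fun S => W S.val with hFdef
  have hFc : Continuous F := hWc.comp continuous_subtype_val
  have hFinj : Function.Injective F := by
    intro S T h
    apply Subtype.ext
    apply NonemptyCompacts.ext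
    rcases hcomp S.val S.2 T.val T.2 with hss | hss
    · by_contra hne2
      exact absurd h (by have := hWstrict _ _ hss hne2; exact ne_of_gt (by simpa [hFdef] using this))
    · by_contra hne2
      exact absurd h (by have := hWstrict _ _ hss (fun hh => hne2 hh.symm); exact ne_of_lt (by simpa [hFdef] using this))
  set e : ↥𝒞 ≃ range F := Equiv.ofInjective F hFinj with hedef
  have hec : Continuous (e : ↥𝒞 → range F) := Continuous.subtype_mk hFc _
  set h := hec.homeoOfEquivCompactToT2 with hhdef
  have hWAs0 : W sA ≤ W s0 := hWmono s0 sA (singleton_subset_iff.2 ha0)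
  have hb1 : ∀ t : unitInterval, W sA ≤ W s0 + t * (W sA - W s0) := by
    intro t
    have h1 := t.2.1
    have h2 := t.2.2
    nlinarith
  have hb2 : ∀ t : unitInterval, W s0 + t * (W sA - W s0) ≤ W s0 := by
    intro t
    have h1 := t.2.1
    have h2 := t.2.2
    nlinarith
  have hrange : ∀ t : unitInterval, W s0 + t * (W sA - W s0) ∈ range F := by
    intro t
    obtain ⟨S, hS, hWS⟩ := hsurj _ (hb1 t) (hb2 t)
    exact ⟨⟨S, hS⟩, hWS⟩
  set f : unitInterval → NonemptyCompacts X :=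
    fun t => (h.symm ⟨W s0 + t * (W sA - W s0), hrange t⟩).val with hfdef
  have hfc : Continuous f := by
    apply continuous_subtype_val.comp
    apply h.symm.continuous.comp
    apply Continuous.subtype_mk
    exact continuous_const.add ((continuous_subtype_val).mul continuous_const)
  have hfval : ∀ t, (f t : Set X) ⊆ A := fun t => (h𝒞𝒮 (h.symm _).2).2.1
  have hf0 : f 0 = s0 := by
    have harg : (⟨W s0 + (0 : unitInterval) * (W sA - W s0), hrange 0⟩ : range F)
        = h ⟨s0, hs0𝒞⟩ := by
      apply Subtype.ext
      show W s0 + ((0 : unitInterval) : ℝ) * (W sA - W s0) = F ⟨s0, hs0𝒞⟩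
      norm_num [hFdef]
    rw [hfdef]
    show (h.symm ⟨W s0 + (0 : unitInterval) * (W sA - W s0), hrange 0⟩).val = s0
    rw [harg, Homeomorph.symm_apply_apply]
  have hf1 : f 1 = sA := by
    have harg : (⟨W s0 + (1 : unitInterval) * (W sA - W s0), hrange 1⟩ : range F)
        = h ⟨sA, hsA𝒞⟩ := by
      apply Subtype.ext
      show W s0 + ((1 : unitInterval) : ℝ) * (W sA - W s0) = F ⟨sA, hsA𝒞⟩
      norm_num [hFdef]
    rw [hfdef]
    show (h.symm ⟨W s0 + (1 : unitInterval) * (W sA - W s0), hrange 1⟩).val = sA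
    rw [harg, Homeomorph.symm_apply_apply]
  refine ⟨f, hfc, ?_, ?_, hfval⟩
  · rw [hf0]; rfl
  · rw [hf1]; rfl


end AuxHyperspace

section PiSetAux

lemma mem_piSet_self {X : Type*} [MetricSpace X] (x : X) : x ∈ piSet x := by
  unfold piSet
  split_ifs with h
  · exact Set.mem_sInter.2 fun A hA => hA.2
  · trivial

end PiSetAux

theorem pi_terminal_of_decomposition
    (hB : ∀ x : X, BlockedSet x = piSet x)
    (hpair : ∀ x y : X, piSet x = piSet y ∨ piSet x ∩ piSet y = ∅)
    (hcover : ⋃ x : X, piSet x = univ)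
    (x : X) (A : Set X) (hAc : IsCompact A) (hAconn : IsConnected A)
    (hmeet : (A ∩ piSet x).Nonempty) :
    A ⊆ piSet x ∨ piSet x ⊆ A := by
  by_cases hsub : A ⊆ piSet x
  · exact Or.inl hsub
  right
  obtain ⟨a0, ha0A, ha0P⟩ := hmeet
  obtain ⟨b, hbA, hbP⟩ := not_subset.1 hsub
  have hclass : ∀ y, y ∈ piSet x → piSet y = piSet x := by
    intro y hy
    rcases hpair y x with h | h
    · exact h
    · have hmem : y ∈ piSet y ∩ piSet x := ⟨mem_piSet_self y, hy⟩
      rw [h] at hmem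
      exact absurd hmem (notMem_empty y)
  intro c hcP
  by_contra hcA
  have hBc : BlockedSet c = piSet x := by rw [hB c, hclass c hcP]
  have hblocks : Blocks ({c} : Set X) {a0} := by
    have : a0 ∈ BlockedSet c := by rw [hBc]; exact ha0P
    exact this
  have hnb : ¬ Blocks ({c} : Set X) {b} := by
    intro hb2
    have : b ∈ BlockedSet c := hb2
    rw [hBc] at this
    exact hbP this
  rw [Blocks] at hnb
  push_neg at hnb
  obtain ⟨γ, hγc, hγ0, hγ1, hγav⟩ := hnb
  have hγav' : ∀ t : unitInterval, t < 1 → c ∉ (γ t : Set X) := by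
    intro t ht hct
    have h0 := hγav t ht
    have hmem : c ∈ ((γ t : Set X) ∩ {c}) := ⟨hct, rfl⟩
    rw [h0] at hmem
    exact hmem
  obtain ⟨f, hfc, hf0, hf1, hfval⟩ := exists_growth_path hAc hAconn ha0A
  set s0 : NonemptyCompacts X := ⟨⟨{a0}, isCompact_singleton⟩, ⟨a0, rfl⟩⟩ with hs0def
  set sA : NonemptyCompacts X := ⟨⟨A, hAc⟩, ⟨a0, ha0A⟩⟩ with hsAdef
  set sU : NonemptyCompacts X := ⟨⟨univ, isCompact_univ⟩, univ_nonempty⟩ with hsUdef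
  have hf0' : f 0 = s0 := NonemptyCompacts.ext (by rw [hf0]; rfl)
  have hf1' : f 1 = sA := NonemptyCompacts.ext (by rw [hf1]; rfl)
  set p1 : Path s0 sA :=
    { toFun := f, continuous_toFun := hfc, source' := hf0', target' := hf1' } with hp1def
  set p2 : Path sA sU :=
    { toFun := fun s => sA ⊔ γ s
      continuous_toFun := (continuous_sup_const sA).comp hγc
      source' := NonemptyCompacts.ext (by
        rw [NonemptyCompacts.coe_sup, hγ0]
        exact union_eq_self_of_subset_right (singleton_subset_iff.2 hbA))
      target' := NonemptyCompacts.ext (by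
        rw [NonemptyCompacts.coe_sup, hγ1]
        exact union_univ _) } with hp2def
  obtain ⟨t, ht1, hne⟩ := hblocks (fun s => (p1.trans p2) s) (p1.trans p2).continuous
    (by show ((p1.trans p2) 0 : Set X) = {a0}; rw [(p1.trans p2).source]; rfl)
    (by show ((p1.trans p2) 1 : Set X) = univ; rw [(p1.trans p2).target]; rfl)
  obtain ⟨z, hzΓ0, hzc⟩ := hne
  rw [mem_singleton_iff] at hzc
  subst hzc
  have hzΓ : z ∈ ((p1.trans p2) t : Set X) := hzΓ0
  rw [Path.trans_apply] at hzΓ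
  split_ifs at hzΓ with hhalf
  · exact hcA (hfval _ hzΓ)
  · have hp2av : ∀ q : unitInterval, q < 1 → z ∉ ((p2 q : NonemptyCompacts X) : Set X) := by
      intro q hq hzq
      have hzq' : z ∈ ((sA : Set X) ∪ (γ q : Set X)) := by
        rw [← NonemptyCompacts.coe_sup]
        exact hzq
      rcases hzq' with h | h
      · exact hcA h
      · exact hγav' q hq h
    have htlt : (t : ℝ) < 1 := Subtype.coe_lt_coe.2 ht1
    exact hp2av _ (by rw [← Subtype.coe_lt_coe]; show 2 * (t : ℝ) - 1 < 1; linarith) hzΓ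
end

section
/- Let X be a continuum. Every nonblocker of singletons of X is a shore set of X. -/
open Set Metric TopologicalSpace unitInterval

variable {X : Type*} [MetricSpace X] [CompactSpace X] [ConnectedSpace X] [Nonempty X]

theorem nonblocker_is_shore (A : Set X) (hA : IsNonBlocker A) :
    IsShoreSet A := by
  obtain ⟨hcl, hne, hproper, hblock⟩ := hA
  refine ⟨hcl, hne, hproper, ?_⟩
  intro ε hε
  obtain ⟨x, hx⟩ : ∃ x, x ∉ A := by
    by_contra h
    push_neg at h
    exact hproper (eq_univ_of_forall h)
  obtain ⟨α, ⟨hcont, hconn, _⟩, h0, h1, havoid⟩ := hblock x hx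
  have hne1 : (nhdsWithin (1 : unitInterval) (Set.Iio 1)).NeBot := by
    apply nhdsWithin_Iio_self_neBot'
    exact ⟨0, by norm_num⟩
  have htend : Filter.Tendsto α (nhdsWithin (1 : unitInterval) (Set.Iio 1)) (nhds (α 1)) :=
    (hcont.tendsto 1).mono_left nhdsWithin_le_nhds
  have hev : ∀ᶠ t in nhdsWithin (1 : unitInterval) (Set.Iio 1),
      dist (α t) (α 1) < ε := htend (Metric.ball_mem_nhds _ hε)
  obtain ⟨t, ht, htlt⟩ := (hev.and (eventually_mem_nhdsWithin)).exists
  refine ⟨(α t : Set X), (α t).isCompact, hconn t, ?_, havoid t htlt⟩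
  calc hausdorffDist (α t : Set X) (univ : Set X)
      = hausdorffDist (α t : Set X) (α 1 : Set X) := by rw [h1]
    _ = dist (α t) (α 1) := (NonemptyCompacts.dist_eq).symm
    _ < ε := ht
end

section
/- Let X be a continuum, and let A, B ∈ C(X) be subcontinua. Then B does not block A (in the path sense) if and only if there exists an order arc α: [0,1] → C(X) with α(0) = A, α(1) = X and α(t) ∩ B = ∅ for all t < 1. -/
open Set Metric TopologicalSpace unitInterval

variable {X : Type*} [MetricSpace X] [CompactSpace X] [ConnectedSpace X] [Nonempty X]

section Dev
set_option linter.unusedSectionVars false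
variable {X : Type*} [MetricSpace X] [CompactSpace X] [Nonempty X]

lemma myEdist_ne_top (s t : Set X) (hs : s.Nonempty) (ht : t.Nonempty) :
    EMetric.hausdorffEdist s t ≠ ⊤ :=
  Metric.hausdorffEdist_ne_top_of_nonempty_of_bounded hs ht
    (Bornology.IsBounded.subset (isCompact_univ.isBounded) (subset_univ s))
    (Bornology.IsBounded.subset (isCompact_univ.isBounded) (subset_univ t))

variable (γ : unitInterval → NonemptyCompacts X)

def cumul (t : unitInterval) : Set X := ⋃ s ∈ Set.Iic t, (γ s : Set X)

lemma mem_cumul {t : unitInterval} {x : X} :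
    x ∈ cumul γ t ↔ ∃ s ≤ t, x ∈ (γ s : Set X) := by
  simp [cumul]

lemma subset_cumul {s t : unitInterval} (h : s ≤ t) : (γ s : Set X) ⊆ cumul γ t :=
  fun x hx => (mem_cumul γ).2 ⟨s, h, hx⟩

lemma cumul_nonempty (t : unitInterval) : (cumul γ t).Nonempty :=
  ((γ t).nonempty).mono (subset_cumul γ le_rfl)

lemma cumul_mono {s t : unitInterval} (h : s ≤ t) : cumul γ s ⊆ cumul γ t := by
  intro x hx
  rcases (mem_cumul γ).1 hx with ⟨r, hr, hxr⟩
  exact (mem_cumul γ).2 ⟨r, hr.trans h, hxr⟩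

lemma cumul_zero : cumul γ 0 = (γ 0 : Set X) := by
  apply subset_antisymm
  · intro x hx
    rcases (mem_cumul γ).1 hx with ⟨r, hr, hxr⟩
    have : r = 0 := le_antisymm hr r.2.1
    rwa [this] at hxr
  · exact subset_cumul γ le_rfl

set_option maxHeartbeats 1000000 in
lemma isClosed_graph (hγ : Continuous γ) :
    IsClosed {p : unitInterval × X | p.2 ∈ (γ p.1 : Set X)} := by
  have hf : Continuous fun p : unitInterval × X => infDist p.2 (γ p.1 : Set X) :=
    lipschitz_infDist.continuous.comp (continuous_snd.prodMk (hγ.comp continuous_fst))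
  have heq : {p : unitInterval × X | p.2 ∈ (γ p.1 : Set X)} =
      (fun p : unitInterval × X => infDist p.2 (γ p.1 : Set X)) ⁻¹' {0} := by
    ext p
    rw [Set.mem_preimage, Set.mem_singleton_iff, Set.mem_setOf_eq,
      (γ p.1).isCompact.isClosed.mem_iff_infDist_zero (γ p.1).nonempty]
  rw [heq]
  exact IsClosed.preimage hf isClosed_singleton

lemma cumul_isCompact (hγ : Continuous γ) (t : unitInterval) : IsCompact (cumul γ t) := by
  have hE := isClosed_graph γ hγ
  have heq : cumul γ t =
      Prod.snd '' ({p : unitInterval × X | p.2 ∈ (γ p.1 : Set X)} ∩ (Set.Iic t ×ˢ univ)) := by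
    ext x
    constructor
    · intro hx
      rcases (mem_cumul γ).1 hx with ⟨s, hs, hxs⟩
      exact ⟨(s, x), ⟨hxs, hs, mem_univ _⟩, rfl⟩
    · rintro ⟨⟨s, y⟩, ⟨hy, hs, -⟩, rfl⟩
      exact (mem_cumul γ).2 ⟨s, hs, hy⟩
  rw [heq]
  exact ((hE.inter (isClosed_Iic.prod isClosed_univ)).isCompact).image continuous_snd

def Cmap (hγ : Continuous γ) (t : unitInterval) : NonemptyCompacts X :=
  ⟨⟨cumul γ t, cumul_isCompact γ hγ t⟩, cumul_nonempty γ t⟩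

lemma Cmap_coe (hγ : Continuous γ) (t : unitInterval) :
    (Cmap γ hγ t : Set X) = cumul γ t := rfl

lemma continuous_Cmap (hγ : Continuous γ) : Continuous (Cmap γ hγ) := by
  rw [Metric.continuous_iff]
  intro b ε hε
  have hu : UniformContinuous γ := CompactSpace.uniformContinuous_of_continuous hγ
  rcases Metric.uniformContinuous_iff.1 hu (ε/2) (half_pos hε) with ⟨δ, hδ, H⟩
  have key : ∀ p q : unitInterval, p ≤ q → dist (p : ℝ) q < δ →
      dist (Cmap γ hγ p) (Cmap γ hγ q) ≤ ε/2 := by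
    intro p q hpq hd
    rw [NonemptyCompacts.dist_eq]
    apply hausdorffDist_le_of_infDist (le_of_lt (half_pos hε))
    · intro x hx
      have hm : x ∈ (Cmap γ hγ q : Set X) := cumul_mono γ hpq hx
      rw [infDist_zero_of_mem hm]
      exact le_of_lt (half_pos hε)
    · intro x hx
      rcases (mem_cumul γ).1 hx with ⟨s, hs, hxs⟩
      by_cases hsp : s ≤ p
      · have hm : x ∈ (Cmap γ hγ p : Set X) := subset_cumul γ hsp hxs
        rw [infDist_zero_of_mem hm]
        exact le_of_lt (half_pos hε)
      · push_neg at hsp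
        have hdsp : dist s p < δ := by
          rw [Subtype.dist_eq, Real.dist_eq]
          rw [Real.dist_eq] at hd
          have h1 : (p:ℝ) ≤ (s:ℝ) := Subtype.coe_le_coe.mpr (le_of_lt hsp)
          have h2 : (s:ℝ) ≤ (q:ℝ) := Subtype.coe_le_coe.mpr hs
          have h3 : (p:ℝ) ≤ (q:ℝ) := Subtype.coe_le_coe.mpr hpq
          rw [abs_of_nonneg (by linarith)]
          rw [abs_of_nonpos (by linarith)] at hd
          linarith
        have h4 : infDist x (γ p : Set X) ≤ hausdorffDist (γ s : Set X) (γ p : Set X) :=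
          infDist_le_hausdorffDist_of_mem hxs
            (myEdist_ne_top _ _ (γ s).nonempty (γ p).nonempty)
        have h5 : hausdorffDist (γ s : Set X) (γ p : Set X) < ε/2 := by
          rw [← NonemptyCompacts.dist_eq]
          exact H hdsp
        have h6 : infDist x (Cmap γ hγ p : Set X) ≤ infDist x (γ p : Set X) :=
          infDist_le_infDist_of_subset (subset_cumul γ le_rfl) (γ p).nonempty
        exact le_of_lt (lt_of_le_of_lt (h6.trans h4) h5)
  refine ⟨δ, hδ, fun a hab => ?_⟩
  rcases le_total a b with h | h
  · have := key a b h (by rwa [Subtype.dist_eq] at hab)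
    exact lt_of_le_of_lt this (half_lt_self hε)
  · have := key b a h (by rw [dist_comm] at hab; rwa [Subtype.dist_eq] at hab)
    rw [dist_comm] at this
    exact lt_of_le_of_lt this (half_lt_self hε)

lemma core_sep (hγ : Continuous γ) {t : unitInterval} {W₁ W₂ : Set X}
    (h1 : IsOpen W₁) (h2 : IsOpen W₂) (hd : Disjoint W₁ W₂)
    (hcov : ∀ s ≤ t, (γ s : Set X) ⊆ W₁ ∪ W₂)
    (h0 : (γ 0 : Set X) ⊆ W₁) : ∀ s ≤ t, (γ s : Set X) ⊆ W₁ := by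
  set V₁ : Set unitInterval := {s | (γ s : Set X) ⊆ W₁} with hV₁def
  set V₂ : Set unitInterval := {s | ((γ s : Set X) ∩ W₂).Nonempty} with hV₂def
  have hV₁ : IsOpen V₁ := by
    rw [Metric.isOpen_iff]
    intro s hs
    obtain ⟨η, hη, hth⟩ := (γ s).isCompact.exists_thickening_subset_open h1 hs
    obtain ⟨δ, hδ, hc⟩ := Metric.continuous_iff.1 hγ s η hη
    refine ⟨δ, hδ, fun a ha => ?_⟩
    intro x hx
    apply hth
    rw [mem_thickening_iff_infDist_lt (γ s).nonempty]
    calc infDist x (γ s : Set X)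
        ≤ hausdorffDist (γ a : Set X) (γ s : Set X) :=
          infDist_le_hausdorffDist_of_mem hx (myEdist_ne_top _ _ (γ a).nonempty (γ s).nonempty)
      _ < η := by rw [← NonemptyCompacts.dist_eq]; exact hc a (Metric.mem_ball.1 ha)
  have hV₂ : IsOpen V₂ := by
    rw [Metric.isOpen_iff]
    intro s hs
    obtain ⟨x, hxγ, hxW⟩ := hs
    obtain ⟨η, hη, hball⟩ := Metric.isOpen_iff.1 h2 x hxW
    obtain ⟨δ, hδ, hc⟩ := Metric.continuous_iff.1 hγ s η hη
    refine ⟨δ, hδ, fun a ha => ?_⟩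
    have hin : infDist x (γ a : Set X) < η := by
      calc infDist x (γ a : Set X)
          ≤ hausdorffDist (γ s : Set X) (γ a : Set X) :=
            infDist_le_hausdorffDist_of_mem hxγ (myEdist_ne_top _ _ (γ s).nonempty (γ a).nonempty)
        _ < η := by
            rw [← NonemptyCompacts.dist_eq, dist_comm]
            exact hc a (Metric.mem_ball.1 ha)
    obtain ⟨y, hy, hdy⟩ := (infDist_lt_iff (γ a).nonempty).1 hin
    exact ⟨y, hy, hball (by rwa [Metric.mem_ball, dist_comm])⟩
  have hdisj : Disjoint V₁ V₂ := by
    rw [Set.disjoint_left]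
    rintro s hs1 ⟨x, hxγ, hxW⟩
    exact (Set.disjoint_left.1 hd) (hs1 hxγ) hxW
  have hcover : Set.Iic t ⊆ V₁ ∪ V₂ := by
    intro s hs
    by_cases h : ((γ s : Set X) ∩ W₂).Nonempty
    · exact Or.inr h
    · left
      intro x hx
      rcases hcov s hs hx with hx1 | hx2
      · exact hx1
      · exact absurd ⟨x, hx, hx2⟩ h
  haveI : Inhabited unitInterval := ⟨0⟩
  rcases isPreconnected_Iic.subset_or_subset hV₁ hV₂ hdisj hcover with hc | hc
  · exact fun s hs => hc hs
  · exfalso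
    have h0t : (0 : unitInterval) ∈ Set.Iic t := t.2.1
    obtain ⟨x, hxγ, hxW⟩ := hc h0t
    exact (Set.disjoint_left.1 hd) (h0 hxγ) hxW

lemma cumul_isConnected (hγ : Continuous γ) (hA : IsPreconnected (γ 0 : Set X))
    (t : unitInterval) : IsConnected (cumul γ t) := by
  refine ⟨cumul_nonempty γ t, ?_⟩
  intro u v hu hv hcov h1 h2
  by_contra hne
  have hEmpty : cumul γ t ∩ (u ∩ v) = ∅ := Set.not_nonempty_iff_eq_empty.1 hne
  set K₁ : Set X := cumul γ t \ v with hK₁def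
  set K₂ : Set X := cumul γ t \ u with hK₂def
  have hK₁c : IsCompact K₁ := (cumul_isCompact γ hγ t).diff hv
  have hK₂c : IsCompact K₂ := (cumul_isCompact γ hγ t).diff hu
  have hKd : Disjoint K₁ K₂ := by
    rw [Set.disjoint_left]
    rintro z ⟨hz, hzv⟩ ⟨_, hzu⟩
    rcases hcov hz with h | h
    · exact hzu h
    · exact hzv h
  obtain ⟨δ, hδ, hWd⟩ := hKd.exists_thickenings hK₁c hK₂c.isClosed
  have hW₁o : IsOpen (thickening δ K₁) := isOpen_thickening
  have hW₂o : IsOpen (thickening δ K₂) := isOpen_thickening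
  have hsub : cumul γ t ⊆ K₁ ∪ K₂ := by
    intro z hz
    by_cases hzv : z ∈ v
    · right
      refine ⟨hz, fun hzu => ?_⟩
      have : z ∈ cumul γ t ∩ (u ∩ v) := ⟨hz, hzu, hzv⟩
      rw [hEmpty] at this
      exact this
    · exact Or.inl ⟨hz, hzv⟩
  have hcov' : ∀ s ≤ t, (γ s : Set X) ⊆ thickening δ K₁ ∪ thickening δ K₂ := by
    intro s hs x hx
    rcases hsub (subset_cumul γ hs hx) with h | h
    · exact Or.inl (self_subset_thickening hδ _ h)
    · exact Or.inr (self_subset_thickening hδ _ h)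
  have hx₁ : ∃ z, z ∈ K₁ := by
    obtain ⟨x, hxC, hxu⟩ := h1
    refine ⟨x, hxC, fun hxv => ?_⟩
    have : x ∈ cumul γ t ∩ (u ∩ v) := ⟨hxC, hxu, hxv⟩
    rw [hEmpty] at this
    exact this
  have hx₂ : ∃ z, z ∈ K₂ := by
    obtain ⟨y, hyC, hyv⟩ := h2
    refine ⟨y, hyC, fun hyu => ?_⟩
    have : y ∈ cumul γ t ∩ (u ∩ v) := ⟨hyC, hyu, hyv⟩
    rw [hEmpty] at this
    exact this
  have hAsub : (γ 0 : Set X) ⊆ thickening δ K₁ ∪ thickening δ K₂ :=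
    hcov' 0 t.2.1
  rcases hA.subset_or_subset hW₁o hW₂o hWd hAsub with hA1 | hA2
  · have hall := core_sep γ hγ hW₁o hW₂o hWd hcov' hA1
    obtain ⟨z, hz⟩ := hx₂
    have hz1 : z ∈ thickening δ K₁ := by
      rcases (mem_cumul γ).1 hz.1 with ⟨s, hs, hzs⟩
      exact hall s hs hzs
    exact (Set.disjoint_left.1 hWd) hz1 (self_subset_thickening hδ _ hz)
  · have hall := core_sep γ hγ hW₂o hW₁o hWd.symm
      (fun s hs => (Set.union_comm (thickening δ K₁) (thickening δ K₂)) ▸ hcov' s hs) hA2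
    obtain ⟨z, hz⟩ := hx₁
    have hz1 : z ∈ thickening δ K₂ := by
      rcases (mem_cumul γ).1 hz.1 with ⟨s, hs, hzs⟩
      exact hall s hs hzs
    exact (Set.disjoint_left.1 hWd) (self_subset_thickening hδ _ hz) hz1

variable (X) in
noncomputable def phiFn (K : NonemptyCompacts X) : ℝ :=
  ∑' n : ℕ, (1/2 : ℝ)^n * infDist (denseSeq X n) (K : Set X)

lemma phiFn_term_nonneg (K : NonemptyCompacts X) (n : ℕ) :
    0 ≤ (1/2 : ℝ)^n * infDist (denseSeq X n) (K : Set X) :=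
  mul_nonneg (by positivity) infDist_nonneg

lemma phiFn_term_le (K : NonemptyCompacts X) (n : ℕ) :
    (1/2 : ℝ)^n * infDist (denseSeq X n) (K : Set X) ≤ (1/2:ℝ)^n * diam (univ : Set X) := by
  apply mul_le_mul_of_nonneg_left _ (by positivity)
  obtain ⟨k, hk⟩ := K.nonempty
  calc infDist (denseSeq X n) (K : Set X) ≤ dist (denseSeq X n) k := infDist_le_dist_of_mem hk
    _ ≤ diam (univ : Set X) := dist_le_diam_of_mem isCompact_univ.isBounded trivial trivial

lemma phiFn_summable (K : NonemptyCompacts X) :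
    Summable fun n : ℕ => (1/2 : ℝ)^n * infDist (denseSeq X n) (K : Set X) :=
  Summable.of_nonneg_of_le (phiFn_term_nonneg K) (phiFn_term_le K)
    ((summable_geometric_two).mul_right _)

lemma phiFn_continuous : Continuous (phiFn X) := by
  apply continuous_tsum
    (fun n => continuous_const.mul (lipschitz_infDist_set (denseSeq X n)).continuous)
    ((summable_geometric_two).mul_right (diam (univ : Set X)))
  intro n K
  rw [Real.norm_eq_abs]
  show |(1/2 : ℝ)^n * infDist (denseSeq X n) (K : Set X)| ≤ _
  rw [abs_of_nonneg (phiFn_term_nonneg K n)]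
  exact phiFn_term_le K n

lemma phiFn_anti {K K' : NonemptyCompacts X} (h : (K : Set X) ⊆ (K' : Set X)) :
    phiFn X K' ≤ phiFn X K := by
  apply Summable.tsum_le_tsum _ (phiFn_summable K') (phiFn_summable K)
  intro n
  exact mul_le_mul_of_nonneg_left (infDist_le_infDist_of_subset h K.nonempty) (by positivity)

lemma phiFn_strict_anti {K K' : NonemptyCompacts X} (h : (K : Set X) ⊆ (K' : Set X))
    (hne : (K : Set X) ≠ (K' : Set X)) : phiFn X K' < phiFn X K := by
  obtain ⟨x, hxK', hxK⟩ : ∃ x, x ∈ (K' : Set X) ∧ x ∉ (K : Set X) := by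
    by_contra hc
    push_neg at hc
    exact hne (subset_antisymm h hc)
  have hr : 0 < infDist x (K : Set X) := by
    rcases lt_or_eq_of_le (infDist_nonneg (s := (K : Set X)) (x := x)) with h' | h'
    · exact h'
    · exact absurd ((K.isCompact.isClosed.mem_iff_infDist_zero K.nonempty).2 h'.symm) hxK
  obtain ⟨n, hn⟩ := denseRange_iff.1 (denseRange_denseSeq X) x (infDist x (K : Set X) / 2)
    (by linarith)
  apply Summable.tsum_lt_tsum (i := n) _ _ (phiFn_summable K') (phiFn_summable K)
  · intro m
    exact mul_le_mul_of_nonneg_left (infDist_le_infDist_of_subset h K.nonempty) (by positivity)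
  · apply mul_lt_mul_of_pos_left _ (by positivity)
    have hle : infDist (denseSeq X n) (K' : Set X) ≤ dist (denseSeq X n) x :=
      infDist_le_dist_of_mem hxK'
    have hge : infDist x (K : Set X) ≤ infDist (denseSeq X n) (K : Set X)
        + dist x (denseSeq X n) := infDist_le_infDist_add_dist
    calc infDist (denseSeq X n) (K' : Set X) ≤ dist (denseSeq X n) x := hle
      _ < infDist (denseSeq X n) (K : Set X) := by
          rw [dist_comm]
          linarith

lemma phiFn_inj_of_subset {K K' : NonemptyCompacts X} (h : (K : Set X) ⊆ (K' : Set X))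
    (he : phiFn X K = phiFn X K') : (K : Set X) = (K' : Set X) := by
  by_contra hne
  exact absurd he (ne_of_gt (phiFn_strict_anti h hne))

end Dev

theorem not_blocks_iff_order_arc (A B : Set X)
    (hAc : IsCompact A) (hAne : A.Nonempty) (hAconn : IsConnected A)
    (hBc : IsCompact B) (hBne : B.Nonempty) (hBconn : IsConnected B) :
    (∃ γ : unitInterval → NonemptyCompacts X, Continuous γ ∧
        (γ 0 : Set X) = A ∧ (γ 1 : Set X) = univ ∧
        ∀ t : unitInterval, t < 1 → (γ t : Set X) ∩ B = ∅) ↔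
      (∃ α : unitInterval → NonemptyCompacts X, IsOrderArc α ∧
        (α 0 : Set X) = A ∧ (α 1 : Set X) = univ ∧
        ∀ t : unitInterval, t < 1 → (α t : Set X) ∩ B = ∅) := by
  constructor
  · rintro ⟨γ, hγc, hγ0, hγ1, hγB⟩
    haveI : Inhabited unitInterval := ⟨0⟩
    have h01 : (0 : unitInterval) < 1 := by
      rw [← Subtype.coe_lt_coe]
      norm_num
    have hAB : A ∩ B = ∅ := by rw [← hγ0]; exact hγB 0 h01
    set C : unitInterval → NonemptyCompacts X := Cmap γ hγc with hCdef
    have hCcont : Continuous C := continuous_Cmap γ hγc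
    have hCconn : ∀ t, IsConnected (C t : Set X) := fun t =>
      cumul_isConnected γ hγc (by rw [hγ0]; exact hAconn.isPreconnected) t
    have hC0 : (C 0 : Set X) = A := by
      show cumul γ 0 = A
      rw [cumul_zero, hγ0]
    have hC1 : (C 1 : Set X) = univ := by
      apply eq_univ_of_univ_subset
      rw [← hγ1]
      exact subset_cumul γ le_rfl
    have hCmono : ∀ {s t : unitInterval}, s ≤ t → (C s : Set X) ⊆ (C t : Set X) :=
      fun h => cumul_mono γ h
    set w : unitInterval → ℝ := fun t => phiFn X (C 0) - phiFn X (C t) with hwdef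
    have hwt : ∀ t, w t = phiFn X (C 0) - phiFn X (C t) := fun t => rfl
    have hwcont : Continuous w := continuous_const.sub (phiFn_continuous.comp hCcont)
    have hwmono : ∀ {s t : unitInterval}, s ≤ t → w s ≤ w t := fun h =>
      sub_le_sub_left (phiFn_anti (hCmono h)) _
    have hw0 : w 0 = 0 := sub_self _
    have hABne : (C 0 : Set X) ≠ (C 1 : Set X) := by
      obtain ⟨b, hb⟩ := hBne
      rw [hC0, hC1]
      intro h
      have hbA : b ∈ A := h.symm ▸ (mem_univ b)
      have hmem : b ∈ A ∩ B := ⟨hbA, hb⟩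
      rw [hAB] at hmem
      exact hmem
    have hw1pos : 0 < w 1 := by
      have h := phiFn_strict_anti (hCmono (le_of_lt h01)) hABne
      rw [hwt]
      linarith
    have hSleast : ∀ u : unitInterval, ∃ t : unitInterval,
        IsLeast {t : unitInterval | (u : ℝ) * w 1 ≤ w t} t := by
      intro u
      apply IsCompact.exists_isLeast
      · exact (isClosed_le continuous_const hwcont).isCompact
      · refine ⟨1, ?_⟩
        show (u : ℝ) * w 1 ≤ w 1
        calc (u : ℝ) * w 1 ≤ 1 * w 1 :=
              mul_le_mul_of_nonneg_right u.2.2 (le_of_lt hw1pos)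
          _ = w 1 := one_mul _
    choose g hg using hSleast
    have hgle : ∀ u : unitInterval, ∀ t, (u : ℝ) * w 1 ≤ w t → g u ≤ t :=
      fun u t ht => (hg u).2 ht
    have weq : ∀ u : unitInterval, w (g u) = (u : ℝ) * w 1 := by
      intro u
      have hmem : (u : ℝ) * w 1 ∈ Icc (w 0) (w 1) := by
        constructor
        · rw [hw0]; exact mul_nonneg u.2.1 (le_of_lt hw1pos)
        · calc (u : ℝ) * w 1 ≤ 1 * w 1 :=
              mul_le_mul_of_nonneg_right u.2.2 (le_of_lt hw1pos)
            _ = w 1 := one_mul _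
      obtain ⟨t0, ht0⟩ := intermediate_value_univ 0 1 hwcont hmem
      have h1 : g u ≤ t0 := hgle u t0 (le_of_eq ht0.symm)
      exact le_antisymm ((hwmono h1).trans (le_of_eq ht0)) (hg u).1
    have hgmono : ∀ {u u' : unitInterval}, u < u' → g u < g u' := by
      intro u u' huu
      by_contra hle
      push_neg at hle
      have h1 : ((u' : ℝ)) * w 1 ≤ ((u : ℝ)) * w 1 := by
        rw [← weq u, ← weq u']
        exact hwmono hle
      have h2 : (u' : ℝ) ≤ (u : ℝ) := le_of_mul_le_mul_right h1 hw1pos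
      exact absurd (Subtype.coe_lt_coe.mpr huu) (not_lt.2 h2)
    have hCgeq : ∀ {s t : unitInterval}, w s = w t → s ≤ t → C s = C t := by
      intro s t hw hst
      have hφ : phiFn X (C s) = phiFn X (C t) := by
        have h1 := hwt s
        have h2 := hwt t
        rw [hw] at h1
        rw [h2] at h1
        linarith
      exact NonemptyCompacts.ext (phiFn_inj_of_subset (hCmono hst) hφ)
    have hαcont : Continuous (fun u => C (g u)) := by
      rw [continuous_iff_seqContinuous]
      intro un u hun
      apply Filter.tendsto_of_subseq_tendsto
      intro ns hns
      obtain ⟨t', -, ms, hmsm, hconv⟩ := isCompact_univ.tendsto_subseq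
        (fun k => mem_univ (g (un (ns k))))
      refine ⟨ms, ?_⟩
      have h1 : Filter.Tendsto (fun k => C (g (un (ns (ms k))))) Filter.atTop (nhds (C t')) :=
        (hCcont.tendsto t').comp hconv
      have h2 : w t' = (u : ℝ) * w 1 := by
        have ha : Filter.Tendsto (fun k => w (g (un (ns (ms k))))) Filter.atTop (nhds (w t')) :=
          (hwcont.tendsto t').comp hconv
        have hc : Filter.Tendsto (fun k => ((un (ns (ms k)) : ℝ)) * w 1) Filter.atTop
            (nhds ((u : ℝ) * w 1)) := by
          apply Filter.Tendsto.mul_const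
          have hbase : Filter.Tendsto (fun k => un (ns (ms k))) Filter.atTop (nhds u) :=
            hun.comp (hns.comp hmsm.tendsto_atTop)
          exact (continuous_subtype_val.tendsto u).comp hbase
        have hb : (fun k => w (g (un (ns (ms k))))) =
            fun k => ((un (ns (ms k)) : ℝ)) * w 1 := funext fun k => weq _
        rw [hb] at ha
        exact tendsto_nhds_unique ha hc
      have h3 : C t' = C (g u) := by
        have hwe : w t' = w (g u) := by rw [h2, weq]
        rcases le_total t' (g u) with h | h
        · exact hCgeq hwe h
        · exact (hCgeq hwe.symm h).symm
      show Filter.Tendsto (fun n => C (g (un (ns (ms n))))) Filter.atTop (nhds (C (g u)))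
      rw [← h3]
      exact h1
    have hg0 : g 0 = 0 := by
      have h1 : g 0 ≤ 0 := hgle 0 0 (by rw [hw0]; simp)
      have h2 : (0 : unitInterval) ≤ g 0 := by
        rw [← Subtype.coe_le_coe]
        exact (g 0).2.1
      exact le_antisymm h1 h2
    have hα0 : (C (g 0) : Set X) = A := by rw [hg0, hC0]
    have hgone : ∀ u : unitInterval, g u ≤ 1 := by
      intro u
      rw [← Subtype.coe_le_coe]
      exact (g u).2.2
    have hα1 : (C (g 1) : Set X) = univ := by
      have hwe : w (g 1) = w 1 := by rw [weq]; simp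
      have heq := hCgeq hwe (hgone 1)
      rw [heq, hC1]
    have hαB : ∀ u : unitInterval, u < 1 → (C (g u) : Set X) ∩ B = ∅ := by
      intro u hu
      have hgu : g u < 1 := by
        rcases lt_or_eq_of_le (hgone u) with h | h
        · exact h
        · exfalso
          have h1 : w (g u) = (u : ℝ) * w 1 := weq u
          rw [h] at h1
          have h2 : (u : ℝ) * w 1 < 1 * w 1 :=
            mul_lt_mul_of_pos_right (Subtype.coe_lt_coe.mpr hu) hw1pos
          rw [one_mul] at h2
          linarith
      rw [eq_empty_iff_forall_notMem]
      rintro x ⟨hx1, hx2⟩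
      rcases (mem_cumul γ).1 hx1 with ⟨s, hs, hxs⟩
      have hs1 : s < 1 := lt_of_le_of_lt hs hgu
      have hB := hγB s hs1
      rw [eq_empty_iff_forall_notMem] at hB
      exact hB x ⟨hxs, hx2⟩
    exact ⟨fun u => C (g u), ⟨hαcont, fun t => hCconn _,
      fun s t hst => ⟨hCmono (le_of_lt (hgmono hst)), fun hsub => by
        have heq : (C (g s) : Set X) = C (g t) :=
          subset_antisymm (hCmono (le_of_lt (hgmono hst))) hsub
        have hφ : phiFn X (C (g s)) = phiFn X (C (g t)) := by
          rw [NonemptyCompacts.ext heq]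
        have hwe : w (g s) = w (g t) := by
          rw [hwt, hwt, hφ]
        rw [weq, weq] at hwe
        have hcoe : (s : ℝ) = t := mul_right_cancel₀ (ne_of_gt hw1pos) hwe
        exact (ne_of_lt hst) (Subtype.coe_injective hcoe)⟩⟩,
      hα0, hα1, hαB⟩
  · rintro ⟨α, ⟨hc, hconn, hmono⟩, h0, h1, hB⟩
    exact ⟨α, hc, h0, h1, hB⟩
end
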